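/- arXiv:1302.5197 — 5 statements merged into one kernel-verified Lean document; each statement's English description precedes it below -/
import Mathlib

section
/- Let Δ and Γ be finite simplicial complexes and suppose there are simplicial complexes Δ = Δ_0, Δ_1, …, Δ_t = Γ such that for each 1 ≤ i ≤ t, one of Δ_{i−1}, Δ_i is isomorphic to a stellar subdivision of the other. Then there are simplicial complexes Δ = Γ_0, Γ_1, …, Γ_s = Γ such that for each 1 ≤ j ≤ s, one of Γ_{j−1}, Γ_j is isomorphic to an edge subdivision of the other. -/
/-- A finite simplicial complex on a finite vertex set `V`: a collection of nonempty
subsets of `V` (faces), closed under taking nonempty subsets, containing all singletons. -/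
structure SC (α : Type*) where
  V : Finset α
  faces : Set (Finset α)
  nonempty_mem : ∀ F ∈ faces, F.Nonempty
  subset_V : ∀ F ∈ faces, F ⊆ V
  down_closed : ∀ F ∈ faces, ∀ T ⊆ F, T.Nonempty → T ∈ faces
  singleton_mem : ∀ x ∈ V, ({x} : Finset α) ∈ faces

/-- The link of a face `F` in a collection of faces `K`. -/
def lkS {α : Type*} [DecidableEq α] (K : Set (Finset α)) (F : Finset α) : Set (Finset α) :=
  {T | T.Nonempty ∧ T ∩ F = ∅ ∧ T ∪ F ∈ K}

/-- The faces of the stellar subdivision of `K` at `F` with new vertex `v`. -/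
def stellarS {α : Type*} [DecidableEq α] (K : Set (Finset α)) (F : Finset α) (v : α) :
    Set (Finset α) :=
  {T ∈ K | ¬ F ⊆ T} ∪
  {U | ∃ S T : Finset α, S ⊂ F ∧ (T ∈ lkS K F ∨ T = ∅) ∧ U = insert v (S ∪ T)}

/-- `Γ` is the stellar subdivision of the simplicial complex `Δ` at the face `F`
(of size at least 2) with new vertex `v ∉ Δ.V`. -/
def IsStellar {α : Type*} [DecidableEq α] (Δ Γ : SC α) (F : Finset α) (v : α) : Prop :=
  F ∈ Δ.faces ∧ 2 ≤ F.card ∧ v ∉ Δ.V ∧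
  Γ.V = insert v Δ.V ∧ Γ.faces = stellarS Δ.faces F v

/-- `Γ` is an edge subdivision of `Δ`: a stellar subdivision at a face of size 2. -/
def IsEdgeSubdivOf {α : Type*} [DecidableEq α] (Δ Γ : SC α) : Prop :=
  ∃ (e : Finset α) (v : α), e.card = 2 ∧ IsStellar Δ Γ e v

/-- `F` is a missing face of the collection of faces `K`: it has size at least 2, it is
not a face, and all its proper nonempty subsets are faces. -/
def Missing {α : Type*} (K : Set (Finset α)) (F : Finset α) : Prop :=
  2 ≤ F.card ∧ F ∉ K ∧ ∀ T ⊂ F, T.Nonempty → T ∈ K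

/-- A simplicial complex is flag if all its missing faces have size two. -/
def IsFlag {α : Type*} (Δ : SC α) : Prop := ∀ F, Missing Δ.faces F → F.card = 2

/-- The pair (faces `K`, vertex set `V`) is isomorphic to the pair (faces `L`, vertex
set `W`): some bijection of the vertex sets maps the faces exactly onto the faces. -/
def IsomS {α β : Type*} [DecidableEq α] [DecidableEq β] (K : Set (Finset α)) (V : Set α)
    (L : Set (Finset β)) (W : Set β) : Prop :=
  ∃ f : α → β, Set.BijOn f V W ∧
    ∀ T : Finset α, ↑T ⊆ V → (T ∈ K ↔ T.image f ∈ L)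

/-- Two simplicial complexes are isomorphic. -/
def Isom {α β : Type*} [DecidableEq α] [DecidableEq β] (Δ : SC α) (Γ : SC β) : Prop :=
  IsomS Δ.faces ↑Δ.V Γ.faces ↑Γ.V

/-- One of `X`, `Y` is isomorphic to a stellar subdivision of the other. -/
def StellarIsoStep {α : Type*} [DecidableEq α] (X Y : SC α) : Prop :=
  (∃ (Z : SC α) (F : Finset α) (w : α), IsStellar X Z F w ∧ Isom Z Y) ∨
  (∃ (Z : SC α) (F : Finset α) (w : α), IsStellar Y Z F w ∧ Isom Z X)

/-- One of `X`, `Y` is isomorphic to an edge subdivision of the other. -/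
def EdgeIsoStep {α : Type*} [DecidableEq α] (X Y : SC α) : Prop :=
  (∃ Z : SC α, IsEdgeSubdivOf X Z ∧ Isom Z Y) ∨
  (∃ Z : SC α, IsEdgeSubdivOf Y Z ∧ Isom Z X)

section Dev
variable {α : Type*} [DecidableEq α]

lemma isom_refl (X : SC α) : Isom X X := by
  refine ⟨id, Set.bijOn_id _, fun T _ => by simp⟩

lemma isom_trans {X Y Z : SC α} (h1 : Isom X Y) (h2 : Isom Y Z) : Isom X Z := by
  obtain ⟨f, hf, hfK⟩ := h1
  obtain ⟨g, hg, hgK⟩ := h2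
  refine ⟨g ∘ f, hg.comp hf, fun T hT => ?_⟩
  rw [hfK T hT, hgK (T.image f) ?_, Finset.image_image]
  intro x hx
  simp only [Finset.coe_image] at hx
  obtain ⟨y, hy, rfl⟩ := hx
  exact hf.mapsTo (hT hy)

lemma isom_symm [Nonempty α] {X Y : SC α} (h : Isom X Y) : Isom Y X := by
  obtain ⟨f, hf, hfK⟩ := h
  set g := Function.invFunOn f ↑X.V with hg
  have hInv : Set.InvOn g f ↑X.V ↑Y.V := hf.invOn_invFunOn
  refine ⟨g, Set.BijOn.symm hInv.symm hf, fun T hT => ?_⟩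
  have hTg : ↑(T.image g) ⊆ (↑X.V : Set α) := by
    intro x hx
    simp only [Finset.coe_image] at hx
    obtain ⟨y, hy, rfl⟩ := hx
    exact (Set.BijOn.symm hInv.symm hf).mapsTo (hT hy)
  have himg : (T.image g).image f = T := by
    rw [Finset.image_image]
    refine Finset.image_congr ?_ |>.trans Finset.image_id
    intro x hx
    exact hInv.2 (hT hx)
  rw [hfK (T.image g) hTg, himg]


lemma stellarS_subset (Δ : SC α) (F : Finset α) (v : α) {Y : Finset α}
    (hY : Y ∈ stellarS Δ.faces F v) (hF : F ⊆ Δ.V) : Y ⊆ insert v Δ.V := by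
  rcases hY with ⟨hK, _⟩ | ⟨S, T, hS, hT, rfl⟩
  · exact (Δ.subset_V Y hK).trans (Finset.subset_insert _ _)
  · intro x hx
    simp only [Finset.mem_insert, Finset.mem_union] at hx ⊢
    rcases hx with rfl | hx | hx
    · exact Or.inl rfl
    · exact Or.inr (hF (hS.subset hx))
    · rcases hT with hT | rfl
      · exact Or.inr (Δ.subset_V _ hT.2.2 (Finset.mem_union_left _ hx))
      · simp at hx

lemma mem_stellar_iff {K : Set (Finset α)} {F : Finset α} {v : α}
    (hF : F ∈ K) (hvF : v ∉ F) (hK : ∀ X ∈ K, v ∉ X) (X : Finset α) :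
    X ∈ stellarS K F v ↔
      (v ∉ X ∧ X ∈ K ∧ ¬ F ⊆ X) ∨
      (v ∈ X ∧ ¬ F ⊆ X ∧ ((X \ {v}) \ F) ∪ F ∈ K) := by
  constructor
  · rintro (⟨hXK, hFX⟩ | ⟨S, T, hSF, hT, rfl⟩)
    · exact Or.inl ⟨hK X hXK, hXK, hFX⟩
    · have hvS : v ∉ S := fun h => hvF (hSF.subset h)
      have hvT : v ∉ T := by
        rcases hT with hT | rfl
        · exact fun h => hK _ hT.2.2 (Finset.mem_union_left _ h)
        · simp
      have hE : insert v (S ∪ T) \ {v} = S ∪ T := by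
        rw [Finset.insert_sdiff_of_mem _ (Finset.mem_singleton_self v),
          Finset.sdiff_singleton_eq_erase, Finset.erase_eq_of_notMem (by simp [hvS, hvT])]
      have hTF : T ∩ F = ∅ := by
        rcases hT with hT | rfl
        · exact hT.2.1
        · simp
      refine Or.inr ⟨Finset.mem_insert_self _ _, ?_, ?_⟩
      · intro hsub
        have : F ⊆ S ∪ T := by
          intro x hx
          rcases Finset.mem_insert.1 (hsub hx) with rfl | h
          · exact absurd hx hvF
          · exact h
        have : F ⊆ S := by
          intro x hx
          rcases Finset.mem_union.1 (this hx) with h | h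
          · exact h
          · exact absurd (Finset.mem_inter.2 ⟨h, hx⟩) (by simp [hTF])
        exact hSF.not_subset this
      · rw [hE]
        have : (S ∪ T) \ F = T := by
          ext x
          simp only [Finset.mem_sdiff, Finset.mem_union]
          constructor
          · rintro ⟨h | h, hnF⟩
            · exact absurd (hSF.subset h) hnF
            · exact h
          · intro h
            refine ⟨Or.inr h, fun hxF => ?_⟩
            have := Finset.mem_inter.2 ⟨h, hxF⟩
            simp [hTF] at this
        rw [this]
        rcases hT with hT | rfl
        · exact hT.2.2
        · simpa using hF
  · rintro (⟨hv, hXK, hFX⟩ | ⟨hv, hFX, hTK⟩)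
    · exact Or.inl ⟨hXK, hFX⟩
    · refine Or.inr ⟨(X \ {v}) ∩ F, (X \ {v}) \ F, ?_, ?_, ?_⟩
      · refine Finset.ssubset_iff_subset_ne.2 ⟨Finset.inter_subset_right, fun hEq => ?_⟩
        refine hFX (fun x hx => ?_)
        have hx' : x ∈ (X \ {v}) ∩ F := by rw [hEq]; exact hx
        exact (Finset.mem_sdiff.1 (Finset.mem_inter.1 hx').1).1
      · by_cases hemp : (X \ {v}) \ F = ∅
        · exact Or.inr hemp
        · exact Or.inl ⟨Finset.nonempty_of_ne_empty hemp, Finset.sdiff_inter_self _ _, hTK⟩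
      · ext x
        simp only [Finset.mem_insert, Finset.mem_union, Finset.mem_inter, Finset.mem_sdiff,
          Finset.mem_singleton]
        constructor
        · intro hx
          by_cases hxv : x = v
          · exact Or.inl hxv
          · right
            by_cases hxF : x ∈ F
            · exact Or.inl ⟨⟨hx, hxv⟩, hxF⟩
            · exact Or.inr ⟨⟨hx, hxv⟩, hxF⟩
        · rintro (rfl | ⟨⟨h, _⟩, _⟩ | ⟨⟨h, _⟩, _⟩) <;> first | exact hv | exact h

/-- Build the stellar subdivision as a simplicial complex. -/
def mkStellar (Δ : SC α) (F : Finset α) (v : α) (hF : F ∈ Δ.faces) (h2 : 2 ≤ F.card)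
    (hv : v ∉ Δ.V) : SC α where
  V := insert v Δ.V
  faces := stellarS Δ.faces F v
  nonempty_mem := by
    rintro X (⟨hK, _⟩ | ⟨S, T, _, _, rfl⟩)
    · exact Δ.nonempty_mem _ hK
    · exact Finset.insert_nonempty _ _
  subset_V := fun X hX => stellarS_subset Δ F v hX (Δ.subset_V _ hF)
  down_closed := by
    have hvF : v ∉ F := fun h => hv (Δ.subset_V _ hF h)
    have hKv : ∀ X ∈ Δ.faces, v ∉ X := fun X hX h => hv (Δ.subset_V _ hX h)
    intro X hX T hTX hTne
    rw [mem_stellar_iff hF hvF hKv] at hX ⊢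
    rcases hX with ⟨hv', hXK, hFX⟩ | ⟨hv', hFX, hXK⟩
    · exact Or.inl ⟨fun h => hv' (hTX h), Δ.down_closed _ hXK _ hTX hTne,
        fun h => hFX (h.trans hTX)⟩
    · by_cases hvT : v ∈ T
      · refine Or.inr ⟨hvT, fun h => hFX (h.trans hTX), ?_⟩
        have : ((T \ {v}) \ F) ∪ F ⊆ ((X \ {v}) \ F) ∪ F :=
          Finset.union_subset_union_left (Finset.sdiff_subset_sdiff (Finset.sdiff_subset_sdiff hTX (le_refl _)) (le_refl _))
        obtain ⟨y, hy⟩ := Finset.card_pos.1 (show 0 < F.card by omega)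
        exact Δ.down_closed _ hXK _ this ⟨y, Finset.mem_union_right _ hy⟩
      · refine Or.inl ⟨hvT, ?_, fun h => hFX (h.trans hTX)⟩
        have hsub : T ⊆ ((X \ {v}) \ F) ∪ F := by
          intro x hx
          by_cases hxF : x ∈ F
          · exact Finset.mem_union_right _ hxF
          · exact Finset.mem_union_left _ (Finset.mem_sdiff.2 ⟨Finset.mem_sdiff.2
              ⟨hTX hx, by simp; rintro rfl; exact hvT hx⟩, hxF⟩)
        exact Δ.down_closed _ hXK _ hsub hTne
  singleton_mem := by
    intro x hx
    rcases Finset.mem_insert.1 hx with rfl | hx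
    · refine Or.inr ⟨∅, ∅, ?_, Or.inr rfl, by simp⟩
      exact Finset.empty_ssubset.2 (Finset.card_pos.1 (by omega))
    · refine Or.inl ⟨Δ.singleton_mem x hx, fun h => ?_⟩
      have := Finset.card_le_card h
      simp at this; omega

lemma isStellar_mkStellar (Δ : SC α) (F : Finset α) (v : α) (hF : F ∈ Δ.faces)
    (h2 : 2 ≤ F.card) (hv : v ∉ Δ.V) : IsStellar Δ (mkStellar Δ F v hF h2 hv) F v :=
  ⟨hF, h2, hv, rfl, rfl⟩


set_option maxHeartbeats 1000000 in
lemma stellar_comm (Δ : SC α) {F e : Finset α} {u w : α}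
    (hF : F ∈ Δ.faces) (heF : e ⊂ F) (hene : e.Nonempty)
    (hu : u ∉ Δ.V) (hw : w ∉ Δ.V) (huw : u ≠ w) :
    stellarS (stellarS Δ.faces F w) e u
      = stellarS (stellarS Δ.faces e u) (insert u (F \ e)) w := by
  set K := Δ.faces with hK
  have hFV : F ⊆ Δ.V := Δ.subset_V _ hF
  have heV : e ⊆ Δ.V := heF.subset.trans hFV
  have heK : e ∈ K := Δ.down_closed _ hF _ heF.subset hene
  have hKu : ∀ X ∈ K, u ∉ X := fun X hX h => hu (Δ.subset_V _ hX h)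
  have hKw : ∀ X ∈ K, w ∉ X := fun X hX h => hw (Δ.subset_V _ hX h)
  have huF : u ∉ F := fun h => hu (hFV h)
  have hwF : w ∉ F := fun h => hw (hFV h)
  have hue : u ∉ e := fun h => hu (heV h)
  have hwe : w ∉ e := fun h => hw (heV h)
  have hGne : (F \ e).Nonempty := by
    rw [Finset.sdiff_nonempty]; exact heF.not_subset
  have hnFe : ¬ F ⊆ e := heF.not_subset
  have heL : e ∈ stellarS K F w := Or.inl ⟨heK, hnFe⟩
  have hLu : ∀ X ∈ stellarS K F w, u ∉ X := by
    intro X hX h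
    have := stellarS_subset Δ F w hX hFV h
    rcases Finset.mem_insert.1 this with rfl | h'
    · exact huw rfl
    · exact hu h'
  have hMw : ∀ X ∈ stellarS K e u, w ∉ X := by
    intro X hX h
    have := stellarS_subset Δ e u hX heV h
    rcases Finset.mem_insert.1 this with rfl | h'
    · exact huw rfl
    · exact hw h'
  have hF'M : insert u (F \ e) ∈ stellarS K e u := by
    refine Or.inr ⟨∅, F \ e, Finset.empty_ssubset.2 hene,
      Or.inl ⟨hGne, Finset.sdiff_inter_self _ _, ?_⟩, by simp⟩
    rw [Finset.sdiff_union_of_subset heF.subset]; exact hF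
  have hwF' : w ∉ insert u (F \ e) := by
    simp only [Finset.mem_insert, Finset.mem_sdiff, not_or]
    exact ⟨fun h => huw h.symm, fun h => hwF h.1⟩
  -- the always-valid identity (γ)
  have hγ : ∀ X : Finset α,
      ((((X \ {u}) \ e ∪ e) \ {w}) \ F) ∪ F
        = ((((X \ {w}) \ insert u (F \ e) ∪ insert u (F \ e)) \ {u}) \ e) ∪ e := by
    intro X
    ext x
    have hxe : x ∈ e → x ∈ F := fun h => heF.subset h
    have hxeu : x ∈ e → ¬ x = u := fun h h' => hue (h' ▸ h)
    have hxew : x ∈ e → ¬ x = w := fun h h' => hwe (h' ▸ h)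
    have hxFu : x ∈ F → ¬ x = u := fun h h' => huF (h' ▸ h)
    have hxFw : x ∈ F → ¬ x = w := fun h h' => hwF (h' ▸ h)
    simp only [Finset.mem_union, Finset.mem_sdiff, Finset.mem_insert, Finset.mem_singleton]
    by_cases hxu : x = u <;> by_cases hxw : x = w <;> by_cases hxF : x ∈ F <;>
      by_cases hxE : x ∈ e <;> simp_all
  have hδ' : ∀ X : Finset α, u ∉ X → ((X \ {w}) \ F) ∪ F
      = ((((X \ {w}) \ insert u (F \ e) ∪ insert u (F \ e)) \ {u}) \ e) ∪ e := by
    intro X hXu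
    rw [← hγ X]
    clear hγ
    ext x
    have hxe : x ∈ e → x ∈ F := fun h => heF.subset h
    have hxu : x ∈ X → ¬ x = u := fun h h' => hXu (h' ▸ h)
    simp only [Finset.mem_union, Finset.mem_sdiff, Finset.mem_insert, Finset.mem_singleton]
    by_cases hxu' : x = u <;> by_cases hxw' : x = w <;> by_cases hxF' : x ∈ F <;>
      by_cases hxE' : x ∈ e <;> by_cases hxX' : x ∈ X <;> simp_all
  ext X
  rw [mem_stellar_iff heL hue hLu, mem_stellar_iff hF'M hwF' hMw]
  have hFe : e ⊆ F := heF.subset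
  have himp : F ⊆ X → e ⊆ X := fun h => hFe.trans h
  by_cases hXu : u ∈ X <;> by_cases hXw : w ∈ X
  · -- case D : u ∈ X, w ∈ X
    have hα : F ⊆ (X \ {u}) \ e ∪ e ↔ insert u (F \ e) ⊆ X := by
      constructor
      · intro h
        refine Finset.insert_subset hXu (fun x hx => ?_)
        have hx' := Finset.mem_sdiff.1 hx
        rcases Finset.mem_union.1 (h hx'.1) with h' | h'
        · exact (Finset.mem_sdiff.1 (Finset.mem_sdiff.1 h').1).1
        · exact absurd h' hx'.2
      · intro h x hx
        by_cases hxe : x ∈ e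
        · exact Finset.mem_union_right _ hxe
        · refine Finset.mem_union_left _ (Finset.mem_sdiff.2 ⟨Finset.mem_sdiff.2
            ⟨h (Finset.mem_insert_of_mem (Finset.mem_sdiff.2 ⟨hx, hxe⟩)), ?_⟩, hxe⟩)
          simp only [Finset.mem_singleton]; rintro rfl; exact huF hx
    have hβ : e ⊆ (X \ {w}) \ insert u (F \ e) ∪ insert u (F \ e) ↔ e ⊆ X := by
      constructor
      · intro h x hx
        rcases Finset.mem_union.1 (h hx) with h' | h'
        · exact (Finset.mem_sdiff.1 (Finset.mem_sdiff.1 h').1).1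
        · rcases Finset.mem_insert.1 h' with rfl | h''
          · exact absurd hx hue
          · exact absurd ((Finset.mem_sdiff.1 h'').2) (not_not_intro hx)
      · intro h x hx
        refine Finset.mem_union_left _ (Finset.mem_sdiff.2 ⟨Finset.mem_sdiff.2 ⟨h hx, ?_⟩, ?_⟩)
        · simp only [Finset.mem_singleton]; rintro rfl; exact hwe hx
        · simp only [Finset.mem_insert, Finset.mem_sdiff, not_or]
          exact ⟨fun h' => hue (h' ▸ hx), fun h' => h'.2 hx⟩
    have hwY : w ∈ (X \ {u}) \ e ∪ e :=
      Finset.mem_union_left _ (Finset.mem_sdiff.2 ⟨Finset.mem_sdiff.2 ⟨hXw, by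
        simp only [Finset.mem_singleton]; exact fun h => huw h.symm⟩, hwe⟩)
    have huQ : u ∈ (X \ {w}) \ insert u (F \ e) ∪ insert u (F \ e) :=
      Finset.mem_union_right _ (Finset.mem_insert_self _ _)
    simp only [hXu, hXw, not_true, false_and, and_false, false_or, not_false_eq_true,
      true_and]
    rw [mem_stellar_iff hF hwF hKw, mem_stellar_iff heK hue hKu]
    simp only [hwY, huQ, hγ X, hα, hβ, not_true, false_and, and_false, false_or,
      not_false_eq_true, true_and]
    tauto
  · -- case B : u ∈ X, w ∉ X
    have hα : F ⊆ (X \ {u}) \ e ∪ e ↔ insert u (F \ e) ⊆ X := by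
      constructor
      · intro h
        refine Finset.insert_subset hXu (fun x hx => ?_)
        have hx' := Finset.mem_sdiff.1 hx
        rcases Finset.mem_union.1 (h hx'.1) with h' | h'
        · exact (Finset.mem_sdiff.1 (Finset.mem_sdiff.1 h').1).1
        · exact absurd h' hx'.2
      · intro h x hx
        by_cases hxe : x ∈ e
        · exact Finset.mem_union_right _ hxe
        · refine Finset.mem_union_left _ (Finset.mem_sdiff.2 ⟨Finset.mem_sdiff.2
            ⟨h (Finset.mem_insert_of_mem (Finset.mem_sdiff.2 ⟨hx, hxe⟩)), ?_⟩, hxe⟩)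
          simp only [Finset.mem_singleton]; rintro rfl; exact huF hx
    have hwY : w ∉ (X \ {u}) \ e ∪ e := by
      simp only [Finset.mem_union, Finset.mem_sdiff, not_or]
      exact ⟨fun h => hXw h.1.1, hwe⟩
    simp only [hXu, hXw, not_true, false_and, and_false, false_or, or_false,
      not_false_eq_true, true_and]
    rw [mem_stellar_iff hF hwF hKw, mem_stellar_iff heK hue hKu]
    simp only [hwY, hXu, hα, not_true, false_and, and_false, false_or, or_false,
      not_false_eq_true, true_and]
    tauto
  · -- case C : u ∉ X, w ∈ X
    have hβ : e ⊆ (X \ {w}) \ insert u (F \ e) ∪ insert u (F \ e) ↔ e ⊆ X := by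
      constructor
      · intro h x hx
        rcases Finset.mem_union.1 (h hx) with h' | h'
        · exact (Finset.mem_sdiff.1 (Finset.mem_sdiff.1 h').1).1
        · rcases Finset.mem_insert.1 h' with rfl | h''
          · exact absurd hx hue
          · exact absurd ((Finset.mem_sdiff.1 h'').2) (not_not_intro hx)
      · intro h x hx
        refine Finset.mem_union_left _ (Finset.mem_sdiff.2 ⟨Finset.mem_sdiff.2 ⟨h hx, ?_⟩, ?_⟩)
        · simp only [Finset.mem_singleton]; rintro rfl; exact hwe hx
        · simp only [Finset.mem_insert, Finset.mem_sdiff, not_or]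
          exact ⟨fun h' => hue (h' ▸ hx), fun h' => h'.2 hx⟩
    have huQ : u ∈ (X \ {w}) \ insert u (F \ e) ∪ insert u (F \ e) :=
      Finset.mem_union_right _ (Finset.mem_insert_self _ _)
    have hnF'X : ¬ insert u (F \ e) ⊆ X := fun h => hXu (h (Finset.mem_insert_self _ _))
    have hδ := hδ' X hXu
    simp only [hXu, hXw, hnF'X, not_true, false_and, and_false, false_or, or_false,
      not_false_eq_true, true_and]
    rw [mem_stellar_iff hF hwF hKw, mem_stellar_iff heK hue hKu]
    simp only [hXw, huQ, hβ, hδ, not_true, false_and, and_false, false_or, or_false,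
      not_false_eq_true, true_and]
    tauto
  · -- case A : u ∉ X, w ∉ X
    have hnF'X : ¬ insert u (F \ e) ⊆ X := fun h => hXu (h (Finset.mem_insert_self _ _))
    simp only [hXu, hXw, hnF'X, not_true, false_and, and_false, false_or, or_false,
      not_false_eq_true, true_and]
    rw [mem_stellar_iff hF hwF hKw, mem_stellar_iff heK hue hKu]
    simp only [hXu, hXw, not_true, false_and, and_false, false_or, or_false,
      not_false_eq_true, true_and]
    tauto


lemma image_sdiff_injOn {f : α → α} {s : Set α} (hf : Set.InjOn f s) {A B : Finset α}
    (hA : ↑A ⊆ s) (hB : ↑B ⊆ s) : (A \ B).image f = A.image f \ B.image f := by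
  ext y
  simp only [Finset.mem_image, Finset.mem_sdiff]
  constructor
  · rintro ⟨x, hx', rfl⟩
    refine ⟨⟨x, hx'.1, rfl⟩, ?_⟩
    rintro ⟨z, hz, hzx⟩
    exact hx'.2 (hf (hB hz) (hA hx'.1) hzx ▸ hz)
  · rintro ⟨⟨x, hx, rfl⟩, hnB⟩
    exact ⟨x, ⟨hx, fun h => hnB ⟨x, h, rfl⟩⟩, rfl⟩

lemma subset_image_iff_injOn {f : α → α} {s : Set α} (hf : Set.InjOn f s) {A B : Finset α}
    (hA : ↑A ⊆ s) (hB : ↑B ⊆ s) : A.image f ⊆ B.image f ↔ A ⊆ B := by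
  constructor
  · intro h x hx
    obtain ⟨y, hy, hyx⟩ := Finset.mem_image.1 (h (Finset.mem_image_of_mem f hx))
    exact hf (hB hy) (hA hx) hyx ▸ hy
  · exact fun h => Finset.image_subset_image h

/-- Transport of a stellar subdivision along an isomorphism. -/
lemma transport {Δ Δ' Z : SC α} {F : Finset α} {v : α} (hst : IsStellar Δ Z F v)
    {f : α → α} (hbij : Set.BijOn f ↑Δ.V ↑Δ'.V)
    (hfcs : ∀ T : Finset α, ↑T ⊆ (↑Δ.V : Set α) → (T ∈ Δ.faces ↔ T.image f ∈ Δ'.faces))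
    {v' : α} (hv' : v' ∉ Δ'.V) :
    ∃ Z' : SC α, IsStellar Δ' Z' (F.image f) v' ∧ Isom Z Z' := by
  obtain ⟨hF, h2, hv, hZV, hZf⟩ := hst
  have hFV : F ⊆ Δ.V := Δ.subset_V _ hF
  have hFVs : ↑F ⊆ (↑Δ.V : Set α) := fun x hx => hFV hx
  have hF' : F.image f ∈ Δ'.faces := (hfcs F hFVs).1 hF
  have hcard : (F.image f).card = F.card := Finset.card_image_of_injOn (hbij.injOn.mono hFVs)
  refine ⟨mkStellar Δ' (F.image f) v' hF' (hcard ▸ h2) hv',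
    isStellar_mkStellar _ _ _ _ _ _, ?_⟩
  set g := fun x => if x = v then v' else f x with hgdef
  have hgv : g v = v' := by simp [hgdef]
  have hgV : ∀ x ∈ Δ.V, g x = f x := by
    intro x hx
    have : x ≠ v := fun h => hv (h ▸ hx)
    simp [hgdef, this]
  have hgVW : ∀ x ∈ Δ.V, g x ∈ Δ'.V := fun x hx => (hgV x hx) ▸ hbij.mapsTo hx
  have himg : ∀ A : Finset α, ↑A ⊆ (↑Δ.V : Set α) → A.image g = A.image f := by
    intro A hA
    refine Finset.image_congr fun x hx => hgV x (hA hx)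
  refine ⟨g, ?_, ?_⟩
  · -- BijOn g (insert v Δ.V) (insert v' Δ'.V)
    rw [show ((mkStellar Δ' (F.image f) v' hF' (hcard ▸ h2) hv').V : Finset α)
      = insert v' Δ'.V from rfl, hZV]
    push_cast [Finset.coe_insert]
    constructor
    · intro x hx
      rcases hx with rfl | hx
      · exact Or.inl hgv
      · exact Or.inr (hgVW x hx)
    constructor
    · intro x hx y hy hxy
      rcases hx with rfl | hx <;> rcases hy with rfl | hy
      · rfl
      · rw [hgv, hgV y hy] at hxy
        exact (hv' (by exact_mod_cast hxy ▸ hbij.mapsTo hy)).elim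
      · rw [hgv, hgV x hx] at hxy
        exact (hv' (by exact_mod_cast hxy.symm ▸ hbij.mapsTo hx)).elim
      · rw [hgV x hx, hgV y hy] at hxy
        exact hbij.injOn hx hy hxy
    · intro y hy
      rcases hy with rfl | hy
      · exact ⟨v, Or.inl rfl, hgv⟩
      · obtain ⟨x, hx, rfl⟩ := hbij.surjOn hy
        exact ⟨x, Or.inr hx, hgV x hx⟩
  · -- faces correspondence
    intro T hT
    rw [show (mkStellar Δ' (F.image f) v' hF' (hcard ▸ h2) hv').faces
      = stellarS Δ'.faces (F.image f) v' from rfl, hZf]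
    have hvF : v ∉ F := fun h => hv (hFV h)
    have hKv : ∀ X ∈ Δ.faces, v ∉ X := fun X hX h => hv (Δ.subset_V _ hX h)
    have hv'F : v' ∉ F.image f := fun h => hv' (Δ'.subset_V _ hF' h)
    have hKv' : ∀ X ∈ Δ'.faces, v' ∉ X := fun X hX h => hv' (Δ'.subset_V _ hX h)
    rw [mem_stellar_iff hF hvF hKv, mem_stellar_iff hF' hv'F hKv']
    rw [hZV] at hT
    simp only [Finset.coe_insert, Set.subset_def, Set.mem_insert_iff] at hT
    have hT0 : ↑(T \ {v}) ⊆ (↑Δ.V : Set α) := by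
      intro x hx
      simp only [Finset.coe_sdiff, Set.mem_diff, Finset.coe_singleton,
        Set.mem_singleton_iff] at hx
      rcases hT x (by exact_mod_cast hx.1) with h | h
      · exact absurd h hx.2
      · exact h
    by_cases hvT : v ∈ T
    · -- v ∈ T
      have hTg : T.image g = insert v' ((T \ {v}).image f) := by
        have hTi : T = insert v (T \ {v}) := by
          rw [Finset.sdiff_singleton_eq_erase, Finset.insert_erase hvT]
        conv_lhs => rw [hTi]
        rw [Finset.image_insert, hgv, himg _ hT0]
      have hsubV : ↑((T \ {v}) \ F ∪ F) ⊆ (↑Δ.V : Set α) := by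
        intro x hx
        simp only [Finset.coe_union, Finset.coe_sdiff, Set.mem_union, Set.mem_diff] at hx
        rcases hx with hx | hx
        · exact hT0 (by simpa using hx.1)
        · exact hFVs hx
      have him1 : ((T \ {v}) \ F ∪ F).image f = ((T \ {v}).image f \ F.image f) ∪ F.image f := by
        rw [Finset.image_union, image_sdiff_injOn hbij.injOn hT0 hFVs]
      have hv'img : v' ∉ (T \ {v}).image f := by
        intro h
        obtain ⟨x, hx, hxe⟩ := Finset.mem_image.1 h
        refine hv' ?_
        have : f x ∈ (↑Δ'.V : Set α) := hbij.mapsTo (hT0 (by exact_mod_cast hx))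
        rw [hxe] at this
        exact_mod_cast this
      have hv'Tg : v' ∈ T.image g := by rw [hTg]; exact Finset.mem_insert_self _ _
      have hTg' : T.image g \ {v'} = (T \ {v}).image f := by
        rw [hTg, Finset.sdiff_singleton_eq_erase, Finset.erase_insert hv'img]
      have hFsub : F.image f ⊆ T.image g ↔ F ⊆ T := by
        rw [hTg]
        constructor
        · intro h x hx
          have hmem := h (Finset.mem_image_of_mem f hx)
          rcases Finset.mem_insert.1 hmem with h' | h'
          · exfalso
            refine hv' ?_
            have : f x ∈ (↑Δ'.V : Set α) := hbij.mapsTo (hFVs hx)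
            rw [h'] at this
            exact_mod_cast this
          · obtain ⟨y, hy, hyx⟩ := Finset.mem_image.1 h'
            have : y = x := hbij.injOn (hT0 (by exact_mod_cast hy)) (hFVs hx) hyx
            have := this ▸ hy
            exact (Finset.mem_sdiff.1 this).1
        · intro h x hx
          obtain ⟨y, hy, rfl⟩ := Finset.mem_image.1 hx
          refine Finset.mem_insert_of_mem (Finset.mem_image_of_mem f ?_)
          refine Finset.mem_sdiff.2 ⟨h hy, ?_⟩
          simp only [Finset.mem_singleton]
          rintro rfl
          exact hvF hy
      constructor
      · rintro (⟨hvT', _⟩ | ⟨_, hnF, hKm⟩)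
        · exact absurd hvT hvT'
        · refine Or.inr ⟨hv'Tg, fun h => hnF (hFsub.1 h), ?_⟩
          rw [hTg', ← him1]
          exact (hfcs _ hsubV).1 hKm
      · rintro (⟨hvT', _⟩ | ⟨_, hnF, hKm⟩)
        · exact absurd hv'Tg hvT'
        · refine Or.inr ⟨hvT, fun h => hnF (hFsub.2 h), ?_⟩
          refine (hfcs _ hsubV).2 ?_
          rw [him1, ← hTg']
          exact hKm
    · -- v ∉ T
      have hTs : ↑T ⊆ (↑Δ.V : Set α) := by
        intro x hx
        rcases hT x hx with rfl | h
        · exact absurd (by exact_mod_cast hx) hvT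
        · exact h
      have hTgf : T.image g = T.image f := himg T hTs
      have hv'img : v' ∉ T.image f := by
        intro h
        obtain ⟨x, hx, hxe⟩ := Finset.mem_image.1 h
        refine hv' ?_
        have : f x ∈ (↑Δ'.V : Set α) := hbij.mapsTo (hTs (by exact_mod_cast hx))
        rw [hxe] at this
        exact_mod_cast this
      have hv'Tg : v' ∉ T.image g := by rw [hTgf]; exact hv'img
      have hFsub := subset_image_iff_injOn hbij.injOn hFVs hTs
      constructor
      · rintro (⟨_, hK, hnF⟩ | ⟨hvT', _⟩)
        · refine Or.inl ⟨hv'Tg, ?_, ?_⟩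
          · rw [hTgf]; exact (hfcs T hTs).1 hK
          · rw [hTgf]; exact fun h => hnF (hFsub.1 h)
        · exact absurd hvT' hvT
      · rintro (⟨_, hK, hnF⟩ | ⟨hvT', _⟩)
        · rw [hTgf] at hK hnF
          exact Or.inl ⟨hvT, (hfcs T hTs).2 hK, fun h => hnF (hFsub.2 h)⟩
        · exact absurd hvT' hv'Tg


def Reach (X Y : SC α) : Prop :=
  ∃ (s : ℕ) (E : ℕ → SC α), E 0 = X ∧ E s = Y ∧
    ∀ j, 1 ≤ j → j ≤ s → EdgeIsoStep (E (j - 1)) (E j)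

lemma reach_refl (X : SC α) : Reach X X :=
  ⟨0, fun _ => X, rfl, rfl, fun j h1 h2 => absurd (h1.trans h2) (by omega)⟩

lemma reach_single {X Y : SC α} (h : EdgeIsoStep X Y) : Reach X Y := by
  refine ⟨1, fun j => if j = 0 then X else Y, by simp, by simp, fun j h1 h2 => ?_⟩
  have hj : j = 1 := by omega
  subst hj
  simpa using h

lemma edgeIsoStep_symm {X Y : SC α} (h : EdgeIsoStep X Y) : EdgeIsoStep Y X := h.symm

lemma reach_symm {X Y : SC α} (h : Reach X Y) : Reach Y X := by
  obtain ⟨s, E, h0, hs, hstep⟩ := h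
  refine ⟨s, fun j => E (s - j), by simpa using hs, by simpa using h0, fun j h1 h2 => ?_⟩
  have hi := hstep (s - j + 1) (by omega) (by omega)
  simp only [Nat.add_sub_cancel] at hi
  have he : s - (j - 1) = s - j + 1 := by omega
  show EdgeIsoStep (E (s - (j - 1))) (E (s - j))
  rw [he]
  exact edgeIsoStep_symm hi

lemma reach_trans {X Y Z : SC α} (h1 : Reach X Y) (h2 : Reach Y Z) : Reach X Z := by
  obtain ⟨s1, E1, h10, h1s, hst1⟩ := h1
  obtain ⟨s2, E2, h20, h2s, hst2⟩ := h2
  refine ⟨s1 + s2, fun j => if j ≤ s1 then E1 j else E2 (j - s1), by simp [h10], ?_, ?_⟩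
  · by_cases h : s1 + s2 ≤ s1
    · have hz : s2 = 0 := by omega
      have hE : E1 s1 = Z := by
        rw [h1s, ← h20, show (0 : ℕ) = s2 from hz.symm]
        exact h2s
      simpa [show s1 + s2 = s1 by omega] using hE
    · simp only [if_neg h, Nat.add_sub_cancel_left, h2s]
  · intro j hj1 hj2
    by_cases hle : j ≤ s1
    · have h' : j - 1 ≤ s1 := by omega
      simp only [if_pos hle, if_pos h']
      exact hst1 j hj1 hle
    · have hstep2 := hst2 (j - s1) (by omega) (by omega)
      simp only [if_neg hle]
      by_cases h' : j - 1 ≤ s1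
      · have hj1' : j - 1 = s1 := by omega
        have hj3 : j - s1 = 1 := by omega
        simp only [if_pos h', hj1', h1s, hj3]
        rw [← h20]
        have := hst2 1 (by omega) (by omega)
        simpa using this
      · simp only [if_neg h']
        have : j - 1 - s1 = j - s1 - 1 := by omega
        rw [this]
        exact hstep2

lemma edge_of_stellar {X Z : SC α} {F : Finset α} {w : α} (h : IsStellar X Z F w) :
    ∃ e ∈ Z.faces, e.card = 2 := by
  obtain ⟨hF, h2, hw, hZV, hZf⟩ := h
  obtain ⟨a, ha⟩ := Finset.card_pos.1 (show 0 < F.card by omega)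
  have haw : a ≠ w := fun h => hw (h ▸ X.subset_V _ hF ha)
  refine ⟨insert w {a}, ?_, ?_⟩
  · rw [hZf]
    refine Or.inr ⟨{a}, ∅, ?_, Or.inr rfl, by simp⟩
    obtain ⟨b, hb, hba⟩ := Finset.exists_mem_ne (s := F) (by omega) a
    exact Finset.ssubset_iff_of_subset (Finset.singleton_subset_iff.2 ha) |>.2
      ⟨b, hb, by simp [hba]⟩
  · rw [Finset.card_insert_of_notMem (by
      simp only [Finset.mem_singleton]
      exact fun h => haw h.symm), Finset.card_singleton]

lemma iso_reach [Infinite α] {X Y : SC α} (hiso : Isom X Y)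
    (hedge : ∃ e ∈ X.faces, e.card = 2) : Reach X Y := by
  obtain ⟨e, he, hc⟩ := hedge
  obtain ⟨p, hp⟩ := Infinite.exists_notMem_finset X.V
  have h2 : 2 ≤ e.card := hc.ge
  set X1 := mkStellar X e p he h2 hp with hX1
  have hstX1 := isStellar_mkStellar X e p he h2 hp
  have step1 : EdgeIsoStep X X1 := Or.inl ⟨X1, ⟨e, p, hc, hstX1⟩, isom_refl X1⟩
  obtain ⟨f, hbij, hfcs⟩ := hiso
  obtain ⟨p', hp'⟩ := Infinite.exists_notMem_finset Y.V
  obtain ⟨Z', hZ'st, hZ'iso⟩ := transport hstX1 hbij hfcs hp'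
  have hcard : (e.image f).card = 2 := by
    rw [Finset.card_image_of_injOn (hbij.injOn.mono (fun x hx => X.subset_V _ he hx)), hc]
  have step2 : EdgeIsoStep X1 Y :=
    Or.inr ⟨Z', ⟨e.image f, p', hcard, hZ'st⟩, isom_symm hZ'iso⟩
  exact reach_trans (reach_single step1) (reach_single step2)

lemma stellar_reach [Infinite α] :
    ∀ n (X Z : SC α) (F : Finset α) (w : α), F.card = n → IsStellar X Z F w → Reach X Z := by
  intro n
  induction n using Nat.strong_induction_on with
  | _ n IH =>
    intro X Z F w hn hst
    obtain ⟨hF, h2, hw, hZV, hZf⟩ := hst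
    by_cases hc2 : F.card = 2
    · exact reach_single (Or.inl ⟨Z, ⟨F, w, hc2, hF, h2, hw, hZV, hZf⟩, isom_refl Z⟩)
    · have h3 : 3 ≤ F.card := by omega
      obtain ⟨a, ha⟩ := Finset.card_pos.1 (show 0 < F.card by omega)
      obtain ⟨b, hb, hba⟩ := Finset.exists_mem_ne (s := F) (by omega) a
      set e : Finset α := insert b {a} with hedef
      have he_sub : e ⊆ F := by
        intro x hx
        rcases Finset.mem_insert.1 hx with rfl | hx
        · exact hb
        · exact (Finset.mem_singleton.1 hx) ▸ ha
      have hce : e.card = 2 := by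
        rw [hedef, Finset.card_insert_of_notMem (by simp [hba]), Finset.card_singleton]
      have hene : e.Nonempty := ⟨b, Finset.mem_insert_self _ _⟩
      have he_ss : e ⊂ F := Finset.ssubset_iff_subset_ne.2 ⟨he_sub, fun h => hc2 (by
        rw [← h, hce])⟩
      have heK : e ∈ X.faces := X.down_closed _ hF _ he_sub hene
      obtain ⟨u, hu⟩ := Infinite.exists_notMem_finset (insert w X.V)
      have huV : u ∉ X.V := fun h => hu (Finset.mem_insert_of_mem h)
      have huw : u ≠ w := fun h => hu (h ▸ Finset.mem_insert_self _ _)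
      have h2e : 2 ≤ e.card := hce.ge
      set B := mkStellar X e u heK h2e huV with hB
      have hstB := isStellar_mkStellar X e u heK h2e huV
      have step1 : Reach X B := reach_single (Or.inl ⟨B, ⟨e, u, hce, hstB⟩, isom_refl B⟩)
      set F' : Finset α := insert u (F \ e) with hF'def
      have hGne : (F \ e).Nonempty := by
        rw [Finset.sdiff_nonempty]; exact he_ss.not_subset
      have hF'B : F' ∈ B.faces := by
        refine Or.inr ⟨∅, F \ e, Finset.empty_ssubset.2 hene,
          Or.inl ⟨hGne, Finset.sdiff_inter_self _ _, ?_⟩, by simp [hF'def]⟩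
        rw [Finset.sdiff_union_of_subset he_sub]; exact hF
      have huG : u ∉ F \ e := fun h => huV (X.subset_V _ hF (Finset.mem_sdiff.1 h).1)
      have hF'card : F'.card = F.card - 1 := by
        rw [hF'def, Finset.card_insert_of_notMem huG, Finset.card_sdiff_of_subset he_sub, hce]
        omega
      have h2' : 2 ≤ F'.card := by omega
      have hwB : w ∉ B.V := by
        show w ∉ insert u X.V
        simp only [Finset.mem_insert, not_or]
        exact ⟨fun h => huw h.symm, hw⟩
      set C := mkStellar B F' w hF'B h2' hwB with hC
      have hstC := isStellar_mkStellar B F' w hF'B h2' hwB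
      have step2 : Reach B C := IH (F.card - 1) (by omega) B C F' w (by omega) hstC
      have hcomm := stellar_comm X hF he_ss hene huV hw huw
      have hCfaces : C.faces = stellarS Z.faces e u := by
        show stellarS (stellarS X.faces e u) F' w = _
        rw [hZf]
        exact hcomm.symm
      have hCV : C.V = insert u Z.V := by
        show insert w (insert u X.V) = insert u Z.V
        rw [hZV, Finset.insert_comm]
      have heZ : e ∈ Z.faces := by
        rw [hZf]; exact Or.inl ⟨heK, he_ss.not_subset⟩
      have huZ : u ∉ Z.V := by
        rw [hZV]
        simp only [Finset.mem_insert, not_or]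
        exact ⟨huw, huV⟩
      have step3 : EdgeIsoStep C Z :=
        Or.inr ⟨C, ⟨e, u, hce, heZ, h2e, huZ, hCV, hCfaces⟩, isom_refl C⟩
      exact reach_trans step1 (reach_trans step2 (reach_single step3))

lemma step_reach [Infinite α] {X Y : SC α} (h : StellarIsoStep X Y) : Reach X Y := by
  rcases h with ⟨Z, F, w, hst, hiso⟩ | ⟨Z, F, w, hst, hiso⟩
  · exact reach_trans (stellar_reach F.card X Z F w rfl hst)
      (iso_reach hiso (edge_of_stellar hst))
  · exact reach_symm (reach_trans (stellar_reach F.card Y Z F w rfl hst)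
      (iso_reach hiso (edge_of_stellar hst)))

end Dev

/-- If two simplicial complexes are connected by a sequence of complexes
where each consecutive pair differs by a stellar subdivision (up to isomorphism), then
they are connected by a sequence where each consecutive pair differs by an *edge*
subdivision (up to isomorphism). -/
theorem stellar_to_edge_sequence {α : Type*} [DecidableEq α] [Infinite α]
    (Δ Γ : SC α)
    (t : ℕ) (D : ℕ → SC α) (hD0 : D 0 = Δ) (hDt : D t = Γ)
    (hstep : ∀ i, 1 ≤ i → i ≤ t → StellarIsoStep (D (i - 1)) (D i)) :
    ∃ (s : ℕ) (E : ℕ → SC α), E 0 = Δ ∧ E s = Γ ∧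
      (∀ j, 1 ≤ j → j ≤ s → EdgeIsoStep (E (j - 1)) (E j)) := by
  have hreach : ∀ k, k ≤ t → Reach (D 0) (D k) := by
    intro k
    induction k with
    | zero => intro _; exact reach_refl _
    | succ k ih =>
      intro hk
      refine reach_trans (ih (by omega)) ?_
      have hs := hstep (k + 1) (by omega) hk
      rw [Nat.add_sub_cancel] at hs
      exact step_reach hs
  have hfin := hreach t le_rfl
  rw [hD0, hDt] at hfin
  exact hfin
end

section
/- For every finite simplicial complex Δ there exists a finite sequence of simplicial complexes Δ = Δ_0, Δ_1, …, Δ_m such that each Δ_i (1 ≤ i ≤ m) is an edge subdivision of Δ_{i−1}, the length m equals the number of faces of Δ of cardinality at least 2, and Δ_m is isomorphic to the barycentric subdivision br(Δ). -/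
/-- The faces of the barycentric subdivision of the collection of faces `K`: nonempty
finite sets of faces of `K` that are totally ordered by inclusion. -/
def barycentricFaces {α : Type*} (K : Set (Finset α)) : Set (Finset (Finset α)) :=
  {C | C.Nonempty ∧ (↑C : Set (Finset α)) ⊆ K ∧ IsChain (· ⊆ ·) (↑C : Set (Finset α))}


/-- Lexicographic order (on sorted ascending lists) of finite sets of naturals,
characterized set-theoretically. -/
def klt (S T : Finset ℕ) : Prop :=
  (S ⊂ T ∧ ∀ x ∈ S, ∀ y ∈ T, y ∉ S → x < y) ∨
  (∃ d ∈ S, d ∉ T ∧ (∀ x, x < d → (x ∈ S ↔ x ∈ T)) ∧ ∃ y ∈ T, d < y)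

theorem klt_irrefl (S : Finset ℕ) : ¬ klt S S := by
  rintro (⟨⟨_, h⟩, _⟩ | ⟨d, hdS, hdT, _⟩)
  · exact h (fun x hx => hx)
  · exact hdT hdS

theorem klt_asymm {S T : Finset ℕ} (h1 : klt S T) (h2 : klt T S) : False := by
  rcases h1 with ⟨hsub, hpre⟩ | ⟨d, hdS, hdT, hag, y, hyT, hdy⟩
  · rcases h2 with ⟨hsub', _⟩ | ⟨d, hdT, hdS, hag, y, hyS, hdy⟩
    · exact hsub.not_subset hsub'.subset
    · exact absurd hdy (not_lt.mpr (le_of_lt (hpre y hyS d hdT hdS)))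
  · rcases h2 with ⟨hsub', hpre'⟩ | ⟨d', hdT', hdS', hag', y', hyT', hdy'⟩
    · exact absurd hdy (not_lt.mpr (le_of_lt (hpre' y hyT d hdS hdT)))
    · rcases lt_trichotomy d d' with h | h | h
      · exact hdT ((hag' d h).mpr hdS)
      · exact hdT (h ▸ hdT')
      · exact hdS' ((hag d' h).mpr hdT')

theorem klt_total {S T : Finset ℕ} (h : S ≠ T) : klt S T ∨ klt T S := by
  have hΔ : (S \ T ∪ T \ S).Nonempty := by
    rw [Finset.nonempty_iff_ne_empty]
    intro he
    apply h
    rw [Finset.union_eq_empty, Finset.sdiff_eq_empty_iff_subset, Finset.sdiff_eq_empty_iff_subset] at he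
    exact Finset.Subset.antisymm he.1 he.2
  obtain ⟨d, hd, hdmin⟩ := (S \ T ∪ T \ S).exists_min_image id hΔ
  have hag : ∀ x, x < d → (x ∈ S ↔ x ∈ T) := by
    intro x hx
    by_contra hc
    have : x ∈ S \ T ∪ T \ S := by
      simp only [Finset.mem_union, Finset.mem_sdiff]; tauto
    exact absurd hx (not_lt.mpr (hdmin x this))
  simp only [Finset.mem_union, Finset.mem_sdiff] at hd
  -- wlog-style helper
  have key : ∀ S T : Finset ℕ, d ∈ S → d ∉ T →
      (∀ x, x < d → (x ∈ S ↔ x ∈ T)) → klt S T ∨ klt T S := by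
    intro S T hdS hdT hag
    by_cases hy : ∃ y ∈ T, d < y
    · exact Or.inl (Or.inr ⟨d, hdS, hdT, hag, hy⟩)
    · push_neg at hy
      refine Or.inr (Or.inl ⟨⟨fun x hxT => ?_, fun hc => hdT (hc hdS)⟩, ?_⟩)
      · have h1 : x ≤ d := hy x hxT
        have h2 : x ≠ d := fun he => hdT (he ▸ hxT)
        exact (hag x (lt_of_le_of_ne h1 h2)).mpr hxT
      · intro x hxT y hyS hyT
        have h1 : x ≤ d := hy x hxT
        have h2 : x ≠ d := fun he => hdT (he ▸ hxT)
        have hxd : x < d := lt_of_le_of_ne h1 h2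
        by_contra hxy
        push_neg at hxy
        exact hyT ((hag y (lt_of_le_of_lt hxy hxd)).mp hyS)
  rcases hd with ⟨hdS, hdT⟩ | ⟨hdT, hdS⟩
  · exact key S T hdS hdT hag
  · exact (key T S hdT hdS (fun x hx => (hag x hx).symm)).symm

theorem klt_trans {S T U : Finset ℕ} (h1 : klt S T) (h2 : klt T U) : klt S U := by
  rcases h1 with ⟨hST, hpST⟩ | ⟨d, hdS, hdT, hag, y, hyT, hdy⟩
  · rcases h2 with ⟨hTU, hpTU⟩ | ⟨d, hdT, hdU, hag, y, hyU, hdy⟩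
    · -- prefix, prefix
      left
      refine ⟨hST.trans hTU, ?_⟩
      intro x hxS y hyU hyS
      by_cases hyT : y ∈ T
      · exact hpST x hxS y hyT hyS
      · exact hpTU x (hST.subset hxS) y hyU hyT
    · -- prefix, d
      by_cases hdS : d ∈ S
      · -- second disjunct with d
        right
        refine ⟨d, hdS, hdU, fun x hx => ?_, y, hyU, hdy⟩
        constructor
        · intro hxS; exact (hag x hx).mp (hST.subset hxS)
        · intro hxU
          have hxT : x ∈ T := (hag x hx).mpr hxU
          by_contra hxS
          exact absurd hx (not_lt.mpr (le_of_lt (hpST d hdS x hxT hxS)))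
      · -- S is a strict prefix below d: S ⊊ U with prefix property
        left
        have hSd : ∀ x ∈ S, x < d := by
          intro x hxS
          exact hpST x hxS d hdT hdS
        have hSU : S ⊆ U := fun x hxS => (hag x (hSd x hxS)).mp (hST.subset hxS)
        refine ⟨⟨hSU, fun hc => ?_⟩, ?_⟩
        · exact absurd (hSd y (hc hyU)) (not_lt.mpr (le_of_lt hdy))

        · intro x hxS z hzU hzS
          by_contra hxz
          push_neg at hxz
          have hzd : z < d := lt_of_le_of_lt hxz (hSd x hxS)
          have hzT : z ∈ T := (hag z hzd).mpr hzU
          exact absurd (hpST x hxS z hzT hzS) (not_lt.mpr hxz)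
  · rcases h2 with ⟨hTU, hpTU⟩ | ⟨d', hdT', hdU', hag', y', hyU', hdy'⟩
    · -- d, prefix
      right
      have hdU : d ∉ U := by
        intro hdU
        exact absurd (hpTU y hyT d hdU hdT) (not_lt.mpr (le_of_lt hdy))
      refine ⟨d, hdS, hdU, fun x hx => ?_, y, hTU.subset hyT, hdy⟩
      constructor
      · intro hxS
        exact hTU.subset ((hag x hx).mp hxS)
      · intro hxU
        by_cases hxT : x ∈ T
        · exact (hag x hx).mpr hxT
        · exact absurd (hpTU y hyT x hxU hxT) (not_lt.mpr (le_of_lt (lt_trans hx hdy)))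
    · -- d, d'
      right
      rcases lt_trichotomy d d' with h | h | h
      · refine ⟨d, hdS, fun hdU => hdT ((hag' d h).mpr hdU), fun x hx => ?_, y', hyU', lt_trans h hdy'⟩
        exact (hag x hx).trans (hag' x (lt_trans hx h))
      · exact absurd (h ▸ hdT') hdT
      · refine ⟨d', (hag d' h).mpr hdT', hdU', fun x hx => ?_, y', hyU', hdy'⟩
        exact (hag x (lt_trans hx h)).trans (hag' x hx)
/-! ### Setup -/

open Classical in
/-- Bundled data for the subdivision construction. -/
structure Subdiv (α : Type*) [DecidableEq α] where
  Δ : SC α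
  ι : α → ℕ
  hι : Set.InjOn ι ↑Δ.V
  w : Finset α → α
  hwinj : ∀ F G : Finset α, F ⊆ Δ.V → G ⊆ Δ.V → w F = w G → F = G
  hwV : ∀ F : Finset α, w F ∉ Δ.V

namespace Subdiv

variable {α : Type*} [DecidableEq α] (S : Subdiv α)

/-- vertex set -/
abbrev V : Finset α := S.Δ.V
/-- faces -/
abbrev K : Set (Finset α) := S.Δ.faces

/-- the faces of cardinality at least two, as a set -/
def Mset : Set (Finset α) := {F ∈ S.K | 2 ≤ F.card}

theorem Mset_finite : S.Mset.Finite := by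
  apply Set.Finite.subset (Set.finite_coe_iff.mp ?_ : (↑S.V.powerset : Set (Finset α)).Finite)
  · intro F hF
    simp only [Finset.coe_powerset, Set.mem_preimage, Set.mem_powerset_iff, Finset.coe_subset]
    exact Finset.coe_subset.mp (by exact_mod_cast S.Δ.subset_V F hF.1)
  · exact Set.finite_coe_iff.mpr (Set.toFinite _)

noncomputable def Mfin : Finset (Finset α) := S.Mset_finite.toFinset

@[simp] theorem mem_Mfin {F : Finset α} : F ∈ S.Mfin ↔ F ∈ S.K ∧ 2 ≤ F.card := by
  simp [Mfin, Set.Finite.mem_toFinset, Mset]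

theorem Mfin_subset_V {F : Finset α} (h : F ∈ S.Mfin) : F ⊆ S.V := by
  rw [mem_Mfin] at h; exact S.Δ.subset_V F h.1

/-- image key -/
def key (F : Finset α) : Finset ℕ := F.image S.ι

theorem mem_key_iff {F : Finset α} (hF : F ⊆ S.V) {x : α} (hx : x ∈ S.V) :
    S.ι x ∈ S.key F ↔ x ∈ F := by
  constructor
  · intro h
    obtain ⟨y, hy, hxy⟩ := Finset.mem_image.mp h
    rwa [S.hι (by exact_mod_cast hF hy) (by exact_mod_cast hx) hxy] at hy
  · intro h; exact Finset.mem_image_of_mem _ h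

theorem key_injOn {F G : Finset α} (hF : F ⊆ S.V) (hG : G ⊆ S.V) (h : S.key F = S.key G) :
    F = G := by
  ext x
  constructor
  · intro hx
    have : S.ι x ∈ S.key G := h ▸ Finset.mem_image_of_mem _ hx
    exact (S.mem_key_iff hG (hF hx)).mp this
  · intro hx
    have : S.ι x ∈ S.key F := h ▸ Finset.mem_image_of_mem _ hx
    exact (S.mem_key_iff hF (hG hx)).mp this

/-- order on faces -/
def alt (F G : Finset α) : Prop := klt (S.key F) (S.key G)

theorem alt_irrefl (F : Finset α) : ¬ S.alt F F := klt_irrefl _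

theorem alt_asymm {F G : Finset α} (h1 : S.alt F G) (h2 : S.alt G F) : False :=
  klt_asymm h1 h2

theorem alt_trans {F G H : Finset α} (h1 : S.alt F G) (h2 : S.alt G H) : S.alt F H :=
  klt_trans h1 h2

theorem alt_total {F G : Finset α} (hF : F ⊆ S.V) (hG : G ⊆ S.V) (h : F ≠ G) :
    S.alt F G ∨ S.alt G F :=
  klt_total (fun he => h (S.key_injOn hF hG he))

/-- prefix criterion -/
theorem alt_of_prefix {F G : Finset α} (hF : F ⊆ S.V) (hG : G ⊆ S.V) (hsub : F ⊂ G)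
    (hpre : ∀ x ∈ F, ∀ y ∈ G, y ∉ F → S.ι x < S.ι y) : S.alt F G := by
  left
  constructor
  · constructor
    · exact Finset.image_subset_image hsub.subset
    · intro hc
      obtain ⟨y, hyG, hyF⟩ := Finset.exists_of_ssubset hsub
      have : S.ι y ∈ S.key F := hc (Finset.mem_image_of_mem _ hyG)
      rw [S.mem_key_iff hF (hG hyG)] at this
      exact hyF this
  · rintro a ha b hb hbF
    obtain ⟨x, hx, rfl⟩ := Finset.mem_image.mp ha
    obtain ⟨y, hy, rfl⟩ := Finset.mem_image.mp hb
    have hyF : y ∉ F := fun hc => hbF (Finset.mem_image_of_mem _ hc)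
    exact hpre x hx y hy hyF

/-- first-difference criterion -/
theorem alt_of_diff {F G : Finset α} (hF : F ⊆ S.V) (hG : G ⊆ S.V) {d : α} (hdF : d ∈ F)
    (hdG : d ∉ G) (hag : ∀ x ∈ S.V, S.ι x < S.ι d → (x ∈ F ↔ x ∈ G))
    (hy : ∃ y ∈ G, S.ι d < S.ι y) : S.alt F G := by
  right
  refine ⟨S.ι d, Finset.mem_image_of_mem _ hdF, ?_, ?_, ?_⟩
  · rw [S.mem_key_iff hG (hF hdF)]; exact hdG
  · intro n hn
    constructor
    · intro hnF
      obtain ⟨x, hx, rfl⟩ := Finset.mem_image.mp hnF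
      exact Finset.mem_image_of_mem _ ((hag x (hF hx) hn).mp hx)
    · intro hnG
      obtain ⟨x, hx, rfl⟩ := Finset.mem_image.mp hnG
      exact Finset.mem_image_of_mem _ ((hag x (hG hx) hn).mpr hx)
  · obtain ⟨y, hyG, hdy⟩ := hy
    exact ⟨S.ι y, Finset.mem_image_of_mem _ hyG, hdy⟩

/-- structure of `alt` -/
theorem alt_structure {F G : Finset α} (hF : F ⊆ S.V) (hG : G ⊆ S.V) (h : S.alt F G) :
    (F ⊂ G ∧ ∀ x ∈ F, ∀ y ∈ G, y ∉ F → S.ι x < S.ι y) ∨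
    (∃ d ∈ F, d ∉ G ∧ ∀ x ∈ S.V, S.ι x < S.ι d → (x ∈ F ↔ x ∈ G)) := by
  rcases h with ⟨hsub, hpre⟩ | ⟨d, hdF, hdG, hag, -⟩
  · left
    have hFG : F ⊆ G := fun x hx => (S.mem_key_iff hG (hF hx)).mp (hsub.subset (Finset.mem_image_of_mem _ hx))
    refine ⟨⟨hFG, fun hc => hsub.not_subset ?_⟩, fun x hx y hy hyF => ?_⟩
    · intro a ha
      obtain ⟨y, hy, rfl⟩ := Finset.mem_image.mp ha
      exact Finset.mem_image_of_mem _ (hc hy)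
    · refine hpre _ (Finset.mem_image_of_mem _ hx) _ (Finset.mem_image_of_mem _ hy) ?_
      rw [S.mem_key_iff hF (hG hy)]; exact hyF
  · right
    obtain ⟨e, heF, rfl⟩ := Finset.mem_image.mp hdF
    refine ⟨e, heF, ?_, fun x hx hxd => ?_⟩
    · intro hc; exact hdG (Finset.mem_image_of_mem _ hc)
    · constructor
      · intro hxF
        have := (hag _ hxd).mp (Finset.mem_image_of_mem _ hxF)
        exact (S.mem_key_iff hG hx).mp this
      · intro hxG
        have := (hag _ hxd).mpr (Finset.mem_image_of_mem _ hxG)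
        exact (S.mem_key_iff hF hx).mp this

end Subdiv
/-! ### top element, prefix face, enumeration -/

def kle (s t : Finset ℕ) : Prop := klt s t ∨ s = t

instance : IsTrans (Finset ℕ) kle := ⟨by
  rintro a b c (h1 | rfl) (h2 | rfl)
  · exact Or.inl (klt_trans h1 h2)
  · exact Or.inl h1
  · exact Or.inl h2
  · exact Or.inr rfl⟩

instance : IsAntisymm (Finset ℕ) kle := ⟨by
  rintro a b (h1 | rfl) (h2 | h3)
  · exact absurd (klt_asymm h1 h2) id
  · exact h3.symm
  · rfl
  · rfl⟩

instance : IsTotal (Finset ℕ) kle := ⟨by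
  intro a b
  by_cases h : a = b
  · exact Or.inl (Or.inr h)
  · rcases klt_total h with h | h
    · exact Or.inl (Or.inl h)
    · exact Or.inr (Or.inl h)⟩

noncomputable instance : DecidableRel kle := fun _ _ => Classical.dec _

namespace Subdiv

set_option linter.unusedSectionVars false

variable {α : Type*} [DecidableEq α] [Nonempty α] (S : Subdiv α)

/-- the `ι`-largest element of a finite set -/
noncomputable def top (F : Finset α) : α :=
  if h : F.Nonempty then (F.exists_max_image S.ι h).choose else Classical.arbitrary α

theorem top_mem {F : Finset α} (h : F.Nonempty) : S.top F ∈ F := by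
  rw [top, dif_pos h]
  exact (F.exists_max_image S.ι h).choose_spec.1

theorem le_top {F : Finset α} (h : F.Nonempty) {x : α} (hx : x ∈ F) :
    S.ι x ≤ S.ι (S.top F) := by
  rw [top, dif_pos h]
  exact (F.exists_max_image S.ι h).choose_spec.2 x hx

theorem lt_top {F : Finset α} (hF : F ⊆ S.V) {x : α} (hx : x ∈ F) (hne : x ≠ S.top F) :
    S.ι x < S.ι (S.top F) := by
  have h : F.Nonempty := ⟨x, hx⟩
  refine lt_of_le_of_ne (S.le_top h hx) fun hc => hne ?_
  exact S.hι (by exact_mod_cast hF hx) (by exact_mod_cast hF (S.top_mem h)) hc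

/-- the face minus its `ι`-largest element -/
noncomputable def pface (F : Finset α) : Finset α := F.erase (S.top F)

theorem top_not_mem_pface (F : Finset α) : S.top F ∉ S.pface F := Finset.notMem_erase _ _

theorem pface_subset (F : Finset α) : S.pface F ⊆ F := Finset.erase_subset _ _

theorem insert_top_pface {F : Finset α} (h : F.Nonempty) :
    insert (S.top F) (S.pface F) = F := Finset.insert_erase (S.top_mem h)

theorem pface_ssubset {F : Finset α} (h : F.Nonempty) : S.pface F ⊂ F :=
  Finset.erase_ssubset (S.top_mem h)

theorem pface_card {F : Finset α} (h : F.Nonempty) : (S.pface F).card = F.card - 1 :=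
  Finset.card_erase_of_mem (S.top_mem h)

theorem alt_pface {F : Finset α} (hF : F ⊆ S.V) (h : F.Nonempty) : S.alt (S.pface F) F := by
  refine S.alt_of_prefix ((S.pface_subset F).trans hF) hF (S.pface_ssubset h) ?_
  intro x hx y hy hyp
  have hytop : y = S.top F := by
    by_contra hc
    exact hyp (Finset.mem_erase.mpr ⟨hc, hy⟩)
  subst hytop
  exact S.lt_top hF (S.pface_subset F hx) (Finset.ne_of_mem_erase hx)

/-- inverse of `key` -/
def invkey (s : Finset ℕ) : Finset α := S.V.filter (fun x => S.ι x ∈ s)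

theorem invkey_key {F : Finset α} (hF : F ⊆ S.V) : S.invkey (S.key F) = F := by
  ext x
  simp only [invkey, Finset.mem_filter]
  constructor
  · rintro ⟨hxV, hxk⟩
    exact (S.mem_key_iff hF hxV).mp hxk
  · intro hx
    exact ⟨hF hx, Finset.mem_image_of_mem _ hx⟩

noncomputable def sortedKeys : List (Finset ℕ) := Finset.sort (S.Mfin.image S.key) kle

noncomputable def Mlist : List (Finset α) := S.sortedKeys.map S.invkey

theorem mem_Mlist {F : Finset α} : F ∈ S.Mlist ↔ F ∈ S.Mfin := by
  simp only [Mlist, List.mem_map, sortedKeys, Finset.mem_sort, Finset.mem_image]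
  constructor
  · rintro ⟨s, ⟨G, hG, rfl⟩, rfl⟩
    rwa [S.invkey_key (S.Mfin_subset_V hG)]
  · intro hF
    exact ⟨S.key F, ⟨F, hF, rfl⟩, S.invkey_key (S.Mfin_subset_V hF)⟩

theorem key_mem_of_mem_sortedKeys {s : Finset ℕ} (h : s ∈ S.sortedKeys) :
    ∃ G ∈ S.Mfin, S.key G = s := by
  simpa only [sortedKeys, Finset.mem_sort, Finset.mem_image] using h

theorem Mlist_length : S.Mlist.length = S.Mfin.card := by
  rw [Mlist, List.length_map, sortedKeys, Finset.length_sort]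
  apply Finset.card_image_of_injOn
  intro F hF G hG h
  exact S.key_injOn (S.Mfin_subset_V hF) (S.Mfin_subset_V hG) h

theorem Mlist_pairwise : S.Mlist.Pairwise S.alt := by
  rw [Mlist, List.pairwise_map]
  have h1 : S.sortedKeys.Pairwise kle := Finset.pairwise_sort _ _
  have h2 : S.sortedKeys.Pairwise (· ≠ ·) := Finset.sort_nodup _ _
  have h3 : S.sortedKeys.Pairwise (fun s t => kle s t ∧ s ≠ t) := h1.and h2
  refine (List.Pairwise.imp_of_mem ?_ h3)
  intro s t hs ht ⟨hkle, hne⟩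
  obtain ⟨F, hF, rfl⟩ := S.key_mem_of_mem_sortedKeys hs
  obtain ⟨G, hG, rfl⟩ := S.key_mem_of_mem_sortedKeys ht
  show S.alt (S.invkey _) (S.invkey _)
  rw [S.invkey_key (S.Mfin_subset_V hF), S.invkey_key (S.Mfin_subset_V hG)]
  rcases hkle with h | h
  · exact h
  · exact absurd h hne

theorem Mlist_nodup : S.Mlist.Nodup := by
  refine S.Mlist_pairwise.imp ?_
  intro F G h
  rintro rfl
  exact S.alt_irrefl _ h

/-- the `j`-th face in the enumeration -/
noncomputable def Fj (j : ℕ) : Finset α := S.Mlist.getD j ∅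

/-- the set of the first `j` faces -/
noncomputable def seqA (j : ℕ) : Finset (Finset α) := (S.Mlist.take j).toFinset

theorem seqA_zero : S.seqA 0 = ∅ := by simp [seqA]

theorem seqA_full : S.seqA S.Mlist.length = S.Mfin := by
  ext F
  simp only [seqA, List.take_length, List.mem_toFinset]
  exact S.mem_Mlist

theorem Fj_eq {j : ℕ} (hj : j < S.Mlist.length) : S.Fj j = S.Mlist[j] := by
  rw [Fj, List.getD_eq_getElem?_getD, List.getElem?_eq_getElem hj]
  rfl

theorem seqA_succ {j : ℕ} (hj : j < S.Mlist.length) :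
    S.seqA (j + 1) = insert (S.Fj j) (S.seqA j) := by
  ext F
  simp only [seqA, List.mem_toFinset, Finset.mem_insert, Fj, List.getD_eq_getElem?_getD,
    List.getElem?_eq_getElem hj, Option.getD_some]
  rw [List.take_succ, List.getElem?_eq_getElem hj]
  simp only [List.mem_append, Option.toList_some, List.mem_singleton]
  tauto

theorem Fj_mem {j : ℕ} (hj : j < S.Mlist.length) : S.Fj j ∈ S.Mfin := by
  rw [← S.mem_Mlist, S.Fj_eq hj]
  exact List.getElem_mem _

theorem mem_seqA_iff {j : ℕ} {F : Finset α} :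
    F ∈ S.seqA j ↔ ∃ i < j, ∃ (hi : i < S.Mlist.length), S.Mlist[i] = F := by
  simp only [seqA, List.mem_toFinset]
  constructor
  · intro h
    obtain ⟨i, hi, he⟩ := List.getElem_of_mem h
    rw [List.length_take] at hi
    rw [List.getElem_take] at he
    exact ⟨i, lt_of_lt_of_le hi (min_le_left _ _), lt_of_lt_of_le hi (min_le_right _ _), he⟩
  · rintro ⟨i, hij, hi, rfl⟩
    refine List.mem_iff_getElem.mpr ⟨i, by rw [List.length_take]; omega, ?_⟩
    rw [List.getElem_take]

theorem seqA_subset_Mfin {j : ℕ} : S.seqA j ⊆ S.Mfin := by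
  intro F hF
  rw [mem_seqA_iff] at hF
  obtain ⟨i, _, hi, rfl⟩ := hF
  rw [← S.mem_Mlist]
  exact List.getElem_mem _

theorem Fj_not_mem_seqA {j : ℕ} (hj : j < S.Mlist.length) : S.Fj j ∉ S.seqA j := by
  rw [mem_seqA_iff]
  rintro ⟨i, hij, hi, he⟩
  have hinj := S.Mlist_nodup
  rw [List.nodup_iff_injective_getElem] at hinj
  rw [S.Fj_eq hj] at he
  have : (⟨i, hi⟩ : Fin S.Mlist.length) = ⟨j, hj⟩ := hinj he
  simp only [Fin.mk.injEq] at this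
  omega

theorem alt_of_mem_seqA {j : ℕ} (hj : j < S.Mlist.length) {H : Finset α}
    (hH : H ∈ S.seqA j) : S.alt H (S.Fj j) := by
  rw [mem_seqA_iff] at hH
  obtain ⟨i, hij, hi, rfl⟩ := hH
  have hp := S.Mlist_pairwise
  rw [List.pairwise_iff_getElem] at hp
  have := hp i j hi hj hij
  rwa [S.Fj_eq hj]

theorem mem_seqA_of_alt {j : ℕ} (hj : j < S.Mlist.length) {H : Finset α} (hH : H ∈ S.Mfin)
    (halt : S.alt H (S.Fj j)) : H ∈ S.seqA j := by
  rw [← S.mem_Mlist] at hH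
  obtain ⟨i, hi, rfl⟩ := List.getElem_of_mem hH
  rw [mem_seqA_iff]
  refine ⟨i, ?_, hi, rfl⟩
  by_contra hc
  push_neg at hc
  have hp := S.Mlist_pairwise
  rw [List.pairwise_iff_getElem] at hp
  rw [S.Fj_eq hj] at halt
  rcases lt_or_eq_of_le hc with h | h
  · exact S.alt_asymm halt (hp j i hj hi h)
  · subst h
    exact S.alt_irrefl _ halt

end Subdiv
/-! ### The invariant family of complexes -/

section UB
variable {α : Type*} [DecidableEq α]

/-- union of the chain elements not containing `H` -/
def UB (C : Finset (Finset α)) (H : Finset α) : Finset α :=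
  (C.filter (fun G => ¬ H ⊆ G)).sup id

theorem subset_UB {C : Finset (Finset α)} {H G : Finset α} (hG : G ∈ C) (h : ¬ H ⊆ G) :
    G ⊆ UB C H :=
  Finset.le_sup (f := id) (Finset.mem_filter.mpr ⟨hG, h⟩)

theorem UB_subset_sup (C : Finset (Finset α)) (H : Finset α) : UB C H ⊆ C.sup id := by
  have := Finset.sup_mono (f := id) (Finset.filter_subset (fun G => ¬ H ⊆ G) C)
  exact_mod_cast this

theorem UB_mono {C C' : Finset (Finset α)} (h : C' ⊆ C) (H : Finset α) :
    UB C' H ⊆ UB C H := by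
  have := Finset.sup_mono (f := id) (Finset.filter_subset_filter (fun G => ¬ H ⊆ G) h)
  exact_mod_cast this

/-- the union of a nonempty chain is its largest member -/
theorem chain_sup_mem {C : Finset (Finset α)} (hne : C.Nonempty)
    (hch : IsChain (· ⊆ ·) (C : Set (Finset α))) : C.sup id ∈ C := by
  obtain ⟨a, ha, hamax⟩ := C.exists_maximal hne
  have : C.sup id = a := by
    apply le_antisymm
    · apply Finset.sup_le
      intro b hb
      rcases eq_or_ne b a with rfl | hne'
      · exact le_refl _
      · rcases hch (Finset.mem_coe.mpr hb) (Finset.mem_coe.mpr ha) hne' with h | h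
        · exact h
        · exact absurd (lt_of_le_of_ne h (fun hc => hne' hc.symm)) (not_lt_of_ge (hamax hb h))
    · exact Finset.le_sup (f := id) ha
  rw [this]
  exact ha

theorem chain_subset_sup {C : Finset (Finset α)} {G : Finset α} (hG : G ∈ C) :
    G ⊆ C.sup id := Finset.le_sup (f := id) hG

theorem UB_eq_max {C : Finset (Finset α)} (hch : IsChain (· ⊆ ·) (C : Set (Finset α)))
    {H : Finset α} (hne : (C.filter (fun G => ¬ H ⊆ G)).Nonempty) :
    UB C H ∈ C ∧ ¬ H ⊆ UB C H := by
  have hch' : IsChain (· ⊆ ·) ((C.filter (fun G => ¬ H ⊆ G)) : Set (Finset α)) := by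
    refine IsChain.mono ?_ hch
    exact_mod_cast Finset.filter_subset _ _
  have hmem := chain_sup_mem hne hch'
  rw [Finset.mem_filter] at hmem
  exact ⟨hmem.1, hmem.2⟩

end UB

namespace Subdiv

set_option linter.unusedSectionVars false

variable {α : Type*} [DecidableEq α] [Nonempty α] (S : Subdiv α)

/-- a valid representation of a face of the partially subdivided complex -/
def goodRep (A : Finset (Finset α)) (T : Finset α) (C : Finset (Finset α)) : Prop :=
  T ⊆ S.V ∧ C ⊆ A ∧ IsChain (· ⊆ ·) (C : Set (Finset α)) ∧ T ∪ C.sup id ∈ S.K ∧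
    ∀ H ∈ A, ¬ H ⊆ T ∪ UB C H

/-- the faces of the partially subdivided complex -/
def Phi (A : Finset (Finset α)) : Set (Finset α) :=
  {X | X.Nonempty ∧ ∃ T C, S.goodRep A T C ∧ X = T ∪ C.image S.w}

theorem w_injOn {G G' : Finset α} (hG : G ⊆ S.V) (hG' : G' ⊆ S.V) :
    S.w G = S.w G' ↔ G = G' :=
  ⟨fun h => S.hwinj _ _ hG hG' h, fun h => h ▸ rfl⟩

theorem subset_V_of_mem_Mfin {A : Finset (Finset α)} (hA : A ⊆ S.Mfin) {G : Finset α}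
    (hG : G ∈ A) : G ⊆ S.V := S.Mfin_subset_V (hA hG)

/-- uniqueness of representations -/
theorem rep_unique {T₁ T₂ : Finset α} {C₁ C₂ : Finset (Finset α)}
    (hT₁ : T₁ ⊆ S.V) (hT₂ : T₂ ⊆ S.V)
    (hC₁ : ∀ G ∈ C₁, G ⊆ S.V) (hC₂ : ∀ G ∈ C₂, G ⊆ S.V)
    (h : T₁ ∪ C₁.image S.w = T₂ ∪ C₂.image S.w) : T₁ = T₂ ∧ C₁ = C₂ := by
  have hmemT : ∀ (T T' : Finset α) (C C' : Finset (Finset α)), T ⊆ S.V → T' ⊆ S.V →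
      (∀ G ∈ C', G ⊆ S.V) → T ∪ C.image S.w = T' ∪ C'.image S.w → T ⊆ T' := by
    intro T T' C C' hT hT' hC' he x hx
    have : x ∈ T' ∪ C'.image S.w := he ▸ Finset.mem_union_left _ hx
    rcases Finset.mem_union.mp this with h' | h'
    · exact h'
    · obtain ⟨G, hG, rfl⟩ := Finset.mem_image.mp h'
      exact absurd (hT hx) (S.hwV G)
  have hmemC : ∀ (T T' : Finset α) (C C' : Finset (Finset α)), T' ⊆ S.V →
      (∀ G ∈ C, G ⊆ S.V) → (∀ G ∈ C', G ⊆ S.V) →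
      T ∪ C.image S.w = T' ∪ C'.image S.w → C ⊆ C' := by
    intro T T' C C' hT' hC hC' he G hG
    have : S.w G ∈ T' ∪ C'.image S.w := he ▸ Finset.mem_union_right _ (Finset.mem_image_of_mem _ hG)
    rcases Finset.mem_union.mp this with h' | h'
    · exact absurd (hT' h') (S.hwV G)
    · obtain ⟨G', hG', he'⟩ := Finset.mem_image.mp h'
      rwa [S.w_injOn (hC' G' hG') (hC G hG) |>.mp he'] at hG'
  exact ⟨Finset.Subset.antisymm (hmemT _ _ _ _ hT₁ hT₂ hC₂ h) (hmemT _ _ _ _ hT₂ hT₁ hC₁ h.symm),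
    Finset.Subset.antisymm (hmemC _ _ _ _ hT₂ hC₁ hC₂ h) (hmemC _ _ _ _ hT₁ hC₂ hC₁ h.symm)⟩

theorem Phi_empty : S.Phi ∅ = S.K := by
  ext X
  constructor
  · rintro ⟨hne, T, C, ⟨hTV, hCA, hchain, hK, hcond⟩, rfl⟩
    have : C = ∅ := Finset.subset_empty.mp hCA
    subst this
    simpa using hK
  · intro hX
    refine ⟨S.Δ.nonempty_mem X hX, X, ∅, ⟨S.Δ.subset_V X hX, by simp, by simp, by simpa using hX,
      by simp⟩, by simp⟩

/-- faces of `Phi` lie in the extended vertex set -/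
theorem Phi_subset_V {A : Finset (Finset α)} {X : Finset α} (hX : X ∈ S.Phi A) :
    X ⊆ S.V ∪ A.image S.w := by
  obtain ⟨hne, T, C, ⟨hTV, hCA, _, _, _⟩, rfl⟩ := hX
  intro x hx
  rcases Finset.mem_union.mp hx with h | h
  · exact Finset.mem_union_left _ (hTV h)
  · obtain ⟨G, hG, rfl⟩ := Finset.mem_image.mp h
    exact Finset.mem_union_right _ (Finset.mem_image_of_mem _ (hCA hG))

/-- the partially subdivided complexes -/
noncomputable def mkSC (A : Finset (Finset α)) (hA : A ⊆ S.Mfin) : SC α where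
  V := S.V ∪ A.image S.w
  faces := S.Phi A
  nonempty_mem := fun _ hF => hF.1
  subset_V := fun _ hF => S.Phi_subset_V hF
  down_closed := by
    rintro X ⟨hne, T, C, ⟨hTV, hCA, hchain, hK, hcond⟩, rfl⟩ Y hYX hYne
    refine ⟨hYne, Y ∩ T, C.filter (fun G => S.w G ∈ Y), ⟨?_, ?_, ?_, ?_, ?_⟩, ?_⟩
    · exact (Finset.inter_subset_right).trans hTV
    · exact (Finset.filter_subset _ _).trans hCA
    · exact hchain.mono (by exact_mod_cast Finset.filter_subset _ _)
    · apply S.Δ.down_closed _ hK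
      · apply Finset.union_subset_union Finset.inter_subset_right
        have := Finset.sup_mono (f := id) (Finset.filter_subset (fun G => S.w G ∈ Y) C)
        exact_mod_cast this
      · -- nonempty
        rcases Finset.mem_union.mp (hYX hYne.choose_spec) with h | h
        · exact ⟨hYne.choose, Finset.mem_union_left _ (Finset.mem_inter.mpr ⟨hYne.choose_spec, h⟩)⟩
        · obtain ⟨G, hG, he⟩ := Finset.mem_image.mp h
          refine Finset.Nonempty.mono (Finset.subset_union_right) ?_
          have hGne : G.Nonempty := by
            have := (S.mem_Mfin.mp (hA (hCA hG))).2
            exact Finset.card_pos.mp (by omega)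
          exact hGne.mono (Finset.le_sup (f := id) (Finset.mem_filter.mpr ⟨hG, he ▸ hYne.choose_spec⟩))
    · intro H hH hsub
      apply hcond H hH
      refine hsub.trans (Finset.union_subset_union Finset.inter_subset_right ?_)
      exact UB_mono (Finset.filter_subset _ _) H
    · -- Y = (Y ∩ T) ∪ image
      ext x
      simp only [Finset.mem_union, Finset.mem_inter, Finset.mem_image, Finset.mem_filter]
      constructor
      · intro hx
        rcases Finset.mem_union.mp (hYX hx) with h | h
        · exact Or.inl ⟨hx, h⟩
        · obtain ⟨G, hG, rfl⟩ := Finset.mem_image.mp h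
          exact Or.inr ⟨G, ⟨hG, hx⟩, rfl⟩
      · rintro (⟨hx, _⟩ | ⟨G, ⟨_, hx⟩, rfl⟩)
        · exact hx
        · exact hx
  singleton_mem := by
    intro x hx
    rcases Finset.mem_union.mp hx with h | h
    · exact ⟨Finset.singleton_nonempty x, {x}, ∅, ⟨Finset.singleton_subset_iff.mpr h, by simp,
        by simp, by simpa using S.Δ.singleton_mem x h, by
          intro H hH hsub
          have h2 : 2 ≤ H.card := (S.mem_Mfin.mp (hA hH)).2
          have : H.card ≤ 1 := by
            calc H.card ≤ ({x} ∪ UB ∅ H).card := Finset.card_le_card hsub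
            _ ≤ 1 := by simp [UB]
          omega⟩, by simp⟩
    · obtain ⟨G, hG, rfl⟩ := Finset.mem_image.mp h
      refine ⟨Finset.singleton_nonempty _, ∅, {G}, ⟨by simp, by simpa using hG, by simp, by
        simpa using (S.mem_Mfin.mp (hA hG)).1, ?_⟩, by simp⟩
      intro H hH hsub
      by_cases hHG : H ⊆ G
      · have : UB {G} H = ∅ := by
          rw [UB, Finset.filter_singleton, if_neg (by simpa using hHG)]
          simp
        rw [this] at hsub
        have h2 : 2 ≤ H.card := (S.mem_Mfin.mp (hA hH)).2
        have : H.card = 0 := by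
          simpa using Finset.card_le_card hsub
        omega
      · have : UB {G} H = G := by
          rw [UB, Finset.filter_singleton, if_pos (by simpa using hHG)]
          simp
        rw [this] at hsub
        simp only [Finset.empty_union] at hsub
        exact hHG hsub

end Subdiv
/-! ### The edge to subdivide, and the key lemmas -/

namespace Subdiv

set_option linter.unusedSectionVars false
set_option maxHeartbeats 1000000

variable {α : Type*} [DecidableEq α] [Nonempty α] (S : Subdiv α)

/-- the edge at which we subdivide when processing `F` -/
noncomputable def edge (F : Finset α) : Finset α :=
  if F.card = 2 then F else {S.w (S.pface F), S.top F}

section Step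

variable {A : Finset (Finset α)} {F : Finset α}

theorem F_subset_V (hF : F ∈ S.Mfin) : F ⊆ S.V := S.Mfin_subset_V hF

theorem F_card (hF : F ∈ S.Mfin) : 2 ≤ F.card := (S.mem_Mfin.mp hF).2

theorem F_nonempty (hF : F ∈ S.Mfin) : F.Nonempty := by
  have := S.F_card hF
  exact Finset.card_pos.mp (by omega)

theorem F_mem_K (hF : F ∈ S.Mfin) : F ∈ S.K := (S.mem_Mfin.mp hF).1

theorem pface_mem_K (hF : F ∈ S.Mfin) : S.pface F ∈ S.K := by
  apply S.Δ.down_closed F (S.F_mem_K hF) _ (S.pface_subset F)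
  rw [← Finset.card_pos, S.pface_card (S.F_nonempty hF)]
  have := S.F_card hF
  omega

theorem pface_mem_Mfin (hF : F ∈ S.Mfin) (hcard : F.card ≠ 2) : S.pface F ∈ S.Mfin := by
  rw [mem_Mfin]
  refine ⟨S.pface_mem_K hF, ?_⟩
  rw [S.pface_card (S.F_nonempty hF)]
  have := S.F_card hF
  omega

theorem pface_mem_A (hmin : ∀ H ∈ S.Mfin, S.alt H F → H ∈ A) (hF : F ∈ S.Mfin)
    (hcard : F.card ≠ 2) : S.pface F ∈ A :=
  hmin _ (S.pface_mem_Mfin hF hcard) (S.alt_pface (S.F_subset_V hF) (S.F_nonempty hF))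

/-- a member of `A` contained in `F` avoids the top vertex -/
theorem mem_A_subset_pface (hlt : ∀ H ∈ A, S.alt H F) (hA : A ⊆ S.Mfin) (hF : F ∈ S.Mfin)
    (hFA : F ∉ A) {H : Finset α} (hH : H ∈ A) (hsub : H ⊆ F) : H ⊆ S.pface F := by
  have hne : H ≠ F := fun h => hFA (h ▸ hH)
  have hHV : H ⊆ S.V := S.Mfin_subset_V (hA hH)
  rcases S.alt_structure hHV (S.F_subset_V hF) (hlt H hH) with ⟨hss, hpre⟩ | ⟨d, hdH, hdF, _⟩
  · -- prefix: top ∉ H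
    intro x hx
    rw [pface, Finset.mem_erase]
    refine ⟨?_, hsub hx⟩
    intro heq
    obtain ⟨y, hyF, hyH⟩ := Finset.exists_of_ssubset hss
    have h1 := hpre x hx y hyF hyH
    have h2 := S.le_top (S.F_nonempty hF) hyF
    rw [heq] at h1
    omega
  · exact absurd (hsub hdH) hdF

theorem edge_card (hF : F ∈ S.Mfin) : (S.edge F).card = 2 := by
  rw [edge]
  split
  · assumption
  · rw [Finset.card_insert_of_notMem, Finset.card_singleton]
    simp only [Finset.mem_singleton]
    intro hc
    exact S.hwV _ (hc ▸ S.F_subset_V hF (S.top_mem (S.F_nonempty hF)))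

/-- the edge is a face of the current complex -/
theorem edge_mem_Phi (hA : A ⊆ S.Mfin) (hF : F ∈ S.Mfin) (hFA : F ∉ A)
    (hlt : ∀ H ∈ A, S.alt H F) (hmin : ∀ H ∈ S.Mfin, S.alt H F → H ∈ A) :
    S.edge F ∈ S.Phi A := by
  by_cases hcard : F.card = 2
  · rw [edge, if_pos hcard]
    refine ⟨S.F_nonempty hF, F, ∅, ⟨S.F_subset_V hF, by simp, by simp,
      by simpa using S.F_mem_K hF, ?_⟩, by simp⟩
    intro H hH hsub
    simp only [UB, Finset.filter_empty, Finset.sup_empty, Finset.union_comm] at hsub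
    have hsub' : H ⊆ F := by simpa using hsub
    have := S.mem_A_subset_pface hlt hA hF hFA hH hsub'
    have h1 : H.card ≤ (S.pface F).card := Finset.card_le_card this
    rw [S.pface_card (S.F_nonempty hF), hcard] at h1
    have := S.F_card (hA hH)
    omega
  · rw [edge, if_neg hcard]
    have hins : ({S.w (S.pface F), S.top F} : Finset α) = {S.top F} ∪ ({S.pface F} : Finset (Finset α)).image S.w := by
      rw [Finset.image_singleton, Finset.union_comm, ← Finset.insert_eq]
    refine ⟨by simp, {S.top F}, {S.pface F}, ⟨?_, ?_, by simp, ?_, ?_⟩, hins⟩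
    · simpa using S.F_subset_V hF (S.top_mem (S.F_nonempty hF))
    · simpa using S.pface_mem_A hmin hF hcard
    · have : ({S.top F} : Finset α) ∪ ({S.pface F} : Finset (Finset α)).sup id = F := by
        rw [Finset.sup_singleton]
        show ({S.top F} : Finset α) ∪ S.pface F = F
        rw [← Finset.insert_eq]
        exact S.insert_top_pface (S.F_nonempty hF)
      rw [this]
      exact S.F_mem_K hF
    · intro H hH hsub
      by_cases hHp : H ⊆ S.pface F
      · have : UB {S.pface F} H = ∅ := by
          rw [UB, Finset.filter_singleton, if_neg (by simpa using hHp)]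
          simp
        rw [this] at hsub
        have h2 := S.F_card (hA hH)
        have : H.card ≤ 1 := by
          simpa using Finset.card_le_card hsub
        omega
      · have : UB {S.pface F} H = S.pface F := by
          rw [UB, Finset.filter_singleton, if_pos (by simpa using hHp)]
          simp
        rw [this] at hsub
        have hHF : H ⊆ F := by
          intro x hx
          rcases Finset.mem_union.mp (hsub hx) with h | h
          · rw [Finset.mem_singleton] at h
            exact h ▸ S.top_mem (S.F_nonempty hF)
          · exact S.pface_subset F h
        exact hHp (S.mem_A_subset_pface hlt hA hF hFA hH hHF)

/-- **Lemma A**: if `F ⊆ T ∪ UB C F` for a valid representation, then the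
edge is visible in the representation. -/
theorem lemA (hA : A ⊆ S.Mfin) (hF : F ∈ S.Mfin) (hFA : F ∉ A)
    (hlt : ∀ H ∈ A, S.alt H F) (hmin : ∀ H ∈ S.Mfin, S.alt H F → H ∈ A)
    {T : Finset α} {C : Finset (Finset α)} (hrep : S.goodRep A T C)
    (hsub : F ⊆ T ∪ UB C F) :
    (F.card = 2 → F ⊆ T) ∧ (F.card ≠ 2 → S.pface F ∈ C ∧ S.top F ∈ T) := by
  obtain ⟨hTV, hCA, hchain, hK, hcond⟩ := hrep
  by_cases hP : (C.filter (fun G => ¬ F ⊆ G)).Nonempty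
  · obtain ⟨hGC, hGF⟩ := UB_eq_max hchain hP
    set G' : Finset α := UB C F with hG'
    have hG'V : G' ⊆ S.V := S.Mfin_subset_V (hA (hCA hGC))
    -- F \ G' is nonempty and contained in T
    have hFG' : ∀ x ∈ F, x ∉ G' → x ∈ T := by
      intro x hx hxG
      rcases Finset.mem_union.mp (hsub hx) with h | h
      · exact h
      · exact absurd h hxG
    have hne : (F \ G').Nonempty := by
      rw [Finset.sdiff_nonempty]
      exact hGF
    obtain ⟨s, hs, hsmin⟩ := (F \ G').exists_min_image S.ι hne
    rw [Finset.mem_sdiff] at hs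
    obtain ⟨hsF, hsG'⟩ := hs
    have hsT : s ∈ T := hFG' s hsF hsG'
    have hsV : s ∈ S.V := S.F_subset_V hF hsF
    set H : Finset α := insert s G' with hH
    have hHV : H ⊆ S.V := Finset.insert_subset hsV hG'V
    have hHK : H ∈ S.K := by
      apply S.Δ.down_closed _ hK
      · exact Finset.insert_subset (Finset.mem_union_left _ hsT)
          ((chain_subset_sup hGC).trans Finset.subset_union_right)
      · exact Finset.insert_nonempty _ _
    have hHcard : 2 ≤ H.card := by
      have h1 : G'.card ≤ H.card := Finset.card_le_card (Finset.subset_insert _ _)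
      have := S.F_card (hA (hCA hGC))
      omega
    have hHM : H ∈ S.Mfin := S.mem_Mfin.mpr ⟨hHK, hHcard⟩
    by_cases hHF : H = F
    · -- G' = pface F, s = top F
      have hG'F : G' ⊆ F := hHF ▸ Finset.subset_insert _ _
      have hFsG : F \ G' = {s} := by
        apply Finset.Subset.antisymm _ (by simp [Finset.mem_sdiff, hsF, hsG'])
        intro x hx
        rw [Finset.mem_sdiff] at hx
        rw [Finset.mem_singleton]
        by_contra hxs
        have : x ∈ H := hHF ▸ hx.1
        rw [hH, Finset.mem_insert] at this
        tauto
      have hstop : s = S.top F := by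
        by_contra hc
        have htopH : S.top F ∈ H := by
          rw [hHF]
          exact S.top_mem (S.F_nonempty hF)
        rw [hH, Finset.mem_insert] at htopH
        rcases htopH with h | h
        · exact hc h.symm
        · -- top ∈ G': use alt G' F prefix structure
          rcases S.alt_structure hG'V (S.F_subset_V hF) (hlt G' (hCA hGC)) with ⟨_, hpre⟩ | ⟨d, hdG, hdF, _⟩
          · have h1 := hpre (S.top F) h s hsF hsG'
            have h2 := S.le_top (S.F_nonempty hF) hsF
            omega
          · exact hdF (hG'F hdG)
      have hGp : G' = S.pface F := by
        rw [pface, ← hstop]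
        apply Finset.Subset.antisymm
        · intro x hx
          rw [Finset.mem_erase]
          exact ⟨fun h => hsG' (h ▸ hx), hG'F hx⟩
        · intro x hx
          rw [Finset.mem_erase] at hx
          by_contra hc
          have : x ∈ F \ G' := Finset.mem_sdiff.mpr ⟨hx.2, hc⟩
          rw [hFsG, Finset.mem_singleton] at this
          exact hx.1 this
      constructor
      · intro hcard
        -- card G' ≥ 2 but pface has card 1 : contradiction
        have h1 := S.F_card (hA (hCA hGC))
        rw [hGp, S.pface_card (S.F_nonempty hF), hcard] at h1
        omega
      · intro _
        exact ⟨hGp ▸ hGC, hstop ▸ hsT⟩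
    · -- H ≠ F : derive a contradiction
      exfalso
      have haltHF : S.alt H F := by
        rcases S.alt_structure hG'V (S.F_subset_V hF) (hlt G' (hCA hGC)) with ⟨hss, hpre⟩ | ⟨d, hdG, hdF, hag⟩
        · -- prefix case
          apply S.alt_of_prefix hHV (S.F_subset_V hF)
          · rw [Finset.ssubset_iff_subset_ne]
            exact ⟨Finset.insert_subset hsF hss.subset, hHF⟩
          · intro x hx y hy hyH
            have hyG : y ∉ G' := fun h => hyH (Finset.mem_insert_of_mem h)
            have hys : y ≠ s := fun h => hyH (h ▸ Finset.mem_insert_self _ _)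
            rw [hH, Finset.mem_insert] at hx
            rcases hx with rfl | hx
            · have h1 := hsmin y (Finset.mem_sdiff.mpr ⟨hy, hyG⟩)
              have h2 : S.ι y ≠ S.ι x := fun h =>
                hys (S.hι (by exact_mod_cast S.F_subset_V hF hy) (by exact_mod_cast hsV) h)
              omega
            · exact hpre x hx y hy hyG
        · -- diff case
          have hds : S.ι d < S.ι s := by
            have hdV : d ∈ S.V := hG'V hdG
            rcases lt_trichotomy (S.ι s) (S.ι d) with h | h | h
            · exact absurd ((hag s hsV h).mpr hsF) hsG'
            · exact absurd (S.hι (by exact_mod_cast hsV) (by exact_mod_cast hdV) h ▸ hdG) hsG'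
            · exact h
          apply S.alt_of_diff hHV (S.F_subset_V hF) (Finset.mem_insert_of_mem hdG) hdF
          · intro x hx hxd
            rw [hH, Finset.mem_insert]
            constructor
            · rintro (rfl | h)
              · omega
              · exact (hag x hx hxd).mp h
            · intro h
              exact Or.inr ((hag x hx hxd).mpr h)
          · exact ⟨s, hsF, hds⟩
      have hHA : H ∈ A := hmin H hHM haltHF
      apply hcond H hHA
      intro x hx
      rw [hH, Finset.mem_insert] at hx
      rcases hx with rfl | hx
      · exact Finset.mem_union_left _ hsT
      · refine Finset.mem_union_right _ (subset_UB hGC (fun hc => ?_) hx)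
        exact hsG' (hc (Finset.mem_insert_self _ _))
  · -- filter empty: F ⊆ T
    have hUB : UB C F = ∅ := by
      rw [Finset.not_nonempty_iff_eq_empty] at hP
      rw [UB, hP, Finset.sup_empty]
      rfl
    rw [hUB, Finset.union_empty] at hsub
    constructor
    · intro _; exact hsub
    · intro hcard
      exfalso
      have hpA : S.pface F ∈ A := S.pface_mem_A hmin hF hcard
      apply hcond _ hpA
      exact ((S.pface_subset F).trans hsub).trans Finset.subset_union_left

/-- **Lemma B**: comparability with the chain, given that the edge is present. -/
theorem lemB (hA : A ⊆ S.Mfin) (hF : F ∈ S.Mfin) (hFA : F ∉ A)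
    (hlt : ∀ H ∈ A, S.alt H F) (hmin : ∀ H ∈ S.Mfin, S.alt H F → H ∈ A)
    {T₀ : Finset α} {C₀ : Finset (Finset α)} (hrep : S.goodRep A T₀ C₀)
    (hcase : (F.card = 2 ∧ F ⊆ T₀) ∨ (F.card ≠ 2 ∧ S.pface F ∈ C₀ ∧ S.top F ∈ T₀))
    {G : Finset α} (hG : G ∈ C₀) : F ⊆ G ∨ G ⊆ S.pface F := by
  obtain ⟨hTV, hCA, hchain, hK, hcond⟩ := hrep
  by_cases hFG : F ⊆ G
  · exact Or.inl hFG
  by_cases hGF : G ⊆ F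
  · right
    exact S.mem_A_subset_pface hlt hA hF hFA (hCA hG) hGF
  -- incomparable: find F \ G inside T₀, then contradiction
  have hGV : G ⊆ S.V := S.Mfin_subset_V (hA (hCA hG))
  have hsdT : ∃ z, z ∈ F ∧ z ∉ G ∧ z ∈ T₀ := by
    rcases hcase with ⟨hcard, hFT⟩ | ⟨hcard, hpC, htT⟩
    · obtain ⟨z, hz⟩ := Finset.sdiff_nonempty.mpr hFG
      rw [Finset.mem_sdiff] at hz
      exact ⟨z, hz.1, hz.2, hFT hz.1⟩
    · -- chain: G vs pface F
      rcases eq_or_ne G (S.pface F) with rfl | hne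
      · exact absurd (S.pface_subset F) hGF
      rcases hchain (Finset.mem_coe.mpr hG) (Finset.mem_coe.mpr hpC) hne with h | h
      · -- G ⊆ pface F : contradicts ¬ G ⊆ F
        exact absurd (h.trans (S.pface_subset F)) hGF
      · -- pface F ⊆ G : F \ G = {top F}
        refine ⟨S.top F, S.top_mem (S.F_nonempty hF), ?_, htT⟩
        intro hc
        apply hFG
        rw [← S.insert_top_pface (S.F_nonempty hF)]
        exact Finset.insert_subset hc h
  obtain ⟨z, hzF, hzG, hzT⟩ := hsdT
  have hzV : z ∈ S.V := S.F_subset_V hF hzF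
  -- alt G F structure: must be diff case
  rcases S.alt_structure hGV (S.F_subset_V hF) (hlt G (hCA hG)) with ⟨hss, _⟩ | ⟨d, hdG, hdF, hag⟩
  · exact absurd hss.subset hGF
  have hdV : d ∈ S.V := hGV hdG
  have hdz : S.ι d < S.ι z := by
    rcases lt_trichotomy (S.ι z) (S.ι d) with h | h | h
    · exact absurd ((hag z hzV h).mpr hzF) hzG
    · exact absurd ((S.hι (by exact_mod_cast hzV) (by exact_mod_cast hdV) h) ▸ hzF) (by rwa [S.hι (by exact_mod_cast hzV) (by exact_mod_cast hdV) h] at hzG)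
    · exact h
  set H : Finset α := insert z G with hHdef
  have hHV : H ⊆ S.V := Finset.insert_subset hzV hGV
  have hHK : H ∈ S.K := by
    apply S.Δ.down_closed _ hK
    · exact Finset.insert_subset (Finset.mem_union_left _ hzT)
        ((chain_subset_sup hG).trans Finset.subset_union_right)
    · exact Finset.insert_nonempty _ _
  have hHM : H ∈ S.Mfin := by
    rw [mem_Mfin]
    refine ⟨hHK, ?_⟩
    have h1 : G.card ≤ H.card := Finset.card_le_card (Finset.subset_insert _ _)
    have := S.F_card (hA (hCA hG))
    omega
  have haltHF : S.alt H F := by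
    apply S.alt_of_diff hHV (S.F_subset_V hF) (Finset.mem_insert_of_mem hdG) hdF
    · intro x hx hxd
      rw [hHdef, Finset.mem_insert]
      constructor
      · rintro (rfl | h)
        · omega
        · exact (hag x hx hxd).mp h
      · intro h
        exact Or.inr ((hag x hx hxd).mpr h)
    · exact ⟨z, hzF, hdz⟩
  have hHA : H ∈ A := hmin H hHM haltHF
  exfalso
  apply hcond H hHA
  intro x hx
  rw [hHdef, Finset.mem_insert] at hx
  rcases hx with rfl | hx
  · exact Finset.mem_union_left _ hzT
  · refine Finset.mem_union_right _ (subset_UB hG (fun hc => ?_) hx)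
    exact hzG (hc (Finset.mem_insert_self _ _))

end Step

end Subdiv
/-! ### The step theorem -/

namespace Subdiv

set_option linter.unusedSectionVars false
set_option maxHeartbeats 1000000

variable {α : Type*} [DecidableEq α] [Nonempty α] (S : Subdiv α)

section Step2

variable {A : Finset (Finset α)} {F : Finset α}

theorem rep_mem_V {T : Finset α} {C : Finset (Finset α)} (hT : T ⊆ S.V) {x : α}
    (hx : x ∈ S.V) : x ∈ T ∪ C.image S.w ↔ x ∈ T := by
  constructor
  · intro h
    rcases Finset.mem_union.mp h with h | h
    · exact h
    · obtain ⟨G, _, rfl⟩ := Finset.mem_image.mp h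
      exact absurd hx (S.hwV G)
  · exact fun h => Finset.mem_union_left _ h

theorem rep_mem_w {T : Finset α} {C : Finset (Finset α)} (hT : T ⊆ S.V)
    (hC : ∀ G ∈ C, G ⊆ S.V) {G₀ : Finset α} (hG₀ : G₀ ⊆ S.V) :
    S.w G₀ ∈ T ∪ C.image S.w ↔ G₀ ∈ C := by
  constructor
  · intro h
    rcases Finset.mem_union.mp h with h | h
    · exact absurd (hT h) (S.hwV G₀)
    · obtain ⟨G, hG, he⟩ := Finset.mem_image.mp h
      rwa [← S.hwinj _ _ (hC G hG) hG₀ he]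
  · exact fun h => Finset.mem_union_right _ (Finset.mem_image_of_mem _ h)

theorem top_mem_V (hF : F ∈ S.Mfin) : S.top F ∈ S.V :=
  S.F_subset_V hF (S.top_mem (S.F_nonempty hF))

theorem pface_subset_V (hF : F ∈ S.Mfin) : S.pface F ⊆ S.V :=
  (S.pface_subset F).trans (S.F_subset_V hF)

theorem mem_edge_V (hF : F ∈ S.Mfin) {x : α} (hx : x ∈ S.V) :
    x ∈ S.edge F ↔ (x ∈ F ∧ (F.card = 2 ∨ x = S.top F)) := by
  rw [edge]
  split
  · rename_i h
    simp [h]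
  · rename_i h
    simp only [Finset.mem_insert, Finset.mem_singleton]
    constructor
    · rintro (rfl | rfl)
      · exact absurd hx (S.hwV _)
      · exact ⟨S.top_mem (S.F_nonempty hF), Or.inr rfl⟩
    · rintro ⟨_, (hc | rfl)⟩
      · exact absurd hc h
      · exact Or.inr rfl

theorem mem_edge_w (hF : F ∈ S.Mfin) {G : Finset α} (hG : G ⊆ S.V) :
    S.w G ∈ S.edge F ↔ (F.card ≠ 2 ∧ G = S.pface F) := by
  rw [edge]
  split
  · rename_i h
    simp only [h, ne_eq, not_true_eq_false, false_and, iff_false]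
    intro hc
    exact S.hwV G (S.F_subset_V hF hc)
  · rename_i h
    simp only [Finset.mem_insert, Finset.mem_singleton, h, ne_eq, not_false_eq_true, true_and]
    constructor
    · rintro (he | he)
      · exact S.hwinj _ _ hG (S.pface_subset_V hF) he
      · exact absurd (he ▸ S.top_mem_V hF) (S.hwV G)
    · rintro rfl
      exact Or.inl rfl

theorem wF_not_mem_edge (hF : F ∈ S.Mfin) : S.w F ∉ S.edge F := by
  intro hc
  rw [mem_edge_w S hF (S.F_subset_V hF)] at hc
  exact (S.pface_ssubset (S.F_nonempty hF)).ne hc.2.symm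

theorem top_mem_edge (hF : F ∈ S.Mfin) (hcard : F.card ≠ 2) : S.top F ∈ S.edge F := by
  rw [mem_edge_V S hF (S.top_mem_V hF)]
  exact ⟨S.top_mem (S.F_nonempty hF), Or.inr rfl⟩

theorem wpf_mem_edge (hF : F ∈ S.Mfin) (hcard : F.card ≠ 2) :
    S.w (S.pface F) ∈ S.edge F := by
  rw [mem_edge_w S hF (S.pface_subset_V hF)]
  exact ⟨hcard, rfl⟩

theorem mem_F_iff (hF : F ∈ S.Mfin) {x : α} :
    x ∈ F ↔ (x = S.top F ∨ x ∈ S.pface F) := by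
  conv_lhs => rw [← S.insert_top_pface (S.F_nonempty hF)]
  simp [Finset.mem_insert]

theorem edge_eq_two (hcard : F.card = 2) : S.edge F = F := by rw [edge, if_pos hcard]

theorem edge_eq_big (hcard : F.card ≠ 2) : S.edge F = {S.w (S.pface F), S.top F} := by
  rw [edge, if_neg hcard]

/-- if the edge is contained in a face of `Phi (insert F A)`, the defining condition
for `H = F` is violated -/
theorem edge_not_subset (hA : A ⊆ S.Mfin) (hF : F ∈ S.Mfin) (hFA : F ∉ A)
    {T : Finset α} {C : Finset (Finset α)} (hrep : S.goodRep (insert F A) T C)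
    (hsub : S.edge F ⊆ T ∪ C.image S.w) : False := by
  obtain ⟨hTV, hCA, hchain, hK, hcond⟩ := hrep
  have hCV : ∀ G ∈ C, G ⊆ S.V := by
    intro G hG
    rcases Finset.mem_insert.mp (hCA hG) with rfl | h
    · exact S.F_subset_V hF
    · exact S.Mfin_subset_V (hA h)
  apply hcond F (Finset.mem_insert_self _ _)
  by_cases hcard : F.card = 2
  · intro x hx
    have hxe : x ∈ S.edge F := by
      rw [mem_edge_V S hF (S.F_subset_V hF hx)]
      exact ⟨hx, Or.inl hcard⟩
    exact Finset.mem_union_left _ ((S.rep_mem_V hTV (S.F_subset_V hF hx)).mp (hsub hxe))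
  · have hpC : S.pface F ∈ C :=
      (S.rep_mem_w hTV hCV (S.pface_subset_V hF)).mp (hsub (S.wpf_mem_edge hF hcard))
    have htT : S.top F ∈ T :=
      (S.rep_mem_V hTV (S.top_mem_V hF)).mp (hsub (S.top_mem_edge hF hcard))
    intro x hx
    by_cases hxt : x = S.top F
    · exact Finset.mem_union_left _ (hxt ▸ htT)
    · have hxp : x ∈ S.pface F := Finset.mem_erase.mpr ⟨hxt, hx⟩
      refine Finset.mem_union_right _ (subset_UB hpC ?_ hxp)
      intro hc
      exact (S.pface_ssubset (S.F_nonempty hF)).not_subset hc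

/-- RHS ⊆ LHS of the step theorem -/
theorem step_rev (hA : A ⊆ S.Mfin) (hF : F ∈ S.Mfin) (hFA : F ∉ A)
    (hlt : ∀ H ∈ A, S.alt H F) (hmin : ∀ H ∈ S.Mfin, S.alt H F → H ∈ A) :
    S.Phi (insert F A) ⊆ stellarS (S.Phi A) (S.edge F) (S.w F) := by
  rintro X ⟨hXne, T, C, hrep, rfl⟩
  obtain ⟨hTV, hCA, hchain, hK, hcond⟩ := hrep
  have hCV : ∀ G ∈ C, G ⊆ S.V := by
    intro G hG
    rcases Finset.mem_insert.mp (hCA hG) with rfl | h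
    · exact S.F_subset_V hF
    · exact S.Mfin_subset_V (hA h)
  have hnotsub : ¬ S.edge F ⊆ T ∪ C.image S.w :=
    fun hc => S.edge_not_subset hA hF hFA ⟨hTV, hCA, hchain, hK, hcond⟩ hc
  by_cases hFC : F ∈ C
  case neg =>
    -- X is an old face not containing the edge
    left
    have hCA' : ↑C ⊆ (A : Set (Finset α)) := by
      intro G hG
      rcases Finset.mem_insert.mp (hCA hG) with rfl | h
      · exact absurd hG hFC
      · exact h
    refine ⟨⟨hXne, T, C, ⟨hTV, fun G hG => hCA' hG, hchain, hK, ?_⟩, rfl⟩, hnotsub⟩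
    intro H hH
    exact hcond H (Finset.mem_insert_of_mem hH)
  case pos =>
    -- X is a new face
    right
    have hwX : S.w F ∈ T ∪ C.image S.w :=
      Finset.mem_union_right _ (Finset.mem_image_of_mem _ hFC)
    set X := T ∪ C.image S.w with hX
    set S' : Finset α := X ∩ S.edge F with hS'
    set T' : Finset α := X \ insert (S.w F) (S.edge F) with hT'
    have hXeq : X = insert (S.w F) (S' ∪ T') := by
      ext x
      simp only [hS', hT', Finset.mem_insert, Finset.mem_union, Finset.mem_inter,
        Finset.mem_sdiff, Finset.mem_insert]
      constructor
      · intro hx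
        by_cases h1 : x = S.w F
        · exact Or.inl h1
        · by_cases h2 : x ∈ S.edge F
          · exact Or.inr (Or.inl ⟨hx, h2⟩)
          · exact Or.inr (Or.inr ⟨hx, by tauto⟩)
      · rintro (rfl | ⟨hx, _⟩ | ⟨hx, _⟩) <;> first | exact hwX | exact hx
    have hS'e : S' ⊂ S.edge F := by
      rw [Finset.ssubset_iff_subset_ne]
      refine ⟨Finset.inter_subset_right, ?_⟩
      intro hc
      exact hnotsub (by rw [← hc]; exact Finset.inter_subset_left)
    by_cases hT'e : T' = ∅
    · exact ⟨S', T', hS'e, Or.inr hT'e, hXeq⟩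
    · refine ⟨S', T', hS'e, Or.inl ⟨Finset.nonempty_iff_ne_empty.mpr hT'e, ?_, ?_⟩, hXeq⟩
      · -- T' ∩ edge = ∅
        rw [hT']
        rw [Finset.eq_empty_iff_forall_notMem]
        intro x hx
        rw [Finset.mem_inter, Finset.mem_sdiff, Finset.mem_insert] at hx
        exact hx.1.2 (Or.inr hx.2)
      · -- T' ∪ edge ∈ Phi A
        show T' ∪ S.edge F ∈ S.Phi A
        have hEA : C.erase F ⊆ A := by
          intro G hG
          rw [Finset.mem_erase] at hG
          rcases Finset.mem_insert.mp (hCA hG.2) with h | h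
          · exact absurd h hG.1
          · exact h
        have hEV : ∀ G ∈ C.erase F, G ⊆ S.V := fun G hG => hCV G (Finset.erase_subset _ _ hG)
        have hchainE : IsChain (· ⊆ ·) ((C.erase F : Finset (Finset α)) : Set (Finset α)) :=
          hchain.mono (by exact_mod_cast Finset.erase_subset _ _)
        have hCsup : C.sup id = F ∪ (C.erase F).sup id := by
          conv_lhs => rw [← Finset.insert_erase hFC]
          rw [Finset.sup_insert]
          rfl
        have hne' : (T' ∪ S.edge F).Nonempty :=
          Finset.Nonempty.mono Finset.subset_union_right
            (Finset.card_pos.mp (by rw [S.edge_card hF]; omega))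
        have hsubA : ∀ H ∈ A, H ⊆ F → H ⊆ S.pface F := fun H hH hHF =>
          S.mem_A_subset_pface hlt hA hF hFA hH hHF
        by_cases hcard : F.card = 2
        · -- edge = F
          have hedge : S.edge F = F := S.edge_eq_two hcard
          refine ⟨hne', T ∪ F, C.erase F, ⟨?_, hEA, hchainE, ?_, ?_⟩, ?_⟩
          · exact Finset.union_subset hTV (S.F_subset_V hF)
          · have : (T ∪ F) ∪ (C.erase F).sup id = T ∪ C.sup id := by
              rw [hCsup]
              ext x
              simp only [Finset.mem_union]
              tauto
            rw [this]
            exact hK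
          · intro H hH hsub
            have hHF : ¬ H ⊆ F := by
              intro hc
              have h1 := S.F_card (hA hH)
              have h2 : H = F := Finset.eq_of_subset_of_card_le hc (by rw [hcard]; exact h1)
              exact hFA (h2 ▸ hH)
            apply hcond H (Finset.mem_insert_of_mem hH)
            intro x hx
            rcases Finset.mem_union.mp (hsub hx) with h | h
            · rcases Finset.mem_union.mp h with h | h
              · exact Finset.mem_union_left _ h
              · exact Finset.mem_union_right _ (subset_UB hFC hHF h)
            · exact Finset.mem_union_right _ (UB_mono (Finset.erase_subset _ _) H h)
          · -- identity
            rw [hedge]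
            ext x
            constructor
            · intro hx
              rcases Finset.mem_union.mp hx with h | h
              · rw [hT', Finset.mem_sdiff] at h
                obtain ⟨hxX, hxni⟩ := h
                rw [hX] at hxX
                rw [Finset.mem_insert] at hxni
                push_neg at hxni
                rcases Finset.mem_union.mp hxX with h | h
                · exact Finset.mem_union_left _ (Finset.mem_union_left _ h)
                · obtain ⟨G, hG, rfl⟩ := Finset.mem_image.mp h
                  have hGF : G ≠ F := fun hc => hxni.1 (by rw [hc])
                  exact Finset.mem_union_right _
                    (Finset.mem_image_of_mem _ (Finset.mem_erase.mpr ⟨hGF, hG⟩))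
              · exact Finset.mem_union_left _ (Finset.mem_union_right _ h)
            · intro hx
              rcases Finset.mem_union.mp hx with h | h
              · rcases Finset.mem_union.mp h with h | h
                · by_cases hxF : x ∈ F
                  · exact Finset.mem_union_right _ hxF
                  · refine Finset.mem_union_left _ ?_
                    rw [hT', Finset.mem_sdiff, hX]
                    refine ⟨Finset.mem_union_left _ h, ?_⟩
                    rw [Finset.mem_insert]
                    push_neg
                    refine ⟨fun hc => S.hwV F (hc ▸ hTV h), fun hc => hxF (by rwa [hedge] at hc)⟩
                · exact Finset.mem_union_right _ h
              · obtain ⟨G, hG, rfl⟩ := Finset.mem_image.mp h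
                rw [Finset.mem_erase] at hG
                refine Finset.mem_union_left _ ?_
                rw [hT', Finset.mem_sdiff, hX]
                refine ⟨Finset.mem_union_right _ (Finset.mem_image_of_mem _ hG.2), ?_⟩
                rw [Finset.mem_insert]
                push_neg
                constructor
                · intro hc
                  exact hG.1 (S.hwinj _ _ (hCV G hG.2) (S.F_subset_V hF) hc)
                · rw [hedge]
                  intro hc
                  exact S.hwV G (S.F_subset_V hF hc)
        · -- edge = {w pf, top}        · -- edge = {w pf, top}
          have hpA : S.pface F ∈ A := S.pface_mem_A hmin hF hcard
          refine ⟨hne', T ∪ {S.top F}, insert (S.pface F) (C.erase F), ⟨?_, ?_, ?_, ?_, ?_⟩, ?_⟩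
          · exact Finset.union_subset hTV (by simpa using S.top_mem_V hF)
          · intro G hG
            rcases Finset.mem_insert.mp hG with rfl | h
            · exact hpA
            · exact hEA h
          · -- chain
            rw [Finset.coe_insert]
            apply hchainE.insert
            intro G hG hne
            rw [Finset.mem_coe, Finset.mem_erase] at hG
            rcases hchain (Finset.mem_coe.mpr hG.2) (Finset.mem_coe.mpr hFC) hG.1 with h | h
            · exact Or.inr (hsubA G (hEA (Finset.mem_erase.mpr hG)) h)
            · exact Or.inl ((S.pface_subset F).trans h)
          · -- K membership
            have : (T ∪ {S.top F}) ∪ (insert (S.pface F) (C.erase F)).sup id = T ∪ C.sup id := by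
              rw [hCsup, Finset.sup_insert]
              show (T ∪ {S.top F}) ∪ (S.pface F ∪ _) = _
              ext x
              simp only [Finset.mem_union, Finset.mem_singleton, S.mem_F_iff hF (x := x)]
              tauto
            rw [this]
            exact hK
          · -- condition
            intro H hH hsub
            apply hcond H (Finset.mem_insert_of_mem hH)
            by_cases hHF : H ⊆ F
            · have hHp : H ⊆ S.pface F := hsubA H hH hHF
              have hUB : UB (insert (S.pface F) (C.erase F)) H = UB (C.erase F) H := by
                rw [UB, UB, Finset.filter_insert, if_neg (by simpa using hHp)]
              rw [hUB] at hsub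
              intro x hx
              rcases Finset.mem_union.mp (hsub hx) with h | h
              · rcases Finset.mem_union.mp h with h | h
                · exact Finset.mem_union_left _ h
                · rw [Finset.mem_singleton] at h
                  exact absurd (hHp hx) (h ▸ S.top_not_mem_pface F)
              · exact Finset.mem_union_right _ (UB_mono (Finset.erase_subset _ _) H h)
            · have hFUB : F ⊆ UB C H := subset_UB hFC hHF
              intro x hx
              rcases Finset.mem_union.mp (hsub hx) with h | h
              · rcases Finset.mem_union.mp h with h | h
                · exact Finset.mem_union_left _ h
                · rw [Finset.mem_singleton] at h
                  exact Finset.mem_union_right _ (hFUB (h ▸ S.top_mem (S.F_nonempty hF)))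
              · -- x ∈ UB (insert pf erase) H
                rw [UB, Finset.filter_insert] at h
                refine Finset.mem_union_right _ ?_
                by_cases hHp : ¬ H ⊆ S.pface F
                · rw [if_pos hHp, Finset.sup_insert] at h
                  rcases Finset.mem_union.mp h with h | h
                  · exact hFUB (S.pface_subset F h)
                  · exact UB_mono (Finset.erase_subset _ _) H h
                · rw [if_neg hHp] at h
                  exact UB_mono (Finset.erase_subset _ _) H h
          · -- identity
            have hedge : S.edge F = {S.w (S.pface F), S.top F} := S.edge_eq_big hcard
            ext x
            constructor
            · intro hx
              rcases Finset.mem_union.mp hx with h | h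
              · rw [hT', Finset.mem_sdiff] at h
                obtain ⟨hxX, hxni⟩ := h
                rw [hX] at hxX
                rw [Finset.mem_insert] at hxni
                push_neg at hxni
                rcases Finset.mem_union.mp hxX with h | h
                · exact Finset.mem_union_left _ (Finset.mem_union_left _ h)
                · obtain ⟨G, hG, rfl⟩ := Finset.mem_image.mp h
                  have hGF : G ≠ F := fun hc => hxni.1 (by rw [hc])
                  exact Finset.mem_union_right _ (Finset.mem_image_of_mem _
                    (Finset.mem_insert_of_mem (Finset.mem_erase.mpr ⟨hGF, hG⟩)))
              · rw [hedge] at h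
                rcases Finset.mem_insert.mp h with rfl | h
                · exact Finset.mem_union_right _
                    (Finset.mem_image_of_mem _ (Finset.mem_insert_self _ _))
                · rw [Finset.mem_singleton] at h
                  subst h
                  exact Finset.mem_union_left _
                    (Finset.mem_union_right _ (Finset.mem_singleton_self _))
            · intro hx
              rcases Finset.mem_union.mp hx with h | h
              · rcases Finset.mem_union.mp h with h | h
                · by_cases hxe : x ∈ S.edge F
                  · exact Finset.mem_union_right _ hxe
                  · refine Finset.mem_union_left _ ?_
                    rw [hT', Finset.mem_sdiff, hX]
                    refine ⟨Finset.mem_union_left _ h, ?_⟩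
                    rw [Finset.mem_insert]
                    push_neg
                    exact ⟨fun hc => S.hwV F (hc ▸ hTV h), hxe⟩
                · rw [Finset.mem_singleton] at h
                  subst h
                  refine Finset.mem_union_right _ ?_
                  rw [hedge]
                  exact Finset.mem_insert_of_mem (Finset.mem_singleton_self _)
              · obtain ⟨G, hG, rfl⟩ := Finset.mem_image.mp h
                rcases Finset.mem_insert.mp hG with rfl | hG'
                · refine Finset.mem_union_right _ ?_
                  rw [hedge]
                  exact Finset.mem_insert_self _ _
                · rw [Finset.mem_erase] at hG'
                  by_cases hxe : S.w G ∈ S.edge F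
                  · exact Finset.mem_union_right _ hxe
                  · refine Finset.mem_union_left _ ?_
                    rw [hT', Finset.mem_sdiff, hX]
                    refine ⟨Finset.mem_union_right _ (Finset.mem_image_of_mem _ hG'.2), ?_⟩
                    rw [Finset.mem_insert]
                    push_neg
                    exact ⟨fun hc => hG'.1 (S.hwinj _ _ (hCV G hG'.2) (S.F_subset_V hF) hc), hxe⟩

end Step2

end Subdiv
/-! ### The step theorem, forward inclusion -/

section helpers
variable {α : Type*} [DecidableEq α]

theorem UB_le {C : Finset (Finset α)} {H B : Finset α}
    (h : ∀ G ∈ C, ¬ H ⊆ G → G ⊆ B) : UB C H ⊆ B := by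
  have : (C.filter (fun G => ¬ H ⊆ G)).sup id ≤ B := by
    apply Finset.sup_le
    intro G hG
    rw [Finset.mem_filter] at hG
    exact_mod_cast h G hG.1 hG.2
  exact_mod_cast this

theorem sup_subset {C : Finset (Finset α)} {B : Finset α}
    (h : ∀ G ∈ C, G ⊆ B) : C.sup id ⊆ B := by
  have : C.sup id ≤ B := by
    apply Finset.sup_le
    intro G hG
    exact_mod_cast h G hG
  exact_mod_cast this

theorem UB_filter_empty {C : Finset (Finset α)} {H : Finset α}
    (h : ∀ G ∈ C, H ⊆ G) : UB C H = ∅ := by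
  rw [UB, Finset.filter_false_of_mem (fun G hG => by simpa using h G hG)]
  rfl

end helpers

namespace Subdiv

set_option linter.unusedSectionVars false
set_option maxHeartbeats 1000000

variable {α : Type*} [DecidableEq α] [Nonempty α] (S : Subdiv α)

section Step3

variable {A : Finset (Finset α)} {F : Finset α}

theorem mem_edge_cases (hF : F ∈ S.Mfin) {x : α} (hx : x ∈ S.edge F) :
    x ∈ S.V ∨ (F.card ≠ 2 ∧ x = S.w (S.pface F)) := by
  by_cases hcard : F.card = 2
  · rw [S.edge_eq_two hcard] at hx
    exact Or.inl (S.F_subset_V hF hx)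
  · rw [S.edge_eq_big hcard] at hx
    rcases Finset.mem_insert.mp hx with rfl | hx
    · exact Or.inr ⟨hcard, rfl⟩
    · rw [Finset.mem_singleton] at hx
      exact Or.inl (hx ▸ S.top_mem_V hF)

theorem step_fwd (hA : A ⊆ S.Mfin) (hF : F ∈ S.Mfin) (hFA : F ∉ A)
    (hlt : ∀ H ∈ A, S.alt H F) (hmin : ∀ H ∈ S.Mfin, S.alt H F → H ∈ A) :
    stellarS (S.Phi A) (S.edge F) (S.w F) ⊆ S.Phi (insert F A) := by
  rintro X (⟨hX, hne⟩ | ⟨S', T', hS'e, hT'lk, rfl⟩)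
  · -- old face not containing the edge
    obtain ⟨hXne, T, C, ⟨hTV, hCA, hchain, hK, hcond⟩, rfl⟩ := hX
    refine ⟨hXne, T, C, ⟨hTV, fun G hG => Finset.mem_insert_of_mem (hCA hG), hchain, hK, ?_⟩, rfl⟩
    have hCV : ∀ G ∈ C, G ⊆ S.V := fun G hG => S.Mfin_subset_V (hA (hCA hG))
    intro H hH
    rcases Finset.mem_insert.mp hH with rfl | hH'
    · -- H = F : use lemA
      intro hsub
      apply hne
      have := S.lemA hA hF hFA hlt hmin ⟨hTV, hCA, hchain, hK, hcond⟩ hsub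
      by_cases hcard : H.card = 2
      · rw [S.edge_eq_two hcard]
        exact (this.1 hcard).trans Finset.subset_union_left
      · obtain ⟨hpC, htT⟩ := this.2 hcard
        rw [S.edge_eq_big hcard]
        intro x hx
        rcases Finset.mem_insert.mp hx with rfl | hx
        · exact Finset.mem_union_right _ (Finset.mem_image_of_mem _ hpC)
        · rw [Finset.mem_singleton] at hx
          exact Finset.mem_union_left _ (hx ▸ htT)
    · exact hcond H hH'
  · -- new face
    have hwe : S.w F ∉ S.edge F := S.wF_not_mem_edge hF
    -- establish Y := T' ∪ edge ∈ Phi A and T' ∩ edge = ∅ in both cases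
    have hYlk : T' ∩ S.edge F = ∅ ∧ T' ∪ S.edge F ∈ S.Phi A := by
      rcases hT'lk with ⟨_, h2, h3⟩ | rfl
      · exact ⟨h2, h3⟩
      · exact ⟨by simp, by simpa using S.edge_mem_Phi hA hF hFA hlt hmin⟩
    obtain ⟨hT'e, hY⟩ := hYlk
    obtain ⟨hYne, T₀, C₀, ⟨hT₀V, hC₀A, hchain₀, hK₀, hcond₀⟩, hYeq⟩ := hY
    have hC₀V : ∀ G ∈ C₀, G ⊆ S.V := fun G hG => S.Mfin_subset_V (hA (hC₀A hG))
    have heY : S.edge F ⊆ T₀ ∪ C₀.image S.w := hYeq ▸ Finset.subset_union_right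
    have hFC₀ : F ∉ C₀ := fun hc => hFA (hC₀A hc)
    -- the basic case facts
    have hcase : (F.card = 2 ∧ F ⊆ T₀) ∨
        (F.card ≠ 2 ∧ S.pface F ∈ C₀ ∧ S.top F ∈ T₀) := by
      by_cases hcard : F.card = 2
      · refine Or.inl ⟨hcard, fun x hx => ?_⟩
        have hxe : x ∈ S.edge F := by rw [S.edge_eq_two hcard]; exact hx
        exact (S.rep_mem_V hT₀V (S.F_subset_V hF hx)).mp (heY hxe)
      · refine Or.inr ⟨hcard, ?_, ?_⟩
        · exact (S.rep_mem_w hT₀V hC₀V (S.pface_subset_V hF)).mp (heY (S.wpf_mem_edge hF hcard))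
        · exact (S.rep_mem_V hT₀V (S.top_mem_V hF)).mp (heY (S.top_mem_edge hF hcard))
    have hlemB : ∀ G ∈ C₀, F ⊆ G ∨ G ⊆ S.pface F := fun G hG =>
      S.lemB hA hF hFA hlt hmin ⟨hT₀V, hC₀A, hchain₀, hK₀, hcond₀⟩ hcase hG
    -- S' ∩ V ⊆ T₀
    have hS'T₀ : S' ∩ S.V ⊆ T₀ := by
      intro x hx
      rw [Finset.mem_inter] at hx
      have hxe : x ∈ S.edge F := hS'e.subset hx.1
      rw [S.mem_edge_V hF hx.2] at hxe
      rcases hcase with ⟨hcard, hFT⟩ | ⟨hcard, hpC, htT⟩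
      · exact hFT hxe.1
      · rcases hxe.2 with h | rfl
        · exact absurd h hcard
        · exact htT
    set X : Finset α := insert (S.w F) (S' ∪ T') with hXdef
    set TX : Finset α := (T₀ \ S.edge F) ∪ (S' ∩ S.V) with hTX
    set CX : Finset (Finset α) := insert F (C₀.filter (fun G => S.w G ∈ X)) with hCX
    have hwpfX : F.card ≠ 2 → (S.w (S.pface F) ∈ X ↔ S.w (S.pface F) ∈ S') := by
      intro hcard
      constructor
      · intro hx
        rcases Finset.mem_insert.mp hx with h | h
        · exact absurd (S.hwinj _ _ (S.pface_subset_V hF) (S.F_subset_V hF) h)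
            (S.pface_ssubset (S.F_nonempty hF)).ne
        · rcases Finset.mem_union.mp h with h | h
          · exact h
          · exfalso
            have : S.w (S.pface F) ∈ T' ∩ S.edge F :=
              Finset.mem_inter.mpr ⟨h, S.wpf_mem_edge hF hcard⟩
            rw [hT'e] at this
            exact absurd this (Finset.notMem_empty _)
      · intro hx
        exact Finset.mem_insert_of_mem (Finset.mem_union_left _ hx)
    -- the identity X = TX ∪ CX.image w
    have hXid : X = TX ∪ CX.image S.w := by
      ext x
      constructor
      · intro hx
        rcases Finset.mem_insert.mp hx with rfl | hx
        · exact Finset.mem_union_right _ (Finset.mem_image_of_mem _ (Finset.mem_insert_self _ _))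
        · rcases Finset.mem_union.mp hx with h | h
          · -- x ∈ S'
            rcases S.mem_edge_cases hF (hS'e.subset h) with hxV | ⟨hcard, rfl⟩
            · exact Finset.mem_union_left _
                (Finset.mem_union_right _ (Finset.mem_inter.mpr ⟨h, hxV⟩))
            · refine Finset.mem_union_right _ (Finset.mem_image_of_mem _
                (Finset.mem_insert_of_mem (Finset.mem_filter.mpr
                  ⟨?_, Finset.mem_insert_of_mem (Finset.mem_union_left _ h)⟩)))
              rcases hcase with ⟨hc, _⟩ | ⟨_, hpC, _⟩
              · exact absurd hc hcard
              · exact hpC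
          · -- x ∈ T'
            have hxY : x ∈ T₀ ∪ C₀.image S.w := hYeq ▸ Finset.mem_union_left _ h
            rcases Finset.mem_union.mp hxY with h' | h'
            · refine Finset.mem_union_left _ (Finset.mem_union_left _ ?_)
              rw [Finset.mem_sdiff]
              refine ⟨h', fun hc => ?_⟩
              have : x ∈ T' ∩ S.edge F := Finset.mem_inter.mpr ⟨h, hc⟩
              rw [hT'e] at this
              exact absurd this (Finset.notMem_empty _)
            · obtain ⟨G, hG, rfl⟩ := Finset.mem_image.mp h'
              refine Finset.mem_union_right _ (Finset.mem_image_of_mem _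
                (Finset.mem_insert_of_mem (Finset.mem_filter.mpr ⟨hG, ?_⟩)))
              exact Finset.mem_insert_of_mem (Finset.mem_union_right _ h)
      · intro hx
        rcases Finset.mem_union.mp hx with h | h
        · rcases Finset.mem_union.mp h with h | h
          · -- x ∈ T₀ \ edge : x ∈ T' since T₀ ⊆ Y
            rw [Finset.mem_sdiff] at h
            have hxY : x ∈ T' ∪ S.edge F := by
              rw [hYeq]
              exact Finset.mem_union_left _ h.1
            rcases Finset.mem_union.mp hxY with h' | h'
            · exact Finset.mem_insert_of_mem (Finset.mem_union_right _ h')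
            · exact absurd h' h.2
          · exact Finset.mem_insert_of_mem
              (Finset.mem_union_left _ (Finset.mem_inter.mp h).1)
        · obtain ⟨G, hG, rfl⟩ := Finset.mem_image.mp h
          rcases Finset.mem_insert.mp hG with rfl | hG'
          · exact Finset.mem_insert_self _ _
          · exact (Finset.mem_filter.mp hG').2
    -- now the goodRep conditions
    refine ⟨⟨S.w F, Finset.mem_insert_self _ _⟩, TX, CX, ⟨?_, ?_, ?_, ?_, ?_⟩, hXid⟩
    · -- TX ⊆ V
      exact Finset.union_subset ((Finset.sdiff_subset).trans hT₀V) Finset.inter_subset_right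
    · -- CX ⊆ insert F A
      intro G hG
      rcases Finset.mem_insert.mp hG with rfl | hG'
      · exact Finset.mem_insert_self _ _
      · exact Finset.mem_insert_of_mem (hC₀A ((Finset.filter_subset _ _) hG'))
    · -- chain
      rw [hCX, Finset.coe_insert]
      apply IsChain.insert (hchain₀.mono (by exact_mod_cast Finset.filter_subset _ _))
      intro G hG hne'
      rw [Finset.mem_coe] at hG
      rcases hlemB G ((Finset.filter_subset _ _) hG) with h | h
      · exact Or.inl h
      · exact Or.inr (h.trans (S.pface_subset F))
    · -- K membership
      apply S.Δ.down_closed _ hK₀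
      · apply Finset.union_subset
        · apply Finset.union_subset
          · exact (Finset.sdiff_subset).trans Finset.subset_union_left
          · exact hS'T₀.trans Finset.subset_union_left
        · apply sup_subset
          intro G hG
          rcases Finset.mem_insert.mp hG with rfl | hG'
          · -- F ⊆ T₀ ∪ C₀.sup
            rcases hcase with ⟨_, hFT⟩ | ⟨_, hpC, htT⟩
            · exact hFT.trans Finset.subset_union_left
            · intro y hy
              rcases (S.mem_F_iff hF).mp hy with rfl | hy'
              · exact Finset.mem_union_left _ htT
              · exact Finset.mem_union_right _ (chain_subset_sup hpC hy')
          · exact (chain_subset_sup ((Finset.filter_subset _ _) hG')).trans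
              Finset.subset_union_right
      · refine Finset.Nonempty.mono ?_ (S.F_nonempty hF)
        exact (chain_subset_sup (Finset.mem_insert_self _ _ : F ∈ CX)).trans
          Finset.subset_union_right
    · -- the condition
      intro H hH hsub
      rcases Finset.mem_insert.mp hH with rfl | hHA
      · -- H = F
        have htS' : S.top H ∈ S' := by
          have htF := S.top_mem (S.F_nonempty hF)
          have hte : S.top H ∈ S.edge H := by
            by_cases hcard : H.card = 2
            · rw [S.edge_eq_two hcard]; exact htF
            · exact S.top_mem_edge hF hcard
          have h1 := hsub htF
          rcases Finset.mem_union.mp h1 with h | h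
          · rcases Finset.mem_union.mp h with h | h
            · exact absurd hte (Finset.mem_sdiff.mp h).2
            · exact (Finset.mem_inter.mp h).1
          · -- top ∈ UB CX H ⊆ pface H : contradiction
            exfalso
            have hUBpf : UB CX H ⊆ S.pface H := by
              apply UB_le
              intro G hG hG2
              rcases Finset.mem_insert.mp hG with rfl | hG'
              · exact absurd Finset.Subset.rfl hG2
              · rcases hlemB G ((Finset.filter_subset _ _) hG') with h' | h'
                · exact absurd h' hG2
                · exact h'
            exact absurd (hUBpf h) (S.top_not_mem_pface H)
        by_cases hcard : H.card = 2
        · -- UB CX H = ∅ and H ⊆ S' : contradiction with S' ⊊ edge = H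
          have hUBe : UB CX H = ∅ := by
            apply UB_filter_empty
            intro G hG
            rcases Finset.mem_insert.mp hG with rfl | hG'
            · exact Finset.Subset.rfl
            · rcases hlemB G ((Finset.filter_subset _ _) hG') with h' | h'
              · exact h'
              · exfalso
                have h1 : 2 ≤ G.card := S.F_card (hA (hC₀A ((Finset.filter_subset _ _) hG')))
                have h2 : G.card ≤ (S.pface H).card := Finset.card_le_card h'
                rw [S.pface_card (S.F_nonempty hF), hcard] at h2
                omega
          rw [hUBe, Finset.union_empty] at hsub
          have hHS' : H ⊆ S' := by
            intro x hx
            rcases Finset.mem_union.mp (hsub hx) with h | h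
            · exfalso
              have hxe : x ∈ S.edge H := by rw [S.edge_eq_two hcard]; exact hx
              exact (Finset.mem_sdiff.mp h).2 hxe
            · exact (Finset.mem_inter.mp h).1
          apply hS'e.not_subset
          rw [S.edge_eq_two hcard]
          exact hHS'
        · -- card ≠ 2
          have hpA : S.pface H ∈ A := S.pface_mem_A hmin hF hcard
          have hwpfS' : S.w (S.pface H) ∉ S' := by
            intro hc
            apply hS'e.not_subset
            rw [S.edge_eq_big hcard]
            intro y hy
            rcases Finset.mem_insert.mp hy with rfl | hy'
            · exact hc
            · rw [Finset.mem_singleton] at hy'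
              exact hy' ▸ htS'
          have hpfCX : S.pface H ∉ CX := by
            intro hc
            rcases Finset.mem_insert.mp hc with h | h
            · exact (S.pface_ssubset (S.F_nonempty hF)).ne h
            · exact hwpfS' ((hwpfX hcard).mp (Finset.mem_filter.mp h).2)
          apply hcond₀ (S.pface H) hpA
          intro x hx
          have hxF : x ∈ H := S.pface_subset H hx
          rcases Finset.mem_union.mp (hsub hxF) with h | h
          · rcases Finset.mem_union.mp h with h | h
            · exact Finset.mem_union_left _ (Finset.mem_sdiff.mp h).1
            · exfalso
              have hxe := hS'e.subset (Finset.mem_inter.mp h).1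
              rw [S.mem_edge_V hF (Finset.mem_inter.mp h).2] at hxe
              rcases hxe.2 with h' | h'
              · exact hcard h'
              · exact absurd (h' ▸ hx) (S.top_not_mem_pface H)
          · refine Finset.mem_union_right _ ?_
            have hUBsub : UB CX H ⊆ UB C₀ (S.pface H) := by
              apply UB_le
              intro G hG hG2
              rcases Finset.mem_insert.mp hG with rfl | hG'
              · exact absurd Finset.Subset.rfl hG2
              · have hGC₀ := (Finset.filter_subset _ _) hG'
                have hGpf : G ⊆ S.pface H := by
                  rcases hlemB G hGC₀ with h' | h'
                  · exact absurd h' hG2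
                  · exact h'
                refine subset_UB hGC₀ ?_
                intro hc
                exact hpfCX ((Finset.Subset.antisymm hGpf hc) ▸ Finset.mem_insert_of_mem hG')
            exact hUBsub h
      · -- H ∈ A
        apply hcond₀ H hHA
        intro x hx
        rcases Finset.mem_union.mp (hsub hx) with h | h
        · rcases Finset.mem_union.mp h with h | h
          · exact Finset.mem_union_left _ (Finset.mem_sdiff.mp h).1
          · exact Finset.mem_union_left _ (hS'T₀ h)
        · have hsubUB : UB CX H ⊆ T₀ ∪ UB C₀ H := by
            apply UB_le
            intro G hG hG2
            rcases Finset.mem_insert.mp hG with rfl | hG'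
            · -- G = F
              rcases hcase with ⟨_, hFT⟩ | ⟨_, hpC, htT⟩
              · exact hFT.trans Finset.subset_union_left
              · intro y hy
                rcases (S.mem_F_iff hF).mp hy with rfl | hy'
                · exact Finset.mem_union_left _ htT
                · refine Finset.mem_union_right _ (subset_UB hpC ?_ hy')
                  intro hc
                  exact hG2 (hc.trans (S.pface_subset _))
            · exact (subset_UB ((Finset.filter_subset _ _) hG') hG2).trans
                Finset.subset_union_right
          exact hsubUB h

end Step3

end Subdiv
/-! ### The final complex is the barycentric subdivision -/

namespace Subdiv

set_option linter.unusedSectionVars false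
set_option maxHeartbeats 1000000

variable {α : Type*} [DecidableEq α] [Nonempty α] (S : Subdiv α)

/-- the isomorphism with the barycentric subdivision -/
noncomputable def bmap (x : α) : Finset α :=
  if h : ∃ G ∈ S.Mfin, S.w G = x then h.choose else {x}

theorem bmap_w {G : Finset α} (hG : G ∈ S.Mfin) : S.bmap (S.w G) = G := by
  rw [bmap, dif_pos ⟨G, hG, rfl⟩]
  have h : ∃ G' ∈ S.Mfin, S.w G' = S.w G := ⟨G, hG, rfl⟩
  obtain ⟨h1, h2⟩ := h.choose_spec
  exact S.hwinj _ _ (S.Mfin_subset_V h1) (S.Mfin_subset_V hG) h2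

theorem bmap_V {x : α} (hx : x ∈ S.V) : S.bmap x = {x} := by
  rw [bmap, dif_neg]
  rintro ⟨G, hG, rfl⟩
  exact S.hwV G hx

/-- structural facts about the final stage -/
theorem final_struct {T : Finset α} {C : Finset (Finset α)}
    (hrep : S.goodRep S.Mfin T C) :
    (∀ x ∈ T, ∀ y ∈ T, x = y) ∧ (∀ x ∈ T, ∀ G ∈ C, x ∈ G) := by
  obtain ⟨hTV, hCA, hchain, hK, hcond⟩ := hrep
  constructor
  · intro x hx y hy
    by_contra hne
    have hH : ({x, y} : Finset α) ∈ S.Mfin := by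
      rw [mem_Mfin]
      constructor
      · apply S.Δ.down_closed _ hK
        · intro z hz
          rcases Finset.mem_insert.mp hz with rfl | hz
          · exact Finset.mem_union_left _ hx
          · rw [Finset.mem_singleton] at hz
            exact Finset.mem_union_left _ (hz ▸ hy)
        · exact Finset.insert_nonempty _ _
      · rw [Finset.card_insert_of_notMem (by simpa using hne), Finset.card_singleton]
    apply hcond _ hH
    intro z hz
    rcases Finset.mem_insert.mp hz with rfl | hz
    · exact Finset.mem_union_left _ hx
    · rw [Finset.mem_singleton] at hz
      exact Finset.mem_union_left _ (hz ▸ hy)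
  · intro x hx G hG
    by_contra hxG
    have hH : insert x G ∈ S.Mfin := by
      rw [mem_Mfin]
      constructor
      · apply S.Δ.down_closed _ hK
        · exact Finset.insert_subset (Finset.mem_union_left _ hx)
            ((chain_subset_sup hG).trans Finset.subset_union_right)
        · exact Finset.insert_nonempty _ _
      · have h1 : 2 ≤ G.card := S.F_card (hCA hG)
        have h2 : G.card ≤ (insert x G).card := Finset.card_le_card (Finset.subset_insert _ _)
        omega
    apply hcond _ hH
    intro z hz
    rcases Finset.mem_insert.mp hz with rfl | hz
    · exact Finset.mem_union_left _ hx
    · refine Finset.mem_union_right _ (subset_UB hG (fun hc => ?_) hz)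
      exact hxG (hc (Finset.mem_insert_self _ _))

theorem image_bmap {T : Finset α} {C : Finset (Finset α)} (hT : T ⊆ S.V)
    (hC : C ⊆ S.Mfin) :
    (T ∪ C.image S.w).image S.bmap = T.image (fun x => {x}) ∪ C := by
  rw [Finset.image_union, Finset.image_image]
  congr 1
  · apply Finset.image_congr
    intro x hx
    exact S.bmap_V (hT hx)
  · conv_rhs => rw [← Finset.image_id (s := C)]
    apply Finset.image_congr
    intro G hG
    exact S.bmap_w (hC hG)

/-- the final complex is isomorphic to the barycentric subdivision -/
theorem final_isom :
    IsomS (S.Phi S.Mfin) ↑(S.V ∪ S.Mfin.image S.w) (barycentricFaces S.K) S.K := by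
  refine ⟨S.bmap, ⟨?_, ?_, ?_⟩, ?_⟩
  · -- MapsTo
    intro x hx
    rw [Finset.mem_coe, Finset.mem_union] at hx
    rcases hx with hx | hx
    · rw [S.bmap_V hx]
      exact S.Δ.singleton_mem x hx
    · obtain ⟨G, hG, rfl⟩ := Finset.mem_image.mp hx
      rw [S.bmap_w hG]
      exact S.F_mem_K hG
  · -- InjOn
    intro x hx y hy hxy
    rw [Finset.mem_coe, Finset.mem_union] at hx hy
    have hcard : ∀ z, z ∈ S.V → ∀ G ∈ S.Mfin, S.bmap z ≠ S.bmap (S.w G) := by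
      intro z hz G hG hc
      rw [S.bmap_V hz, S.bmap_w hG] at hc
      have := S.F_card hG
      rw [← hc, Finset.card_singleton] at this
      omega
    rcases hx with hx | hx <;> rcases hy with hy | hy
    · rw [S.bmap_V hx, S.bmap_V hy] at hxy
      simpa using hxy
    · obtain ⟨G, hG, rfl⟩ := Finset.mem_image.mp hy
      exact absurd hxy (hcard x hx G hG)
    · obtain ⟨G, hG, rfl⟩ := Finset.mem_image.mp hx
      exact absurd hxy.symm (hcard y hy G hG)
    · obtain ⟨G, hG, rfl⟩ := Finset.mem_image.mp hx
      obtain ⟨G', hG', rfl⟩ := Finset.mem_image.mp hy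
      rw [S.bmap_w hG, S.bmap_w hG'] at hxy
      rw [hxy]
  · -- SurjOn
    intro F hF
    rw [Set.mem_image]
    by_cases hcard : 2 ≤ F.card
    · have hFM : F ∈ S.Mfin := S.mem_Mfin.mpr ⟨hF, hcard⟩
      exact ⟨S.w F, by
        rw [Finset.mem_coe, Finset.mem_union]
        exact Or.inr (Finset.mem_image_of_mem _ hFM), S.bmap_w hFM⟩
    · have h1 : F.card = 1 := by
        have := Finset.card_pos.mpr (S.Δ.nonempty_mem F hF)
        omega
      obtain ⟨x, rfl⟩ := Finset.card_eq_one.mp h1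
      have hx : x ∈ S.V := S.Δ.subset_V _ hF (Finset.mem_singleton_self x)
      exact ⟨x, by
        rw [Finset.mem_coe, Finset.mem_union]
        exact Or.inl hx, S.bmap_V hx⟩
  · -- faces correspond
    intro X hX
    constructor
    · rintro ⟨hXne, T, C, hrep, rfl⟩
      obtain ⟨hstruct1, hstruct2⟩ := S.final_struct hrep
      obtain ⟨hTV, hCM, hchain, hK, hcond⟩ := hrep
      rw [S.image_bmap hTV hCM]
      refine ⟨?_, ?_, ?_⟩
      · -- nonempty
        rcases hXne with ⟨x, hx⟩
        rcases Finset.mem_union.mp hx with h | h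
        · exact ⟨{x}, Finset.mem_coe.mpr (Finset.mem_union_left _
            (Finset.mem_image_of_mem _ h))⟩
        · obtain ⟨G, hG, rfl⟩ := Finset.mem_image.mp h
          exact ⟨G, Finset.mem_coe.mpr (Finset.mem_union_right _ hG)⟩
      · -- ⊆ K
        intro G hG
        rw [Finset.mem_coe, Finset.mem_union] at hG
        rcases hG with h | h
        · obtain ⟨x, hx, rfl⟩ := Finset.mem_image.mp h
          exact S.Δ.singleton_mem x (hTV hx)
        · exact S.F_mem_K (hCM h)
      · -- chain
        intro G hG G' hG' hne
        rw [Finset.mem_coe, Finset.mem_union] at hG hG'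
        rcases hG with h | h <;> rcases hG' with h' | h'
        · obtain ⟨x, hx, rfl⟩ := Finset.mem_image.mp h
          obtain ⟨y, hy, rfl⟩ := Finset.mem_image.mp h'
          exact absurd (by rw [hstruct1 x hx y hy]) hne
        · obtain ⟨x, hx, rfl⟩ := Finset.mem_image.mp h
          exact Or.inl (by simpa using hstruct2 x hx _ h')
        · obtain ⟨y, hy, rfl⟩ := Finset.mem_image.mp h'
          exact Or.inr (by simpa using hstruct2 y hy _ h)
        · rcases hchain (Finset.mem_coe.mpr h) (Finset.mem_coe.mpr h') hne with hc | hc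
          · exact Or.inl hc
          · exact Or.inr hc
    · -- backward
      intro hbary
      set T : Finset α := X.filter (fun x => x ∈ S.V) with hT
      set C : Finset (Finset α) := S.Mfin.filter (fun G => S.w G ∈ X) with hC
      have hTV : T ⊆ S.V := fun x hx => (Finset.mem_filter.mp hx).2
      have hCM : C ⊆ S.Mfin := Finset.filter_subset _ _
      have hXid : X = T ∪ C.image S.w := by
        ext x
        constructor
        · intro hx
          have := hX (Finset.mem_coe.mpr hx)
          rw [Finset.coe_union, Set.mem_union, Finset.mem_coe, Finset.mem_coe] at this
          rcases this with h | h
          · exact Finset.mem_union_left _ (Finset.mem_filter.mpr ⟨hx, h⟩)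
          · obtain ⟨G, hG, rfl⟩ := Finset.mem_image.mp h
            exact Finset.mem_union_right _
              (Finset.mem_image_of_mem _ (Finset.mem_filter.mpr ⟨hG, hx⟩))
        · intro hx
          rcases Finset.mem_union.mp hx with h | h
          · exact (Finset.mem_filter.mp h).1
          · obtain ⟨G, hG, rfl⟩ := Finset.mem_image.mp h
            exact (Finset.mem_filter.mp hG).2
      rw [hXid] at hbary ⊢
      rw [S.image_bmap hTV hCM] at hbary
      obtain ⟨hbne, hbK, hbchain⟩ := hbary
      -- facts from the chain
      have hxG : ∀ x ∈ T, ∀ G ∈ C, x ∈ G := by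
        intro x hx G hG
        have h1 : ({x} : Finset α) ∈ (T.image (fun x => {x}) ∪ C : Finset (Finset α)) :=
          Finset.mem_union_left _ (Finset.mem_image_of_mem _ hx)
        have h2 : G ∈ (T.image (fun x => {x}) ∪ C : Finset (Finset α)) :=
          Finset.mem_union_right _ hG
        have hne : ({x} : Finset α) ≠ G := by
          intro hc
          have := S.F_card (hCM hG)
          rw [← hc, Finset.card_singleton] at this
          omega
        rcases hbchain (Finset.mem_coe.mpr h1) (Finset.mem_coe.mpr h2) hne with h | h
        · exact h (Finset.mem_singleton_self x)
        · exfalso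
          have hle := Finset.card_le_card h
          rw [Finset.card_singleton] at hle
          have := S.F_card (hCM hG)
          omega
      have hT1 : ∀ x ∈ T, ∀ y ∈ T, x = y := by
        intro x hx y hy
        by_contra hne
        have h1 : ({x} : Finset α) ∈ (T.image (fun x => {x}) ∪ C : Finset (Finset α)) :=
          Finset.mem_union_left _ (Finset.mem_image_of_mem _ hx)
        have h2 : ({y} : Finset α) ∈ (T.image (fun x => {x}) ∪ C : Finset (Finset α)) :=
          Finset.mem_union_left _ (Finset.mem_image_of_mem _ hy)
        have hne' : ({x} : Finset α) ≠ {y} := by simpa using hne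
        rcases hbchain (Finset.mem_coe.mpr h1) (Finset.mem_coe.mpr h2) hne' with h | h
        · exact hne (Finset.mem_singleton.mp (h (Finset.mem_singleton_self x)))
        · exact hne (Finset.mem_singleton.mp (h (Finset.mem_singleton_self y))).symm
      have hchainC : IsChain (· ⊆ ·) (C : Set (Finset α)) := by
        intro G hG G' hG' hne
        exact hbchain (Finset.mem_coe.mpr (Finset.mem_union_right _ (Finset.mem_coe.mp hG)))
          (Finset.mem_coe.mpr (Finset.mem_union_right _ (Finset.mem_coe.mp hG'))) hne
      have hXne : (T ∪ C.image S.w).Nonempty := by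
        rcases hbne with ⟨G, hG⟩
        rcases Finset.mem_union.mp (Finset.mem_coe.mp hG) with h | h
        · obtain ⟨x, hx, rfl⟩ := Finset.mem_image.mp h
          exact ⟨x, Finset.mem_union_left _ hx⟩
        · exact ⟨S.w G, Finset.mem_union_right _ (Finset.mem_image_of_mem _ h)⟩
      have hsupK : T ∪ C.sup id ∈ S.K := by
        by_cases hCne : C.Nonempty
        · have hsupC := chain_sup_mem hCne hchainC
          have : T ∪ C.sup id = C.sup id := by
            apply Finset.union_eq_right.mpr
            intro x hx
            exact chain_subset_sup hsupC (hxG x hx _ hsupC)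
          rw [this]
          exact S.F_mem_K (hCM hsupC)
        · rw [Finset.not_nonempty_iff_eq_empty] at hCne
          obtain ⟨x, hx⟩ : T.Nonempty := by
            rcases hXne with ⟨x, hx⟩
            rcases Finset.mem_union.mp hx with h | h
            · exact ⟨x, h⟩
            · obtain ⟨G, hG, rfl⟩ := Finset.mem_image.mp h
              rw [hCne] at hG
              exact absurd hG (Finset.notMem_empty _)
          have hTx : T = {x} := by
            apply Finset.Subset.antisymm
            · intro y hy
              rw [Finset.mem_singleton]
              exact hT1 y hy x hx
            · simpa using hx
          rw [hCne, hTx]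
          have : ({x} : Finset α) ∪ (∅ : Finset (Finset α)).sup id = {x} := by simp
          rw [this]
          exact S.Δ.singleton_mem x (hTV hx)
      refine ⟨hXne, T, C, ⟨hTV, hCM, hchainC, hsupK, ?_⟩, rfl⟩
      -- the condition
      intro H hH hsub
      have hHcard := S.F_card hH
      by_cases hP : (C.filter (fun G => ¬ H ⊆ G)).Nonempty
      · obtain ⟨hGsmem, hGsnsub⟩ := UB_eq_max hchainC hP
        -- H ⊆ T ∪ G* but T-elements are in G*
        apply hGsnsub
        intro z hz
        rcases Finset.mem_union.mp (hsub hz) with h | h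
        · exact hxG z h _ hGsmem
        · exact h
      · rw [Finset.not_nonempty_iff_eq_empty] at hP
        have : UB C H = ∅ := by rw [UB, hP]; rfl
        rw [this, Finset.union_empty] at hsub
        -- H ⊆ T with |T| ≤ 1
        obtain ⟨x, hx, y, hy, hne⟩ := Finset.one_lt_card.mp (by omega : 1 < H.card)
        exact hne (hT1 x (hsub hx) y (hsub hy))

end Subdiv
/-! ### Assembly -/

theorem SC_ext {α : Type*} {Δ Γ : SC α} (hV : Δ.V = Γ.V) (hf : Δ.faces = Γ.faces) :
    Δ = Γ := by
  cases Δ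
  cases Γ
  simp only at hV hf
  subst hV
  subst hf
  rfl

namespace Subdiv

set_option linter.unusedSectionVars false
set_option maxHeartbeats 1000000

variable {α : Type*} [DecidableEq α] [Nonempty α] (S : Subdiv α)

theorem mkSC_zero : S.mkSC (S.seqA 0) S.seqA_subset_Mfin = S.Δ := by
  apply SC_ext
  · show S.V ∪ (S.seqA 0).image S.w = S.Δ.V
    rw [seqA_zero]
    simp
  · show S.Phi (S.seqA 0) = S.Δ.faces
    rw [seqA_zero, Phi_empty]

theorem step_subdiv {j : ℕ} (hj : j < S.Mlist.length) :
    IsEdgeSubdivOf (S.mkSC (S.seqA j) S.seqA_subset_Mfin)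
      (S.mkSC (S.seqA (j + 1)) S.seqA_subset_Mfin) := by
  have hF := S.Fj_mem hj
  have hFA := S.Fj_not_mem_seqA hj
  have hlt : ∀ H ∈ S.seqA j, S.alt H (S.Fj j) := fun H hH => S.alt_of_mem_seqA hj hH
  have hmin : ∀ H ∈ S.Mfin, S.alt H (S.Fj j) → H ∈ S.seqA j :=
    fun H hH h => S.mem_seqA_of_alt hj hH h
  refine ⟨S.edge (S.Fj j), S.w (S.Fj j), S.edge_card hF, ?_, ?_, ?_, ?_, ?_⟩
  · -- edge is a face
    show S.edge (S.Fj j) ∈ S.Phi (S.seqA j)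
    exact S.edge_mem_Phi S.seqA_subset_Mfin hF hFA hlt hmin
  · rw [S.edge_card hF]
  · -- fresh vertex
    show S.w (S.Fj j) ∉ S.V ∪ (S.seqA j).image S.w
    intro hc
    rcases Finset.mem_union.mp hc with h | h
    · exact S.hwV _ h
    · obtain ⟨G, hG, he⟩ := Finset.mem_image.mp h
      rw [S.hwinj _ _ (S.Mfin_subset_V (S.seqA_subset_Mfin hG)) (S.Mfin_subset_V hF) he] at hG
      exact hFA hG
  · -- vertex set
    show S.V ∪ (S.seqA (j + 1)).image S.w =
      insert (S.w (S.Fj j)) (S.V ∪ (S.seqA j).image S.w)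
    rw [S.seqA_succ hj, Finset.image_insert, Finset.union_insert]
  · -- faces
    show S.Phi (S.seqA (j + 1)) =
      stellarS (S.Phi (S.seqA j)) (S.edge (S.Fj j)) (S.w (S.Fj j))
    rw [S.seqA_succ hj]
    exact Set.Subset.antisymm
      (S.step_rev S.seqA_subset_Mfin hF hFA hlt hmin)
      (S.step_fwd S.seqA_subset_Mfin hF hFA hlt hmin)

end Subdiv

theorem exists_fresh {α : Type*} [DecidableEq α] [Infinite α] (s : Finset α) (n : ℕ) :
    ∃ t : Finset α, t.card = n ∧ ∀ x ∈ t, x ∉ s := by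
  induction n with
  | zero => exact ⟨∅, rfl, by simp⟩
  | succ n ih =>
    obtain ⟨t, htc, hts⟩ := ih
    obtain ⟨y, hy⟩ := Infinite.exists_notMem_finset (s ∪ t)
    refine ⟨insert y t, ?_, ?_⟩
    · rw [Finset.card_insert_of_notMem (fun hc => hy (Finset.mem_union_right _ hc)), htc]
    · intro x hx
      rcases Finset.mem_insert.mp hx with rfl | hx
      · exact fun hc => hy (Finset.mem_union_left _ hc)
      · exact hts x hx

theorem exists_subdiv {α : Type*} [DecidableEq α] [Infinite α] (Δ : SC α) :
    ∃ St : Subdiv α, St.Δ = Δ := by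
  -- the injection ι
  set ι : α → ℕ := fun x => if h : x ∈ Δ.V then (Δ.V.equivFin ⟨x, h⟩ : ℕ) else 0 with hι
  have hιinj : Set.InjOn ι ↑Δ.V := by
    intro x hx y hy hxy
    rw [Finset.mem_coe] at hx hy
    rw [hι] at hxy
    simp only [dif_pos hx, dif_pos hy] at hxy
    have := Δ.V.equivFin.injective (Fin.val_injective hxy)
    exact Subtype.ext_iff.mp this
  -- the fresh labels
  obtain ⟨t, htc, hts⟩ := exists_fresh Δ.V (Δ.V.powerset.card)
  obtain ⟨y0, hy0⟩ := Infinite.exists_notMem_finset Δ.V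
  have hce : Fintype.card (↥(Δ.V.powerset : Finset (Finset α))) = Fintype.card (↥t) := by
    rw [Fintype.card_coe, Fintype.card_coe, htc]
  set e := Fintype.equivOfCardEq hce with he
  set w : Finset α → α := fun F => if h : F ∈ Δ.V.powerset then (e ⟨F, h⟩ : α) else y0 with hw
  have hwV : ∀ F : Finset α, w F ∉ Δ.V := by
    intro F
    show (if h : F ∈ Δ.V.powerset then (e ⟨F, h⟩ : α) else y0) ∉ Δ.V
    split
    · rename_i h
      exact hts _ (e ⟨F, h⟩).2
    · exact hy0
  have hwinj : ∀ F G : Finset α, F ⊆ Δ.V → G ⊆ Δ.V → w F = w G → F = G := by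
    intro F G hFV hGV hFG
    rw [hw] at hFG
    have hF : F ∈ Δ.V.powerset := Finset.mem_powerset.mpr hFV
    have hG : G ∈ Δ.V.powerset := Finset.mem_powerset.mpr hGV
    simp only [dif_pos hF, dif_pos hG] at hFG
    have := e.injective (Subtype.ext hFG)
    exact Subtype.ext_iff.mp this
  exact ⟨⟨Δ, ι, hιinj, w, hwinj, hwV⟩, rfl⟩
/-- Every finite simplicial complex `Δ` can be transformed into (a complex
isomorphic to) its barycentric subdivision by a sequence of edge subdivisions, whose
length equals the number of faces of `Δ` of cardinality at least 2. -/
theorem edge_subdivisions_to_barycentric {α : Type*} [DecidableEq α] [Infinite α]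
    (Δ : SC α) :
    ∃ (m : ℕ) (D : ℕ → SC α),
      D 0 = Δ ∧
      (∀ i < m, IsEdgeSubdivOf (D i) (D (i + 1))) ∧
      m = {F ∈ Δ.faces | 2 ≤ F.card}.ncard ∧
      IsomS (D m).faces ↑(D m).V (barycentricFaces Δ.faces) Δ.faces := by
  obtain ⟨St, hSt⟩ := exists_subdiv Δ
  subst hSt
  refine ⟨St.Mlist.length, fun j => St.mkSC (St.seqA j) St.seqA_subset_Mfin, ?_, ?_, ?_, ?_⟩
  · exact St.mkSC_zero
  · intro i hi
    exact St.step_subdiv hi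
  · rw [St.Mlist_length]
    have h1 : {F ∈ St.Δ.faces | 2 ≤ F.card} = St.Mset := rfl
    rw [h1, Set.ncard_eq_toFinset_card _ St.Mset_finite]
    rfl
  · show IsomS (St.Phi (St.seqA St.Mlist.length))
      ↑(St.V ∪ (St.seqA St.Mlist.length).image St.w)
      (barycentricFaces St.Δ.faces) St.Δ.faces
    rw [St.seqA_full]
    exact St.final_isom
end

section
/- Let Δ be a finite flag simplicial complex and e an edge of Δ. Then the edge subdivision of Δ at e is flag. -/
lemma flag_clique {α : Type*} [DecidableEq α] (Δ : SC α) (hΔ : IsFlag Δ)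
    (P : Finset α) (hPV : P ⊆ Δ.V) (hPne : P.Nonempty)
    (hpairs : ∀ x ∈ P, ∀ y ∈ P, x ≠ y → ({x, y} : Finset α) ∈ Δ.faces) :
    P ∈ Δ.faces := by
  induction P using Finset.strongInduction with
  | _ P ih =>
    by_cases h2 : P.card ≤ 2
    · rcases hPne with ⟨x, hx⟩
      rcases eq_or_lt_of_le (Finset.one_le_card.mpr ⟨x, hx⟩) with h1 | h1
      · obtain ⟨y, hy⟩ := Finset.card_eq_one.mp h1.symm
        subst hy
        exact Δ.singleton_mem y (hPV (Finset.mem_singleton_self y))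
      · have : P.card = 2 := by omega
        obtain ⟨a, b, hab, hP⟩ := Finset.card_eq_two.mp this
        subst hP
        exact hpairs a (by simp) b (by simp) hab
    · by_contra hPf
      have hmiss : Missing Δ.faces P := by
        refine ⟨by omega, hPf, fun T hT hTne => ?_⟩
        exact ih T hT (fun x hx => hPV (hT.1 hx)) hTne
          (fun x hx y hy hxy => hpairs x (hT.1 hx) y (hT.1 hy) hxy)
      have := hΔ P hmiss
      omega

/-- The edge subdivision of a flag simplicial complex is flag. -/
theorem edge_subdivision_of_flag_is_flag {α : Type*} [DecidableEq α]
    (Δ Γ : SC α) (hΔ : IsFlag Δ) (e : Finset α) (he : e.card = 2) (v : α)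
    (h : IsStellar Δ Γ e v) :
    IsFlag Γ := by
  obtain ⟨heΔ, hecard, hvV, hΓV, hΓf⟩ := h
  intro M hM
  obtain ⟨hMcard, hMnot, hMsub⟩ := hM
  by_contra hne
  have hM3 : 3 ≤ M.card := by omega
  have hnotv : ∀ T ∈ Γ.faces, v ∉ T → T ∈ Δ.faces ∧ ¬ e ⊆ T := by
    intro T hT hvT
    rw [hΓf] at hT
    rcases hT with hT | ⟨S, T', _, _, rfl⟩
    · exact hT
    · exact absurd (Finset.mem_insert_self v _) hvT
  by_cases hvM : v ∈ M
  · -- Case v ∈ M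
    set N := M.erase v with hNdef
    have hvN : v ∉ N := Finset.notMem_erase v M
    have hNcard : N.card = M.card - 1 := Finset.card_erase_of_mem hvM
    have hNne : N.Nonempty := Finset.card_pos.mp (by omega)
    have hNM : N ⊂ M := Finset.erase_ssubset hvM
    have hNΓ : N ∈ Γ.faces := hMsub N hNM hNne
    obtain ⟨hNΔ, heN⟩ := hnotv N hNΓ hvN
    -- for each x ∈ N not in e, insert x e is a face of Δ
    have hxe : ∀ x ∈ N, x ∉ e → insert x e ∈ Δ.faces := by
      intro x hxN hxne
      have hxv : x ≠ v := fun hx => hvN (hx ▸ hxN)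
      have hsub : ({v, x} : Finset α) ⊆ M :=
        Finset.insert_subset hvM
          (Finset.singleton_subset_iff.mpr (Finset.mem_of_mem_erase hxN))
      have hcardp : ({v, x} : Finset α).card = 2 := by
        rw [Finset.card_insert_of_notMem (by simp [Ne.symm hxv]), Finset.card_singleton]
      have hpairM : ({v, x} : Finset α) ⊂ M := by
        refine Finset.ssubset_iff_subset_ne.mpr ⟨hsub, fun hEq => ?_⟩
        rw [hEq] at hcardp; omega
      have hpΓ : ({v, x} : Finset α) ∈ Γ.faces :=
        hMsub _ hpairM ⟨v, by simp⟩
      rw [hΓf] at hpΓ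
      rcases hpΓ with ⟨hpΔ, _⟩ | ⟨S, T, hS, hT, hEq⟩
      · exact absurd (Δ.subset_V _ hpΔ (by simp)) hvV
      · have hxST : x ∈ S ∪ T := by
          have : x ∈ insert v (S ∪ T) := hEq ▸ (by simp : x ∈ ({v, x} : Finset α))
          exact (Finset.mem_insert.mp this).resolve_left hxv
        rcases Finset.mem_union.mp hxST with hxS | hxT
        · exact absurd (hS.1 hxS) hxne
        · rcases hT with ⟨_, _, hTe⟩ | rfl
          · exact Δ.down_closed _ hTe (insert x e)
              (Finset.insert_subset (Finset.mem_union_left e hxT) Finset.subset_union_right)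
              ⟨x, Finset.mem_insert_self x e⟩
          · simp at hxT
    -- every pair in N ∪ e is a face of Δ
    have heV : e ⊆ Δ.V := Δ.subset_V e heΔ
    have hpair : ∀ x ∈ N ∪ e, ∀ y ∈ N ∪ e, x ≠ y → ({x, y} : Finset α) ∈ Δ.faces := by
      have hee : ∀ x ∈ e, ∀ y ∈ e, ({x, y} : Finset α) ∈ Δ.faces := fun x hx y hy =>
        Δ.down_closed e heΔ _ (Finset.insert_subset hx (by simpa using hy))
          ⟨x, Finset.mem_insert_self _ _⟩
      have hNe : ∀ x ∈ N, ∀ y ∈ e, ({x, y} : Finset α) ∈ Δ.faces := by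
        intro x hx y hy
        by_cases hxE : x ∈ e
        · exact hee x hxE y hy
        · exact Δ.down_closed _ (hxe x hx hxE) _
            (Finset.insert_subset (Finset.mem_insert_self x e)
              (by simpa using Finset.mem_insert_of_mem hy))
            ⟨x, Finset.mem_insert_self _ _⟩
      intro x hx y hy hxy
      rcases Finset.mem_union.mp hx with hxN | hxE
      · rcases Finset.mem_union.mp hy with hyN | hyE
        · exact Δ.down_closed N hNΔ _
            (Finset.insert_subset hxN (by simpa using hyN)) ⟨x, Finset.mem_insert_self _ _⟩
        · exact hNe x hxN y hyE
      · rcases Finset.mem_union.mp hy with hyN | hyE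
        · rw [Finset.pair_comm]; exact hNe y hyN x hxE
        · exact hee x hxE y hyE
    -- N ∪ e is a face of Δ
    have hNeΔ : N ∪ e ∈ Δ.faces :=
      flag_clique Δ hΔ (N ∪ e) (Finset.union_subset (Δ.subset_V N hNΔ) heV)
        (by obtain ⟨a, ha⟩ := hNne; exact ⟨a, Finset.mem_union_left e ha⟩) hpair
    -- conclude M ∈ Γ.faces, contradiction
    have hSe : N ∩ e ⊂ e := by
      refine Finset.ssubset_iff_subset_ne.mpr ⟨Finset.inter_subset_right, fun hEq => ?_⟩
      exact heN (hEq ▸ Finset.inter_subset_left)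
    have hTlk : N \ e ∈ lkS Δ.faces e ∨ N \ e = ∅ := by
      by_cases hTE : N \ e = ∅
      · exact Or.inr hTE
      · refine Or.inl ⟨Finset.nonempty_iff_ne_empty.mpr hTE, ?_, ?_⟩
        · ext a; simp
        · rwa [Finset.sdiff_union_self_eq_union]
    have hMeq : M = insert v ((N ∩ e) ∪ (N \ e)) := by
      have : N ∩ e ∪ N \ e = N := by ext a; by_cases a ∈ e <;> simp [*]
      rw [this, hNdef, Finset.insert_erase hvM]
    have : M ∈ Γ.faces := by
      rw [hΓf]
      exact Or.inr ⟨N ∩ e, N \ e, hSe, hTlk, hMeq⟩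
    exact hMnot this
  · -- Case v ∉ M
    by_cases hMΔ : M ∈ Δ.faces
    · have heM : e ⊆ M := by
        by_contra heM
        exact hMnot (hΓf ▸ Or.inl ⟨hMΔ, heM⟩)
      have : ¬ M ⊆ e := fun hMe => by
        have := Finset.card_le_card hMe; omega
      obtain ⟨x, hxM, hxe⟩ := Finset.not_subset.mp this
      have hT : M.erase x ⊂ M := Finset.erase_ssubset hxM
      have hTne : (M.erase x).Nonempty :=
        Finset.card_pos.mp (by rw [Finset.card_erase_of_mem hxM]; omega)
      have hTΓ : M.erase x ∈ Γ.faces := hMsub _ hT hTne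
      have hvT : v ∉ M.erase x := fun hv => hvM (Finset.mem_of_mem_erase hv)
      exact (hnotv _ hTΓ hvT).2 (Finset.subset_erase.mpr ⟨heM, hxe⟩)
    · have hmiss : Missing Δ.faces M :=
        ⟨hMcard, hMΔ, fun T hT hTne =>
          (hnotv T (hMsub T hT hTne) (fun hvT => hvM (hT.1 hvT))).1⟩
      have := hΔ M hmiss
      omega
end

section
/- Let Δ be a finite simplicial complex on vertex set V, e = {a,b} an edge of Δ, v ∉ V a new vertex, and Γ the stellar subdivision of Δ at e with new vertex v. Then the missing faces of Γ are exactly the following sets: (1) the missing faces M of Δ with e ⊄ M; (2) the set {a,b}; (3) the sets {v,u} for vertices u ∈ V \ {a,b} with {a,b,u} ∉ Δ; and (4) the sets F ∪ {v} where F ⊆ V \ {a,b} with |F| ≥ 2, F ∈ Δ, F ∪ {a,b} ∉ Δ, and F'' ∪ {a,b} ∈ Δ for every proper subset F'' of F. -/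
lemma mem_stellar_edge_iff {α : Type*} [DecidableEq α] (Δ : SC α) (a b v : α) (hab : a ≠ b)
    (he : ({a,b} : Finset α) ∈ Δ.faces) (hv : v ∉ Δ.V) (G : Finset α) :
    G ∈ stellarS Δ.faces {a,b} v ↔
      (v ∉ G ∧ G ∈ Δ.faces ∧ ¬ (({a,b} : Finset α) ⊆ G)) ∨
      (v ∈ G ∧ ¬ (a ∈ G ∧ b ∈ G) ∧
        (G \ {v,a,b} = ∅ ∨ (G \ {v,a,b}) ∪ {a,b} ∈ Δ.faces)) := by
  have ha : a ∈ Δ.V := Δ.subset_V _ he (by simp)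
  have hb : b ∈ Δ.V := Δ.subset_V _ he (by simp)
  have hva : v ≠ a := fun h => hv (h ▸ ha)
  have hvb : v ≠ b := fun h => hv (h ▸ hb)
  constructor
  · rintro (⟨hG, hne⟩ | ⟨S, T, hS, hT, rfl⟩)
    · exact Or.inl ⟨fun hvG => hv (Δ.subset_V G hG hvG), hG, hne⟩
    · have hSe : S ⊆ {a,b} := hS.subset
      have hvS : v ∉ S := fun h => by
        rcases Finset.mem_insert.mp (hSe h) with h' | h'
        · exact hva h'
        · exact hvb (Finset.mem_singleton.mp h')
      have hTfacts : T ∩ ({a,b} : Finset α) = ∅ ∧ (T = ∅ ∨ T ∪ {a,b} ∈ Δ.faces) := by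
        rcases hT with ⟨_, h1, h2⟩ | rfl
        · exact ⟨h1, Or.inr h2⟩
        · simp
      have hvT : v ∉ T := by
        rcases hTfacts.2 with rfl | h2
        · simp
        · exact fun h => hv (Δ.subset_V _ h2 (Finset.mem_union_left _ h))
      have hsd : insert v (S ∪ T) \ {v,a,b} = T \ {a,b} := by
        ext x
        simp only [Finset.mem_sdiff, Finset.mem_insert, Finset.mem_union,
          Finset.mem_singleton]
        constructor
        · rintro ⟨h1, h2⟩
          push_neg at h2
          rcases h1 with rfl | h1 | h1
          · exact absurd rfl h2.1
          · exact absurd (Finset.mem_insert.mp (hSe h1)) (by simp [h2.2.1, h2.2.2])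
          · refine ⟨h1, fun h => ?_⟩
            rcases h with rfl | rfl
            · exact h2.2.1 rfl
            · exact h2.2.2 rfl
        · rintro ⟨h1, h2⟩
          refine ⟨Or.inr (Or.inr h1), ?_⟩
          push_neg
          refine ⟨fun h => hvT (h ▸ h1), fun h => h2 (by simp [h]), fun h => h2 (by simp [h])⟩
      have hTeq : T \ {a,b} = T := by
        rw [Finset.sdiff_eq_self_iff_disjoint, Finset.disjoint_iff_inter_eq_empty]
        exact hTfacts.1
      refine Or.inr ⟨Finset.mem_insert_self _ _, ?_, ?_⟩
      · rintro ⟨haG, hbG⟩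
        have haS : a ∈ S := by
          rcases Finset.mem_insert.mp haG with h | h
          · exact absurd h.symm hva
          · rcases Finset.mem_union.mp h with h | h
            · exact h
            · exfalso
              have := Finset.notMem_empty a
              rw [← hTfacts.1] at this
              exact this (Finset.mem_inter.mpr ⟨h, by simp⟩)
        have hbS : b ∈ S := by
          rcases Finset.mem_insert.mp hbG with h | h
          · exact absurd h.symm hvb
          · rcases Finset.mem_union.mp h with h | h
            · exact h
            · exfalso
              have := Finset.notMem_empty b
              rw [← hTfacts.1] at this
              exact this (Finset.mem_inter.mpr ⟨h, by simp⟩)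
        apply hS.not_subset
        intro x hx
        rcases Finset.mem_insert.mp hx with h | h
        · rw [h]; exact haS
        · rw [Finset.mem_singleton.mp h]; exact hbS
      · rw [hsd, hTeq]
        rcases hTfacts.2 with rfl | h2
        · exact Or.inl rfl
        · exact Or.inr h2
  · rintro (⟨hvG, hG, hne⟩ | ⟨hvG, hnab, hcond⟩)
    · exact Or.inl ⟨hG, hne⟩
    · refine Or.inr ⟨G ∩ {a,b}, G \ {v,a,b}, ?_, ?_, ?_⟩
      · rw [Finset.ssubset_iff_of_subset Finset.inter_subset_right]
        by_cases haG : a ∈ G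
        · exact ⟨b, by simp, fun h => hnab ⟨haG, (Finset.mem_inter.mp h).1⟩⟩
        · exact ⟨a, by simp, fun h => haG (Finset.mem_inter.mp h).1⟩
      · rcases hcond with h | h
        · exact Or.inr h
        · by_cases hemp : G \ {v,a,b} = ∅
          · exact Or.inr hemp
          · refine Or.inl ⟨Finset.nonempty_iff_ne_empty.mpr hemp, ?_, h⟩
            ext x
            simp only [Finset.mem_inter, Finset.mem_sdiff, Finset.mem_insert,
              Finset.mem_singleton, Finset.notMem_empty, iff_false]
            tauto
      · ext x
        simp only [Finset.mem_insert, Finset.mem_union, Finset.mem_inter, Finset.mem_sdiff,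
          Finset.mem_singleton]
        constructor
        · intro hx
          by_cases hxv : x = v
          · exact Or.inl hxv
          · by_cases hxa : x = a
            · exact Or.inr (Or.inl ⟨hx, Or.inl hxa⟩)
            · by_cases hxb : x = b
              · exact Or.inr (Or.inl ⟨hx, Or.inr hxb⟩)
              · exact Or.inr (Or.inr ⟨hx, by push_neg; exact ⟨hxv, hxa, hxb⟩⟩)
        · rintro (rfl | ⟨h, _⟩ | ⟨h, _⟩) <;> first | exact hvG | exact h
set_option maxHeartbeats 1000000 in
/-- Description of the missing faces of the edge subdivision `Γ` of `Δ`
at the edge `e = {a,b}` with new vertex `v`. -/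
theorem missing_faces_of_edge_subdivision {α : Type*} [DecidableEq α]
    (Δ Γ : SC α) (a b : α) (hab : a ≠ b) (v : α)
    (h : IsStellar Δ Γ {a, b} v) (M : Finset α) :
    Missing Γ.faces M ↔
      (Missing Δ.faces M ∧ ¬ ({a, b} : Finset α) ⊆ M) ∨
      M = ({a, b} : Finset α) ∨
      (∃ u ∈ Δ.V, u ≠ a ∧ u ≠ b ∧ ({a, b, u} : Finset α) ∉ Δ.faces ∧
        M = ({v, u} : Finset α)) ∨
      (∃ F : Finset α, F ⊆ Δ.V ∧ a ∉ F ∧ b ∉ F ∧ 2 ≤ F.card ∧ F ∈ Δ.faces ∧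
        F ∪ {a, b} ∉ Δ.faces ∧ (∀ F'' ⊂ F, F'' ∪ {a, b} ∈ Δ.faces) ∧
        M = F ∪ {v}) := by
  obtain ⟨he, _, hv, _, hfaces⟩ := h
  have ha : a ∈ Δ.V := Δ.subset_V _ he (by simp)
  have hb : b ∈ Δ.V := Δ.subset_V _ he (by simp)
  have hva : v ≠ a := fun h' => hv (h' ▸ ha)
  have hvb : v ≠ b := fun h' => hv (h' ▸ hb)
  have hmem : ∀ G : Finset α, G ∈ Γ.faces ↔
      (v ∉ G ∧ G ∈ Δ.faces ∧ ¬ (({a,b} : Finset α) ⊆ G)) ∨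
      (v ∈ G ∧ ¬ (a ∈ G ∧ b ∈ G) ∧
        (G \ {v,a,b} = ∅ ∨ (G \ {v,a,b}) ∪ {a,b} ∈ Δ.faces)) := by
    intro G; rw [hfaces]; exact mem_stellar_edge_iff Δ a b v hab he hv G
  constructor
  · rintro ⟨hc, hnM, hsub⟩
    by_cases hvM : v ∈ M
    · -- v ∈ M
      have hnabM : ¬(a ∈ M ∧ b ∈ M) := by
        rintro ⟨haM, hbM⟩
        have hssub : ({a,b} : Finset α) ⊂ M := by
          rw [Finset.ssubset_iff_subset_ne]
          refine ⟨?_, fun h' => ?_⟩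
          · intro x hx
            rcases Finset.mem_insert.mp hx with rfl | hx
            · exact haM
            · rw [Finset.mem_singleton.mp hx]; exact hbM
          · rw [← h'] at hvM
            rcases Finset.mem_insert.mp hvM with h2 | h2
            · exact hva h2
            · exact hvb (Finset.mem_singleton.mp h2)
        have := hsub _ hssub ⟨a, by simp⟩
        rw [hmem] at this
        rcases this with ⟨_, _, hne⟩ | ⟨hvin, _, _⟩
        · exact hne subset_rfl
        · rcases Finset.mem_insert.mp hvin with h2 | h2
          · exact hva h2
          · exact hvb (Finset.mem_singleton.mp h2)
      have hcondfail : ¬ (M \ {v,a,b} = ∅ ∨ (M \ {v,a,b}) ∪ {a,b} ∈ Δ.faces) :=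
        fun hcond => hnM ((hmem M).mpr (Or.inr ⟨hvM, hnabM, hcond⟩))
      by_cases haM : a ∈ M
      · exfalso
        have h1 : M.erase a ⊂ M := Finset.erase_ssubset haM
        have h3 := hsub _ h1 ⟨v, Finset.mem_erase.mpr ⟨hva, hvM⟩⟩
        rw [hmem] at h3
        rcases h3 with ⟨hv', _, _⟩ | ⟨_, _, hcond⟩
        · exact hv' (Finset.mem_erase.mpr ⟨hva, hvM⟩)
        · apply hcondfail
          have heq : M.erase a \ {v,a,b} = M \ {v,a,b} := by
            ext x
            simp only [Finset.mem_sdiff, Finset.mem_erase, Finset.mem_insert,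
              Finset.mem_singleton]
            tauto
          rwa [heq] at hcond
      · by_cases hbM : b ∈ M
        · exfalso
          have h1 : M.erase b ⊂ M := Finset.erase_ssubset hbM
          have h3 := hsub _ h1 ⟨v, Finset.mem_erase.mpr ⟨hvb, hvM⟩⟩
          rw [hmem] at h3
          rcases h3 with ⟨hv', _, _⟩ | ⟨_, _, hcond⟩
          · exact hv' (Finset.mem_erase.mpr ⟨hvb, hvM⟩)
          · apply hcondfail
            have heq : M.erase b \ {v,a,b} = M \ {v,a,b} := by
              ext x
              simp only [Finset.mem_sdiff, Finset.mem_erase, Finset.mem_insert,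
                Finset.mem_singleton]
              tauto
            rwa [heq] at hcond
        · -- a ∉ M, b ∉ M
          set F := M.erase v with hFdef
          have hMF : M = insert v F := (Finset.insert_erase hvM).symm
          have hFsd : M \ {v,a,b} = F := by
            ext x
            simp only [Finset.mem_sdiff, Finset.mem_erase, Finset.mem_insert,
              Finset.mem_singleton, hFdef]
            constructor
            · rintro ⟨h1, h2⟩; push_neg at h2; exact ⟨h2.1, h1⟩
            · rintro ⟨h1, h2⟩
              refine ⟨h2, ?_⟩
              push_neg
              exact ⟨h1, fun e => haM (e ▸ h2), fun e => hbM (e ▸ h2)⟩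
          have hFne : F.Nonempty := by
            obtain ⟨u, huM, huv⟩ := Finset.exists_mem_ne (show 1 < M.card by omega) v
            exact ⟨u, Finset.mem_erase.mpr ⟨huv, huM⟩⟩
          have hFss : F ⊂ M := Finset.erase_ssubset hvM
          have hFΓ := hsub F hFss hFne
          rw [hmem] at hFΓ
          have hvF : v ∉ F := Finset.notMem_erase v M
          have hFfaces : F ∈ Δ.faces := by
            rcases hFΓ with ⟨_, hin, _⟩ | ⟨hvin, _, _⟩
            · exact hin
            · exact absurd hvin hvF
          push_neg at hcondfail
          rw [hFsd] at hcondfail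
          obtain ⟨_, hFnotface⟩ := hcondfail
          have haF : a ∉ F := fun h' => haM (Finset.mem_of_mem_erase h')
          have hbF : b ∉ F := fun h' => hbM (Finset.mem_of_mem_erase h')
          have hallsub : ∀ F'' ⊂ F, F'' ∪ {a,b} ∈ Δ.faces := by
            intro F'' hF''
            by_cases hE : F'' = ∅
            · rw [hE]
              simpa using he
            · have hsubF : insert v F'' ⊆ M := by
                rw [hMF]
                exact Finset.insert_subset_insert v hF''.subset
              obtain ⟨x, hxF, hxF''⟩ := Finset.exists_of_ssubset hF''
              have hT : insert v F'' ⊂ M := by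
                rw [Finset.ssubset_iff_subset_ne]
                refine ⟨hsubF, fun h' => ?_⟩
                have : x ∈ insert v F'' := h' ▸ Finset.mem_of_mem_erase hxF
                rcases Finset.mem_insert.mp this with h2 | h2
                · exact (Finset.mem_erase.mp hxF).1 h2
                · exact hxF'' h2
              have hTΓ := hsub _ hT ⟨v, Finset.mem_insert_self _ _⟩
              rw [hmem] at hTΓ
              rcases hTΓ with ⟨hv', _, _⟩ | ⟨_, _, hcond⟩
              · exact absurd (Finset.mem_insert_self _ _) hv'
              · have heq : insert v F'' \ {v,a,b} = F'' := by
                  ext y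
                  simp only [Finset.mem_sdiff, Finset.mem_insert, Finset.mem_singleton]
                  constructor
                  · rintro ⟨rfl | h1, h2⟩
                    · exact absurd (Or.inl rfl) h2
                    · exact h1
                  · intro hy
                    have hyF : y ∈ F := hF''.subset hy
                    refine ⟨Or.inr hy, ?_⟩
                    push_neg
                    exact ⟨fun e => hvF (e ▸ hyF), fun e => haF (e ▸ hyF),
                      fun e => hbF (e ▸ hyF)⟩
                rw [heq] at hcond
                rcases hcond with h' | h'
                · exact absurd h' hE
                · exact h'
          by_cases h1 : F.card = 1
          · obtain ⟨u, hu⟩ := Finset.card_eq_one.mp h1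
            have huF : u ∈ F := hu ▸ Finset.mem_singleton_self u
            refine Or.inr (Or.inr (Or.inl ⟨u, Δ.subset_V F hFfaces huF, ?_, ?_, ?_, ?_⟩))
            · exact fun e => haF (e ▸ huF)
            · exact fun e => hbF (e ▸ huF)
            · intro hfc
              apply hFnotface
              have : F ∪ ({a,b} : Finset α) = {a,b,u} := by
                rw [hu]
                ext x
                simp only [Finset.mem_union, Finset.mem_insert, Finset.mem_singleton]
                tauto
              rw [this]
              exact hfc
            · rw [hMF, hu]
          · have h2 : 2 ≤ F.card := by
              have := hFne.card_pos
              omega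
            refine Or.inr (Or.inr (Or.inr ⟨F, Δ.subset_V F hFfaces, haF, hbF, h2, hFfaces,
              hFnotface, hallsub, ?_⟩))
            rw [hMF, Finset.insert_eq, Finset.union_comm]
    · -- v ∉ M
      by_cases heM : ({a,b} : Finset α) ⊆ M
      · refine Or.inr (Or.inl ?_)
        by_contra hne
        have hss : ({a,b} : Finset α) ⊂ M :=
          Finset.ssubset_iff_subset_ne.mpr ⟨heM, fun h' => hne h'.symm⟩
        have := hsub _ hss ⟨a, by simp⟩
        rw [hmem] at this
        rcases this with ⟨_, _, hne'⟩ | ⟨hvin, _, _⟩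
        · exact hne' subset_rfl
        · rcases Finset.mem_insert.mp hvin with h2 | h2
          · exact hva h2
          · exact hvb (Finset.mem_singleton.mp h2)
      · refine Or.inl ⟨⟨hc, ?_, ?_⟩, heM⟩
        · exact fun hMΔ => hnM ((hmem M).mpr (Or.inl ⟨hvM, hMΔ, heM⟩))
        · intro T hT hTne
          have := hsub T hT hTne
          rw [hmem] at this
          rcases this with ⟨_, hin, _⟩ | ⟨hvin, _, _⟩
          · exact hin
          · exact absurd (hT.subset hvin) hvM
  · rintro (⟨⟨hc, hMΔ, hall⟩, heM⟩ | rfl | ⟨u, huV, hua, hub, hnf, rfl⟩ |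
      ⟨F, hFV, haF, hbF, hF2, hFΔ, hFe, hallF, rfl⟩)
    · -- case 1
      have hvM : v ∉ M := by
        intro hvM
        have hss : ({v} : Finset α) ⊂ M := by
          rw [Finset.ssubset_iff_subset_ne]
          refine ⟨Finset.singleton_subset_iff.mpr hvM, fun h' => ?_⟩
          rw [← h'] at hc
          simp at hc
        exact hv (Δ.subset_V _ (hall _ hss ⟨v, Finset.mem_singleton_self v⟩) (by simp))
      refine ⟨hc, ?_, ?_⟩
      · rw [hmem]
        rintro (⟨_, hin, _⟩ | ⟨hvin, _, _⟩)
        · exact hMΔ hin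
        · exact hvM hvin
      · intro T hT hTne
        rw [hmem]
        exact Or.inl ⟨fun h' => hvM (hT.subset h'), hall T hT hTne,
          fun h' => heM (h'.trans hT.subset)⟩
    · -- case 2: M = {a,b}
      refine ⟨?_, ?_, ?_⟩
      · exact (Finset.card_pair hab).ge
      · rw [hmem]
        rintro (⟨_, _, hne⟩ | ⟨hvin, _, _⟩)
        · exact hne subset_rfl
        · rcases Finset.mem_insert.mp hvin with h2 | h2
          · exact hva h2
          · exact hvb (Finset.mem_singleton.mp h2)
      · intro T hT hTne
        rw [hmem]
        refine Or.inl ⟨?_, Δ.down_closed _ he T hT.subset hTne, fun h' => hT.not_subset h'⟩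
        intro h'
        rcases Finset.mem_insert.mp (hT.subset h') with h2 | h2
        · exact hva h2
        · exact hvb (Finset.mem_singleton.mp h2)
    · -- case 3: M = {v,u}
      have huv : u ≠ v := fun h' => hv (h' ▸ huV)
      have hvu : v ∉ ({u} : Finset α) := by simp [huv.symm]
      refine ⟨?_, ?_, ?_⟩
      · exact (Finset.card_pair (Ne.symm huv)).ge
      · rw [hmem]
        rintro (⟨hv', _, _⟩ | ⟨_, _, hcond⟩)
        · exact hv' (Finset.mem_insert_self _ _)
        · have hsd : ({v,u} : Finset α) \ {v,a,b} = {u} := by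
            ext x
            simp only [Finset.mem_sdiff, Finset.mem_insert, Finset.mem_singleton]
            constructor
            · rintro ⟨rfl | rfl, h2⟩
              · exact absurd (Or.inl rfl) h2
              · rfl
            · rintro rfl
              refine ⟨Or.inr rfl, ?_⟩
              push_neg
              exact ⟨huv, hua, hub⟩
          rw [hsd] at hcond
          rcases hcond with h' | h'
          · simp at h'
          · apply hnf
            have heq : ({u} ∪ {a,b} : Finset α) = {a,b,u} := by
              ext x
              simp only [Finset.mem_union, Finset.mem_insert, Finset.mem_singleton]
              tauto
            rwa [heq] at h'
      · intro T hT hTne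
        have hTcard : T.card = 1 := by
          have h1 := Finset.card_lt_card hT
          have h2 := hTne.card_pos
          rw [Finset.card_pair (Ne.symm huv)] at h1
          omega
        obtain ⟨x, rfl⟩ := Finset.card_eq_one.mp hTcard
        have hx := hT.subset (Finset.mem_singleton_self x)
        rw [hmem]
        rcases Finset.mem_insert.mp hx with rfl | hx
        · refine Or.inr ⟨Finset.mem_singleton_self x, ?_, Or.inl ?_⟩
          · rintro ⟨h1, _⟩
            exact hva (Finset.mem_singleton.mp h1).symm
          · ext y
            simp only [Finset.mem_sdiff, Finset.mem_singleton, Finset.mem_insert,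
              Finset.notMem_empty, iff_false]
            rintro ⟨rfl, h2⟩
            exact h2 (Or.inl rfl)
        · rw [Finset.mem_singleton.mp hx]
          refine Or.inl ⟨by simp [huv.symm], Δ.singleton_mem u huV, ?_⟩
          intro h'
          exact hua (Finset.mem_singleton.mp (h' (Finset.mem_insert_self a _))).symm
    · -- case 4: M = F ∪ {v}
      have hvF : v ∉ F := fun h' => hv (hFV h')
      have hMF : F ∪ ({v} : Finset α) = insert v F := by
        rw [Finset.insert_eq, Finset.union_comm]
      have hvM : v ∈ F ∪ ({v} : Finset α) := by simp
      have haM : a ∉ F ∪ ({v} : Finset α) := by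
        simp only [Finset.mem_union, Finset.mem_singleton]
        rintro (h' | h')
        · exact haF h'
        · exact hva h'.symm
      have hbM : b ∉ F ∪ ({v} : Finset α) := by
        simp only [Finset.mem_union, Finset.mem_singleton]
        rintro (h' | h')
        · exact hbF h'
        · exact hvb h'.symm
      have hsd : (F ∪ {v}) \ ({v,a,b} : Finset α) = F := by
        ext x
        simp only [Finset.mem_sdiff, Finset.mem_union, Finset.mem_insert,
          Finset.mem_singleton]
        constructor
        · rintro ⟨h1 | rfl, h2⟩
          · exact h1
          · exact absurd (Or.inl rfl) h2
        · intro hxF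
          refine ⟨Or.inl hxF, ?_⟩
          push_neg
          exact ⟨fun e => hvF (e ▸ hxF), fun e => haF (e ▸ hxF), fun e => hbF (e ▸ hxF)⟩
      refine ⟨?_, ?_, ?_⟩
      · rw [hMF, Finset.card_insert_of_notMem hvF]
        omega
      · rw [hmem]
        rintro (⟨hv', _, _⟩ | ⟨_, _, hcond⟩)
        · exact hv' hvM
        · rw [hsd] at hcond
          rcases hcond with h' | h'
          · rw [h'] at hF2
            simp at hF2
          · exact hFe h'
      · intro T hT hTne
        by_cases hvT : v ∈ T
        · rw [hmem]
          refine Or.inr ⟨hvT, ?_, ?_⟩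
          · rintro ⟨h1, _⟩
            exact haM (hT.subset h1)
          · have hF''F : T.erase v ⊆ F := by
              intro x hx
              obtain ⟨hxv, hxT⟩ := Finset.mem_erase.mp hx
              rcases Finset.mem_union.mp (hT.subset hxT) with h' | h'
              · exact h'
              · exact absurd (Finset.mem_singleton.mp h') hxv
            have hF''ss : T.erase v ⊂ F := by
              rw [Finset.ssubset_iff_subset_ne]
              refine ⟨hF''F, fun h' => ?_⟩
              apply hT.ne
              rw [← Finset.insert_erase hvT, h', ← hMF]
            have hsd2 : T \ ({v,a,b} : Finset α) = T.erase v := by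
              ext x
              simp only [Finset.mem_sdiff, Finset.mem_erase, Finset.mem_insert,
                Finset.mem_singleton]
              constructor
              · rintro ⟨h1, h2⟩
                push_neg at h2
                exact ⟨h2.1, h1⟩
              · rintro ⟨h1, h2⟩
                refine ⟨h2, ?_⟩
                push_neg
                exact ⟨h1, fun e => haM (hT.subset (e ▸ h2)),
                  fun e => hbM (hT.subset (e ▸ h2))⟩
            rw [hsd2]
            exact Or.inr (hallF _ hF''ss)
        · rw [hmem]
          have hTF : T ⊆ F := by
            intro x hx
            rcases Finset.mem_union.mp (hT.subset hx) with h' | h'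
            · exact h'
            · exact absurd ((Finset.mem_singleton.mp h') ▸ hx) hvT
          refine Or.inl ⟨hvT, Δ.down_closed F hFΔ T hTF hTne, ?_⟩
          intro h'
          exact haF (hTF (h' (Finset.mem_insert_self a _)))
end

section
/- Let Δ be a finite simplicial complex on vertex set V, e = {a,b} an edge of Δ, v ∉ V a new vertex, Γ the stellar subdivision of Δ at e with new vertex v, and M a missing face of Δ with |M| ≥ 3 and e ⊆ M. Then M is not a missing face of Γ, and (M \ {a,b}) ∪ {v} is a missing face of Γ of cardinality |M| − 1. -/
/-- If `M` is a missing face of `Δ` of size at least 3 containing the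
subdivided edge `e = {a,b}`, then `M` is not missing in the edge subdivision `Γ`, while
`(M \ {a,b}) ∪ {v}` is a missing face of `Γ` of cardinality `|M| - 1`. -/
theorem missing_face_through_edge_shrinks {α : Type*} [DecidableEq α]
    (Δ Γ : SC α) (a b : α) (hab : a ≠ b) (v : α)
    (h : IsStellar Δ Γ {a, b} v) (M : Finset α)
    (hM : Missing Δ.faces M) (hcard : 3 ≤ M.card) (hsub : ({a, b} : Finset α) ⊆ M) :
    ¬ Missing Γ.faces M ∧
    Missing Γ.faces ((M \ {a, b}) ∪ {v}) ∧
    ((M \ {a, b}) ∪ {v}).card = M.card - 1 := by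

  classical
  obtain ⟨heΔ, -, hvV, -, hΓf⟩ := h
  have hecard : ({a, b} : Finset α).card = 2 := by
    rw [Finset.card_insert_of_notMem (by simpa using hab), Finset.card_singleton]
  -- M ⊆ Δ.V
  have hMV : M ⊆ Δ.V := by
    intro x hx
    have hs : ({x} : Finset α) ⊂ M := by
      refine lt_of_le_of_ne (Finset.singleton_subset_iff.2 hx) ?_
      intro hEq
      rw [← hEq] at hcard; simp at hcard
    have := hM.2.2 _ hs (Finset.singleton_nonempty x)
    exact Δ.subset_V _ this (Finset.mem_singleton_self x)
  have hvM : v ∉ M := fun hv => hvV (hMV hv)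
  have hvMe : v ∉ M \ ({a, b} : Finset α) := fun hv => hvM (Finset.mem_sdiff.1 hv).1
  have hcardMe : (M \ ({a, b} : Finset α)).card = M.card - 2 := by
    rw [Finset.card_sdiff_of_subset hsub, hecard]
  have hNcard : ((M \ ({a, b} : Finset α)) ∪ {v}).card = M.card - 1 := by
    rw [Finset.union_comm, ← Finset.insert_eq,
      Finset.card_insert_of_notMem hvMe, hcardMe]
    omega
  -- faces of Δ don't contain v
  have hvface : ∀ T ∈ Δ.faces, v ∉ T := fun T hT hv => hvV (Δ.subset_V _ hT hv)
  refine ⟨?_, ⟨?_, ?_, ?_⟩, hNcard⟩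
  · -- M is not missing in Γ
    intro hmiss
    have hes : ({a, b} : Finset α) ⊂ M := by
      refine lt_of_le_of_ne hsub ?_
      intro hEq
      rw [← hEq, hecard] at hcard; omega
    have hmem := hmiss.2.2 _ hes ⟨a, by simp⟩
    rw [hΓf] at hmem
    rcases hmem with ⟨-, hne⟩ | ⟨S, T, hS, hT, hU⟩
    · exact hne (le_refl _)
    · have hv : v ∈ ({a, b} : Finset α) := by rw [hU]; exact Finset.mem_insert_self _ _
      exact hvM (hsub hv)
  · -- card ≥ 2
    omega
  · -- N not a face of Γ
    intro hN
    rw [hΓf] at hN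
    rcases hN with ⟨hmem, -⟩ | ⟨S, T, hS, hT, hU⟩
    · exact hvface _ hmem (Finset.mem_union_right _ (Finset.mem_singleton_self v))
    · have hvS : v ∉ S := fun hv => hvM (hsub (hS.1 hv))
      have hvT : v ∉ T := by
        rcases hT with ⟨-, -, hTe⟩ | rfl
        · exact fun hv => hvface _ hTe (Finset.mem_union_left _ hv)
        · simp
      have hST : S ∪ T = M \ ({a, b} : Finset α) := by
        have h1 : (insert v (S ∪ T)).erase v = S ∪ T :=
          Finset.erase_insert (by simp [hvS, hvT])
        have h2 : ((M \ ({a, b} : Finset α)) ∪ {v}).erase v = M \ ({a, b} : Finset α) := by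
          rw [Finset.union_comm, ← Finset.insert_eq, Finset.erase_insert hvMe]
        rw [← h1, ← hU, h2]
      have hSempty : S = ∅ := by
        ext x
        simp only [Finset.notMem_empty, iff_false]
        intro hx
        have hx2 : x ∈ M \ ({a, b} : Finset α) := hST ▸ Finset.mem_union_left _ hx
        exact (Finset.mem_sdiff.1 hx2).2 (hS.1 hx)
      have hTeq : T = M \ ({a, b} : Finset α) := by
        rw [← hST, hSempty, Finset.empty_union]
      have hTne : T.Nonempty := by
        rw [← Finset.card_pos, hTeq, hcardMe]; omega
      rcases hT with ⟨-, -, hTe⟩ | rfl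
      · rw [hTeq, Finset.sdiff_union_of_subset hsub] at hTe
        exact hM.2.1 hTe
      · simp at hTne
  · -- every proper nonempty subset of N is a face of Γ
    intro T hT hTne
    rw [hΓf]
    by_cases hvT : v ∈ T
    · -- right part
      right
      set T' : Finset α := T.erase v with hT'
      have hTins : T = insert v T' := by rw [hT', Finset.insert_erase hvT]
      have hT'sub : T' ⊆ M \ ({a, b} : Finset α) := by
        intro x hx
        have hxT : x ∈ T := Finset.mem_of_mem_erase hx
        have hxv : x ≠ v := Finset.ne_of_mem_erase hx
        rcases Finset.mem_union.1 (hT.1 hxT) with h1 | h1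
        · exact h1
        · exact absurd (Finset.mem_singleton.1 h1) hxv
      refine ⟨∅, T', ?_, ?_, by rw [Finset.empty_union, ← hTins]⟩
      · exact Finset.empty_ssubset.2 ⟨a, by simp⟩
      · rcases Finset.eq_empty_or_nonempty T' with hE | hNE
        · exact Or.inr hE
        · left
          refine ⟨hNE, ?_, ?_⟩
          · ext x
            simp only [Finset.mem_inter, Finset.notMem_empty, iff_false, not_and]
            intro hx
            exact (Finset.mem_sdiff.1 (hT'sub hx)).2
          · -- T' ∪ {a,b} is a proper subset of M
            obtain ⟨x, hxN, hxT⟩ := Finset.exists_of_ssubset hT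
            have hxv : x ≠ v := fun hEq => hxT (hEq ▸ hvT)
            have hxMe : x ∈ M \ ({a, b} : Finset α) := by
              rcases Finset.mem_union.1 hxN with h1 | h1
              · exact h1
              · exact absurd (Finset.mem_singleton.1 h1) hxv
            have hss : T' ∪ ({a, b} : Finset α) ⊂ M := by
              constructor
              · intro y hy
                rcases Finset.mem_union.1 hy with h1 | h1
                · exact (Finset.mem_sdiff.1 (hT'sub h1)).1
                · exact hsub h1
              · intro hMsub
                have hxm := hMsub (Finset.mem_sdiff.1 hxMe).1
                rcases Finset.mem_union.1 hxm with h1 | h1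
                · exact hxT (Finset.mem_of_mem_erase h1)
                · exact (Finset.mem_sdiff.1 hxMe).2 h1
            exact hM.2.2 _ hss ⟨a, Finset.mem_union_right _ (by simp)⟩
    · -- left part
      left
      have hTsub : T ⊆ M \ ({a, b} : Finset α) := by
        intro x hx
        rcases Finset.mem_union.1 (hT.1 hx) with h1 | h1
        · exact h1
        · exact absurd ((Finset.mem_singleton.1 h1) ▸ hx) hvT
      have haT : a ∉ T := fun hx => (Finset.mem_sdiff.1 (hTsub hx)).2 (by simp)
      have hss : T ⊂ M := by
        constructor
        · exact fun x hx => (Finset.mem_sdiff.1 (hTsub hx)).1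
        · intro hMsub
          exact haT (hMsub (hsub (by simp)))
      exact ⟨hM.2.2 _ hss hTne, fun hsub2 => haT (hsub2 (by simp))⟩
end
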